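/- arXiv:math/0405467 — 5 statements merged into one kernel-verified Lean document; each statement's English description precedes it below -/
import Mathlib

section
/- Let τ : [0,1] → [0,1] be piecewise monotonic and let s > 0. Then τ is conjugate, via an increasing homeomorphism of [0,1], to a uniformly piecewise linear map with slopes ±s if and only if there exists a non-atomic Borel probability measure m on [0,1] with full support that is scaled by τ by the factor s. Moreover, when such a measure m exists, the conjugating homeomorphism can be chosen to be h(x) = m([0,x]) (with h(0) = 0), and this h pushes m forward to Lebesgue measure on [0,1]. -/
open Set MeasureTheory

noncomputable section

/-- The unit interval `[0,1]` as a subset of `ℝ`. -/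
def I01 : Set ℝ := Set.Icc 0 1

/-- `τ` is piecewise monotonic on `[0,1]`: there is a partition
`0 = a 0 < a 1 < ⋯ < a n = 1` such that `τ` is continuous and strictly
monotonic on each open interval `(a i, a (i+1))`. -/
def PiecewiseMonotonic (τ : ℝ → ℝ) : Prop :=
  ∃ n : ℕ, 0 < n ∧ ∃ a : ℕ → ℝ, a 0 = 0 ∧ a n = 1 ∧ (∀ i < n, a i < a (i + 1)) ∧
    ∀ i < n, ContinuousOn τ (Set.Ioo (a i) (a (i + 1))) ∧
      (StrictMonoOn τ (Set.Ioo (a i) (a (i + 1))) ∨ StrictAntiOn τ (Set.Ioo (a i) (a (i + 1))))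

/-- `τ` is uniformly piecewise linear with slopes `±s`. -/
def UniformlyPiecewiseLinear (τ : ℝ → ℝ) (s : ℝ) : Prop :=
  ∃ n : ℕ, 0 < n ∧ ∃ a : ℕ → ℝ, a 0 = 0 ∧ a n = 1 ∧ (∀ i < n, a i < a (i + 1)) ∧
    ∀ i < n, ∃ ε : ℝ, (ε = 1 ∨ ε = -1) ∧ ∃ d : ℝ,
      ∀ x ∈ Set.Ioo (a i) (a (i + 1)), τ x = ε * s * x + d

/-- The measure `m` is scaled by `τ` by the factor `s`. -/
def ScaledBy (τ : ℝ → ℝ) (m : Measure ℝ) (s : ℝ) : Prop :=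
  ∀ E : Set ℝ, E ⊆ I01 → MeasurableSet E → Set.InjOn τ E →
    m (τ '' E) = ENNReal.ofReal s * m E

/-- `m` is a Borel probability measure on `[0,1]`. -/
def ProbOnI (m : Measure ℝ) : Prop := IsProbabilityMeasure m ∧ m I01 = 1

/-- `m` has full support in `[0,1]`. -/
def FullSupportOnI (m : Measure ℝ) : Prop :=
  ∀ U : Set ℝ, IsOpen U → (U ∩ I01).Nonempty → 0 < m (U ∩ I01)

/-- `m` is non-atomic. -/
def NonAtomic (m : Measure ℝ) : Prop := ∀ x : ℝ, m {x} = 0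

/-- `h` is an increasing homeomorphism of `[0,1]` onto itself. -/
def IncSelfHomeoI (h : ℝ → ℝ) : Prop :=
  ContinuousOn h I01 ∧ StrictMonoOn h I01 ∧ h '' I01 = I01

/-- `h` is a homeomorphism of `[0,1]` onto itself. -/
def SelfHomeoI (h : ℝ → ℝ) : Prop :=
  ContinuousOn h I01 ∧ Set.BijOn h I01 I01

/-- `τ` is topologically transitive on `K`. -/
def TransitiveOn (τ : ℝ → ℝ) (K : Set ℝ) : Prop :=
  ∀ U V : Set ℝ, IsOpen U → IsOpen V → (U ∩ K).Nonempty → (V ∩ K).Nonempty →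
    ∃ n : ℕ, ((τ^[n] '' (U ∩ K)) ∩ (V ∩ K)).Nonempty

/-- `τ` is topologically mixing on `K`. -/
def MixingOn (τ : ℝ → ℝ) (K : Set ℝ) : Prop :=
  ∀ U V : Set ℝ, IsOpen U → IsOpen V → (U ∩ K).Nonempty → (V ∩ K).Nonempty →
    ∃ N : ℕ, ∀ n ≥ N, ((τ^[n] '' (U ∩ K)) ∩ (V ∩ K)).Nonempty

/-- `τ` is topologically exact on `K`. -/
def ExactOn (τ : ℝ → ℝ) (K : Set ℝ) : Prop :=
  ∀ U : Set ℝ, IsOpen U → (U ∩ K).Nonempty → ∃ n : ℕ, τ^[n] '' (U ∩ K) = K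

/-- `τ` is essentially injective: there are no two disjoint nondegenerate
intervals in `[0,1]` with the same image under `τ`. -/
def EssentiallyInjective (τ : ℝ → ℝ) : Prop :=
  ¬ ∃ a b c d : ℝ, a < b ∧ c < d ∧ Set.Icc a b ⊆ I01 ∧ Set.Icc c d ⊆ I01 ∧
    Disjoint (Set.Icc a b) (Set.Icc c d) ∧ τ '' Set.Icc a b = τ '' Set.Icc c d

/-- The restricted tent map with slopes `±s`. -/
def tent (s : ℝ) (x : ℝ) : ℝ :=
  if x ≤ 1 - 1 / s then 1 + s * (x - (1 - 1 / s)) else 1 - s * (x - (1 - 1 / s))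

/-- `τ` is unimodal. -/
def Unimodal (τ : ℝ → ℝ) : Prop :=
  ContinuousOn τ I01 ∧ ∃ c : ℝ, 0 < c ∧ c < 1 ∧
    StrictMonoOn τ (Set.Icc 0 c) ∧ StrictAntiOn τ (Set.Icc c 1)


theorem aff_set (a d : ℝ) (ha : a ≠ 0) (S : Set ℝ) :
    (fun x => a * x + d) '' S = (fun y => a⁻¹ * (y - d)) ⁻¹' S := by
  ext y
  constructor
  · rintro ⟨x, hx, rfl⟩
    have hxx : a⁻¹ * (a * x + d - d) = x := by field_simp; ring
    show a⁻¹ * (a * x + d - d) ∈ S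
    rw [hxx]; exact hx
  · intro hy
    exact ⟨a⁻¹ * (y - d), hy, by field_simp; ring⟩

theorem aff_meas {a d : ℝ} (ha : a ≠ 0) {S : Set ℝ} (hS : MeasurableSet S) :
    MeasurableSet ((fun x => a * x + d) '' S) := by
  rw [aff_set a d ha]
  exact hS.preimage (by fun_prop)

theorem aff_img (a d : ℝ) (ha : a ≠ 0) (S : Set ℝ) :
    volume ((fun x => a * x + d) '' S) = ENNReal.ofReal |a| * volume S := by
  rw [aff_set a d ha]
  have h2 : (fun y => a⁻¹ * (y - d)) ⁻¹' S = (fun y => y - d) ⁻¹' ((fun z => a⁻¹ * z) ⁻¹' S) := rfl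
  rw [h2, show (fun y : ℝ => y - d) = (fun y => y + (-d)) by ext; ring,
    measure_preimage_add_right volume (-d) _,
    Real.volume_preimage_mul_left (inv_ne_zero ha), inv_inv]

theorem amono {n : ℕ} {a : ℕ → ℝ} (hlt : ∀ i < n, a i < a (i + 1)) :
    ∀ i j, i ≤ j → j ≤ n → a i ≤ a j := by
  intro i j hij hjn
  induction j with
  | zero => simp_all
  | succ k ih =>
    rcases Nat.lt_or_ge i (k+1) with hk | hk
    · exact le_trans (ih (Nat.lt_succ_iff.mp hk) (le_trans (Nat.le_succ k) hjn))
        (le_of_lt (hlt k (Nat.lt_of_lt_of_le (Nat.lt_succ_self k) hjn)))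
    · have : i = k + 1 := le_antisymm hij hk
      simp [this]

theorem a_mem_I01 {n : ℕ} {a : ℕ → ℝ} (h0 : a 0 = 0) (h1 : a n = 1)
    (hlt : ∀ i < n, a i < a (i + 1)) {i : ℕ} (hi : i ≤ n) : a i ∈ I01 :=
  ⟨h0 ▸ amono hlt 0 i (Nat.zero_le i) hi, h1 ▸ amono hlt i n hi le_rfl⟩

theorem cover_lemma {n : ℕ} {a : ℕ → ℝ} (h0 : a 0 = 0) (h1 : a n = 1)
    (hlt : ∀ i < n, a i < a (i + 1)) :
    I01 \ (⋃ i ∈ Finset.range n, Ioo (a i) (a (i + 1))) ⊆ a '' {i | i ≤ n} := by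
  rintro x ⟨⟨hx0, hx1⟩, hx⟩
  simp only [Finset.mem_range, mem_iUnion, mem_Ioo, not_exists, not_and, not_lt] at hx
  set i := Nat.findGreatest (fun i => a i ≤ x) n with hi
  have hP0 : a 0 ≤ x := by rw [h0]; exact hx0
  have hspec : a i ≤ x := by
    have := Nat.findGreatest_spec (P := fun i => a i ≤ x) (Nat.zero_le n) hP0
    exact this
  have hile : i ≤ n := Nat.findGreatest_le n
  rcases eq_or_lt_of_le hile with heq | hlt'
  · refine ⟨n, by simp, ?_⟩
    rw [h1]
    exact le_antisymm (by rw [← h1, ← heq]; exact hspec) hx1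
  · rcases eq_or_lt_of_le hspec with heq2 | hlt2
    · exact ⟨i, hile, heq2⟩
    · exfalso
      have hgr : ¬ a (i + 1) ≤ x := by
        have := Nat.findGreatest_is_greatest (P := fun i => a i ≤ x)
          (Nat.lt_succ_self i) hlt'
        exact this
      exact hgr (hx i hlt' hlt2)


theorem upl_vol {T : ℝ → ℝ} {s : ℝ} (hs : 0 < s) (hT : UniformlyPiecewiseLinear T s)
    {F : Set ℝ} (hF : F ⊆ I01) (hFm : MeasurableSet F) (hinj : Set.InjOn T F) :
    volume (T '' F) = ENNReal.ofReal s * volume F := by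
  obtain ⟨n, hn, a, ha0, ha1, hlt, haff⟩ := hT
  set J : ℕ → Set ℝ := fun i => F ∩ Ioo (a i) (a (i + 1)) with hJ
  set C : Set ℝ := F \ (⋃ i ∈ Finset.range n, Ioo (a i) (a (i + 1))) with hC
  have hCfin : C.Finite := by
    apply Set.Finite.subset (Set.Finite.image a (Set.finite_le_nat n))
    intro x hx
    exact cover_lemma ha0 ha1 hlt ⟨hF hx.1, hx.2⟩
  have hFdecomp : F = (⋃ i ∈ Finset.range n, J i) ∪ C := by
    ext x
    simp only [hJ, hC, mem_union, mem_iUnion, mem_inter_iff, mem_diff, Finset.mem_range]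
    constructor
    · intro hx
      by_cases hcase : ∃ i, i < n ∧ x ∈ Ioo (a i) (a (i + 1))
      · obtain ⟨i, hi, hxi⟩ := hcase
        exact Or.inl ⟨i, hi, hx, hxi⟩
      · refine Or.inr ⟨hx, ?_⟩
        simp only [mem_iUnion, Finset.mem_range, not_exists]
        intro i hi hxi
        exact hcase ⟨i, hi, hxi⟩
    · rintro (⟨i, _, hx, _⟩ | ⟨hx, _⟩) <;> exact hx
  -- affine data for each piece
  have hpiece : ∀ i < n, volume (T '' J i) = ENNReal.ofReal s * volume (J i) ∧
      MeasurableSet (T '' J i) := by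
    intro i hi
    obtain ⟨ε, hε, d, hd⟩ := haff i hi
    have hεs : ε * s ≠ 0 := by rcases hε with rfl | rfl <;> simp [ne_of_gt hs, hs.ne']
    have himg : T '' J i = (fun x => ε * s * x + d) '' J i := by
      apply image_congr
      intro x hx
      exact hd x hx.2
    have hJm : MeasurableSet (J i) := hFm.inter measurableSet_Ioo
    constructor
    · rw [himg, aff_img _ _ hεs]
      congr 1
      rcases hε with rfl | rfl <;> simp [abs_of_pos hs, abs_of_neg (neg_neg_iff_pos.mpr hs)]
    · rw [himg]; exact aff_meas hεs hJm
  -- disjointness of J i and of images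
  have hJdisj : ∀ i j, i < n → j < n → i ≠ j → Disjoint (J i) (J j) := by
    intro i j hi hj hij
    wlog h : i < j generalizing i j
    · exact (this j i hj hi hij.symm (by omega)).symm
    apply Set.disjoint_left.mpr
    rintro x ⟨-, -, hx2⟩ ⟨-, hx3, -⟩
    have : a (i + 1) ≤ a j := amono hlt (i + 1) j h (le_of_lt hj)
    linarith
  have hTdisj : (↑(Finset.range n) : Set ℕ).PairwiseDisjoint fun i => T '' J i := by
    intro i hi j hj hij
    simp only [Finset.coe_range, mem_Iio] at hi hj
    apply Set.disjoint_left.mpr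
    rintro y ⟨x, hx, rfl⟩ ⟨x', hx', hxx⟩
    have hxF : x ∈ F := hx.1
    have hx'F : x' ∈ F := hx'.1
    have : x' = x := hinj hx'F hxF hxx
    subst this
    exact Set.disjoint_left.mp (hJdisj i j hi hj hij) hx hx'
  -- volume of F
  have hvolC : volume C = 0 := hCfin.measure_zero _
  have hvolTC : volume (T '' C) = 0 := (hCfin.image T).measure_zero _
  have hvolF : volume F = ∑ i ∈ Finset.range n, volume (J i) := by
    conv_lhs => rw [hFdecomp]
    have hnull : volume ((⋃ i ∈ Finset.range n, J i) ∪ C) = volume (⋃ i ∈ Finset.range n, J i) :=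
      le_antisymm ((measure_union_le _ _).trans_eq (by rw [hvolC, add_zero]))
        (measure_mono subset_union_left)
    rw [hnull]
    rw [measure_biUnion_finset]
    · intro i hi j hj hij
      simp only [Finset.coe_range, mem_Iio] at hi hj
      exact hJdisj i j hi hj hij
    · intro i _
      exact hFm.inter measurableSet_Ioo
  have himgF : T '' F = (⋃ i ∈ Finset.range n, T '' J i) ∪ T '' C := by
    conv_lhs => rw [hFdecomp]
    rw [image_union, image_iUnion₂]
  have hnull2 : volume ((⋃ i ∈ Finset.range n, T '' J i) ∪ T '' C) =
      volume (⋃ i ∈ Finset.range n, T '' J i) :=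
    le_antisymm ((measure_union_le _ _).trans_eq (by rw [hvolTC, add_zero]))
      (measure_mono subset_union_left)
  rw [himgF, hnull2, measure_biUnion_finset hTdisj
      (fun i hi => (hpiece i (Finset.mem_range.mp hi)).2), hvolF, Finset.mul_sum]
  exact Finset.sum_congr rfl fun i hi => (hpiece i (Finset.mem_range.mp hi)).1


section CDF
variable {m : Measure ℝ} [IsProbabilityMeasure m]

theorem mcompl (hI : m I01 = 1) : m I01ᶜ = 0 := by
  have : MeasurableSet I01 := measurableSet_Icc
  rw [measure_compl this (measure_ne_top m _), hI, measure_univ, tsub_self]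

theorem mIio (hI : m I01 = 1) : m (Iio 0) = 0 :=
  le_antisymm (le_trans (measure_mono (fun x hx => fun hmem => absurd hmem.1 (not_le.mpr hx)))
    (le_of_eq (mcompl hI))) (zero_le)

theorem mIoi (hI : m I01 = 1) : m (Ioi 1) = 0 :=
  le_antisymm (le_trans (measure_mono (fun x hx => fun hmem => absurd hmem.2 (not_le.mpr hx)))
    (le_of_eq (mcompl hI))) (zero_le)

theorem hIcc_eq_Iic (hI : m I01 = 1) (x : ℝ) : m (Icc 0 x) = m (Iic x) := by
  rcases le_or_gt 0 x with hx | hx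
  · rw [← Iio_union_Icc_eq_Iic hx]
    refine le_antisymm (measure_mono subset_union_right) ?_
    calc m (Iio 0 ∪ Icc 0 x) ≤ m (Iio 0) + m (Icc 0 x) := measure_union_le _ _
    _ = m (Icc 0 x) := by rw [mIio hI, zero_add]
  · rw [Icc_eq_empty (not_le.mpr hx), measure_empty]
    refine (le_antisymm ?_ (zero_le)).symm
    exact le_trans (measure_mono (Iic_subset_Iio.mpr hx)) (le_of_eq (mIio hI))

theorem hmono (hI : m I01 = 1) : Monotone (fun x => (m (Icc 0 x)).toReal) := by
  intro x y hxy
  exact ENNReal.toReal_mono (measure_ne_top m _) (measure_mono (Icc_subset_Icc le_rfl hxy))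

theorem hdiff (hI : m I01 = 1) {x y : ℝ} (hxy : x ≤ y) :
    (m (Icc 0 y)).toReal = (m (Icc 0 x)).toReal + (m (Ioc x y)).toReal := by
  rw [hIcc_eq_Iic hI, hIcc_eq_Iic hI, ← Iic_union_Ioc_eq_Iic hxy,
    measure_union (Iic_disjoint_Ioc le_rfl) measurableSet_Ioc,
    ENNReal.toReal_add (measure_ne_top m _) (measure_ne_top m _)]

theorem hcont (hI : m I01 = 1) (hNA : ∀ x : ℝ, m {x} = 0) :
    Continuous (fun x => (m (Icc 0 x)).toReal) := by
  rw [Metric.continuous_iff]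
  intro x ε hε
  set sq : ℕ → Set ℝ := fun n => Ioc (x - 1 / (n + 1)) (x + 1 / (n + 1)) with hsq
  have hanti : Antitone sq := by
    intro i j hij
    apply Ioc_subset_Ioc <;>
    · have h1 : (1 : ℝ) / (j + 1) ≤ 1 / (i + 1) := by
        apply one_div_le_one_div_of_le (by positivity)
        exact_mod_cast Nat.succ_le_succ hij
      linarith
  have hiInt : (⋂ n, sq n) = {x} := by
    ext y
    simp only [mem_iInter, hsq, mem_Ioc, mem_singleton_iff]
    constructor
    · intro hy
      have h1 : y ≤ x := by
        by_contra hc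
        push_neg at hc
        obtain ⟨n, hn⟩ := exists_nat_one_div_lt (sub_pos.mpr hc)
        exact absurd (hy n).2 (by push_cast; linarith)
      have h2 : x ≤ y := by
        by_contra hc
        push_neg at hc
        obtain ⟨n, hn⟩ := exists_nat_one_div_lt (sub_pos.mpr hc)
        exact absurd (hy n).1 (by push_cast; linarith)
      linarith
    · rintro rfl
      intro n
      have hpos : (0:ℝ) < 1 / ((n:ℝ) + 1) := by positivity
      exact ⟨by linarith, by linarith⟩
  have htend : Filter.Tendsto (fun n => m (sq n)) Filter.atTop (nhds 0) := by
    have := tendsto_measure_iInter_atTop (μ := m)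
      (fun n => measurableSet_Ioc.nullMeasurableSet) hanti ⟨0, measure_ne_top m _⟩
    rwa [hiInt, hNA x] at this
  have htendR : Filter.Tendsto (fun n => (m (sq n)).toReal) Filter.atTop (nhds 0) := by
    have := (ENNReal.tendsto_toReal (by simp)).comp htend
    simpa [Function.comp_def] using this
  obtain ⟨N, hN⟩ := (htendR.eventually_lt_const hε).exists
  refine ⟨1 / (N + 1), by positivity, fun y hy => ?_⟩
  rw [Real.dist_eq] at hy ⊢
  set δ : ℝ := 1 / (N + 1) with hδ
  have hδpos : (0:ℝ) < δ := by positivity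
  have hyx : x - δ ≤ y ∧ y ≤ x + δ := by
    rw [abs_lt] at hy; constructor <;> linarith [hy.1, hy.2]
  have key : (m (Icc 0 (x + δ))).toReal = (m (Icc 0 (x - δ))).toReal + (m (sq N)).toReal :=
    hdiff hI (by linarith)
  have hb1 := hmono hI hyx.1
  have hb2 := hmono hI hyx.2
  have hb3 := hmono hI (show x - δ ≤ x by linarith)
  have hb4 := hmono hI (show x ≤ x + δ by linarith)
  simp only at hb1 hb2 hb3 hb4 ⊢
  rw [abs_lt]
  constructor <;> linarith

end CDF


section CDF2
variable {m : Measure ℝ} [IsProbabilityMeasure m]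

theorem h_zero (hNA : ∀ x : ℝ, m {x} = 0) : (m (Icc (0:ℝ) 0)).toReal = 0 := by
  rw [Icc_self, hNA 0, ENNReal.toReal_zero]

theorem h_one (hI : m I01 = 1) : (m (Icc (0:ℝ) 1)).toReal = 1 := by
  have : m (Icc (0:ℝ) 1) = 1 := hI
  rw [this, ENNReal.toReal_one]

theorem h_le_one (x : ℝ) : (m (Icc (0:ℝ) x)).toReal ≤ 1 := by
  have := prob_le_one (μ := m) (s := Icc (0:ℝ) x)
  calc (m (Icc (0:ℝ) x)).toReal ≤ (1 : ENNReal).toReal :=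
        ENNReal.toReal_mono (by simp) this
  _ = 1 := by simp

theorem h_nonneg (x : ℝ) : 0 ≤ (m (Icc (0:ℝ) x)).toReal := ENNReal.toReal_nonneg

theorem h_mem_I01 (x : ℝ) : (m (Icc (0:ℝ) x)).toReal ∈ I01 := ⟨h_nonneg x, h_le_one x⟩

theorem h_strictMonoOn (hI : m I01 = 1) (hFS : FullSupportOnI m) :
    StrictMonoOn (fun x => (m (Icc 0 x)).toReal) I01 := by
  rintro x ⟨hx0, hx1⟩ y ⟨hy0, hy1⟩ hxy
  simp only
  have hd := hdiff hI (le_of_lt hxy)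
  have hsub : Ioo x y ∩ I01 = Ioo x y := by
    apply inter_eq_left.mpr
    intro z hz
    exact ⟨le_of_lt (lt_of_le_of_lt hx0 hz.1), le_of_lt (lt_of_lt_of_le hz.2 hy1)⟩
  have hpos : 0 < m (Ioo x y) := by
    have := hFS (Ioo x y) isOpen_Ioo (by rw [hsub]; exact nonempty_Ioo.mpr hxy)
    rwa [hsub] at this
  have hle : m (Ioo x y) ≤ m (Ioc x y) := measure_mono Ioo_subset_Ioc_self
  have : 0 < (m (Ioc x y)).toReal :=
    ENNReal.toReal_pos (ne_of_gt (lt_of_lt_of_le hpos hle)) (measure_ne_top m _)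
  linarith

theorem h_image (hI : m I01 = 1) (hNA : ∀ x : ℝ, m {x} = 0) :
    (fun x => (m (Icc 0 x)).toReal) '' I01 = I01 := by
  apply Subset.antisymm
  · rintro y ⟨x, hx, rfl⟩
    exact h_mem_I01 x
  · have := intermediate_value_Icc (le_of_lt one_pos)
      ((hcont hI hNA).continuousOn : ContinuousOn (fun x => (m (Icc 0 x)).toReal) (Icc 0 1))
    rw [h_zero hNA, h_one hI] at this
    exact this

theorem hIccIoc (hNA : ∀ x : ℝ, m {x} = 0) {x y : ℝ} (hxy : x ≤ y) :
    m (Icc x y) = m (Ioc x y) := by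
  apply le_antisymm
  · calc m (Icc x y) = m ({x} ∪ Ioc x y) := by
          rw [show ({x} : Set ℝ) ∪ Ioc x y = Icc x y by
            rw [← Icc_self x, Icc_union_Ioc_eq_Icc le_rfl hxy]]
    _ ≤ m {x} + m (Ioc x y) := measure_union_le _ _
    _ = m (Ioc x y) := by rw [hNA x, zero_add]
  · exact measure_mono Ioc_subset_Icc_self

end CDF2

section Conj
variable {τ : ℝ → ℝ} {m : Measure ℝ} [IsProbabilityMeasure m] {s : ℝ}

/-- The key scaling identity on a monotonicity interval. -/
theorem key_scale (hI : m I01 = 1) (hNA : ∀ x : ℝ, m {x} = 0)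
    (hsc : ScaledBy τ m s) (hs : 0 < s) {α β : ℝ} (hαβ : Ioo α β ⊆ I01)
    (hcontτ : ContinuousOn τ (Ioo α β)) {x x' : ℝ} (hx : x ∈ Ioo α β) (hx' : x' ∈ Ioo α β)
    (hxx : x ≤ x') :
    (StrictMonoOn τ (Ioo α β) →
      (m (Icc 0 (τ x'))).toReal - (m (Icc 0 (τ x))).toReal
        = s * ((m (Icc 0 x')).toReal - (m (Icc 0 x)).toReal)) ∧
    (StrictAntiOn τ (Ioo α β) →
      (m (Icc 0 (τ x))).toReal - (m (Icc 0 (τ x'))).toReal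
        = s * ((m (Icc 0 x')).toReal - (m (Icc 0 x)).toReal)) := by
  have hsubI : Icc x x' ⊆ Ioo α β := fun z hz => ⟨lt_of_lt_of_le hx.1 hz.1, lt_of_le_of_lt hz.2 hx'.2⟩
  have hE1 : Icc x x' ⊆ I01 := hsubI.trans hαβ
  have hmE : MeasurableSet (Icc x x') := measurableSet_Icc
  have hmeasE : (m (Icc x x')).toReal = (m (Icc 0 x')).toReal - (m (Icc 0 x)).toReal := by
    have := hdiff hI hxx
    rw [hIccIoc hNA hxx]
    linarith
  constructor
  · intro hmonoτ
    have hinj : Set.InjOn τ (Icc x x') := (hmonoτ.injOn).mono hsubI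
    have himg : τ '' Icc x x' = Icc (τ x) (τ x') := by
      apply Subset.antisymm
      · rintro z ⟨w, hw, rfl⟩
        exact ⟨hmonoτ.monotoneOn hx (hsubI hw) hw.1, hmonoτ.monotoneOn (hsubI hw) hx' hw.2⟩
      · have := intermediate_value_Icc hxx (hcontτ.mono hsubI)
        exact this
    have hττ : τ x ≤ τ x' := hmonoτ.monotoneOn hx hx' hxx
    have := hsc (Icc x x') hE1 hmE hinj
    rw [himg] at this
    have hmeasF : (m (Icc (τ x) (τ x'))).toReal
        = (m (Icc 0 (τ x'))).toReal - (m (Icc 0 (τ x))).toReal := by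
      have := hdiff hI hττ
      rw [hIccIoc hNA hττ]
      linarith
    have htr : (m (Icc (τ x) (τ x'))).toReal = s * (m (Icc x x')).toReal := by
      rw [this, ENNReal.toReal_mul, ENNReal.toReal_ofReal hs.le]
    rw [hmeasF, hmeasE] at htr
    linarith
  · intro hantiτ
    have hinj : Set.InjOn τ (Icc x x') := (hantiτ.injOn).mono hsubI
    have himg : τ '' Icc x x' = Icc (τ x') (τ x) := by
      apply Subset.antisymm
      · rintro z ⟨w, hw, rfl⟩
        exact ⟨hantiτ.antitoneOn (hsubI hw) hx' hw.2, hantiτ.antitoneOn hx (hsubI hw) hw.1⟩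
      · have := intermediate_value_Icc' hxx (hcontτ.mono hsubI)
        exact this
    have hττ : τ x' ≤ τ x := hantiτ.antitoneOn hx hx' hxx
    have := hsc (Icc x x') hE1 hmE hinj
    rw [himg] at this
    have hmeasF : (m (Icc (τ x') (τ x))).toReal
        = (m (Icc 0 (τ x))).toReal - (m (Icc 0 (τ x'))).toReal := by
      have := hdiff hI hττ
      rw [hIccIoc hNA hττ]
      linarith
    have htr : (m (Icc (τ x') (τ x))).toReal = s * (m (Icc x x')).toReal := by
      rw [this, ENNReal.toReal_mul, ENNReal.toReal_ofReal hs.le]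
    rw [hmeasF, hmeasE] at htr
    linarith

end Conj


section Moreover
variable {τ : ℝ → ℝ} {m : Measure ℝ} [IsProbabilityMeasure m] {s : ℝ}

theorem moreover_part (hmaps : Set.MapsTo τ I01 I01) (hpm : PiecewiseMonotonic τ)
    (hs : 0 < s) (hI : m I01 = 1) (hNA : ∀ x : ℝ, m {x} = 0) (hFS : FullSupportOnI m)
    (hsc : ScaledBy τ m s) :
    IncSelfHomeoI (fun x => (m (Set.Icc 0 x)).toReal) ∧
    (∃ T : ℝ → ℝ, UniformlyPiecewiseLinear T s ∧ Set.MapsTo T I01 I01 ∧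
      Set.EqOn ((fun x => (m (Set.Icc 0 x)).toReal) ∘ τ)
        (T ∘ fun x => (m (Set.Icc 0 x)).toReal) I01) ∧
    Measure.map (fun x => (m (Set.Icc 0 x)).toReal) m = volume.restrict I01 := by
  set h : ℝ → ℝ := fun x => (m (Icc 0 x)).toReal with hh
  have hSM : StrictMonoOn h I01 := h_strictMonoOn hI hFS
  have hinjOn : Set.InjOn h I01 := hSM.injOn
  have himg : h '' I01 = I01 := h_image hI hNA
  have hMono : Monotone h := hmono hI
  set g : ℝ → ℝ := Function.invFunOn h I01 with hg
  have hgmem : ∀ y ∈ I01, g y ∈ I01 ∧ h (g y) = y := by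
    intro y hy
    have hyi : y ∈ h '' I01 := by rw [himg]; exact hy
    obtain ⟨x, hxI, hxy⟩ := hyi
    exact ⟨Function.invFunOn_mem ⟨x, hxI, hxy⟩, Function.invFunOn_eq ⟨x, hxI, hxy⟩⟩
  have hgh : ∀ x ∈ I01, g (h x) = x := fun x hx => hinjOn.leftInvOn_invFunOn hx
  have hIncHom : IncSelfHomeoI h := ⟨(hcont hI hNA).continuousOn, hSM, himg⟩
  set T : ℝ → ℝ := fun y => h (τ (g y)) with hT
  have hTmaps : Set.MapsTo T I01 I01 := by
    intro y hy
    exact h_mem_I01 _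
  have hEqOn : Set.EqOn (h ∘ τ) (T ∘ h) I01 := by
    intro x hx
    simp only [Function.comp_apply, hT, hgh x hx]
  -- UPL
  obtain ⟨n, hn, a, ha0, ha1, halt, hprops⟩ := hpm
  have hUPL : UniformlyPiecewiseLinear T s := by
    refine ⟨n, hn, fun i => h (a i), show h (a 0) = 0 by rw [ha0]; exact h_zero hNA,
      show h (a n) = 1 by rw [ha1]; exact h_one hI, ?_, ?_⟩
    · intro i hi
      exact hSM (a_mem_I01 ha0 ha1 halt (le_of_lt hi))
        (a_mem_I01 ha0 ha1 halt hi) (halt i hi)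
    · intro i hi
      obtain ⟨hcτ, hMA⟩ := hprops i hi
      set α := a i with hα
      set β := a (i + 1) with hβ
      have hαβlt : α < β := halt i hi
      have hαI : α ∈ I01 := a_mem_I01 ha0 ha1 halt (le_of_lt hi)
      have hβI : β ∈ I01 := a_mem_I01 ha0 ha1 halt hi
      have hαβI : Ioo α β ⊆ I01 := fun z hz =>
        ⟨le_trans hαI.1 (le_of_lt hz.1), le_trans (le_of_lt hz.2) hβI.2⟩
      have hbb : h α < h β := hSM hαI hβI hαβlt
      have hginmem : ∀ y ∈ Ioo (h α) (h β), g y ∈ Ioo α β ∧ h (g y) = y := by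
        intro y hy
        have hyI : y ∈ I01 :=
          ⟨le_trans (h_mem_I01 α).1 (le_of_lt hy.1), le_trans (le_of_lt hy.2) (h_mem_I01 β).2⟩
        obtain ⟨hgI, hgy⟩ := hgmem y hyI
        refine ⟨⟨?_, ?_⟩, hgy⟩
        · by_contra hc
          push_neg at hc
          have := hMono hc
          rw [hgy] at this
          exact absurd hy.1 (not_lt.mpr this)
        · by_contra hc
          push_neg at hc
          have := hMono hc
          rw [hgy] at this
          exact absurd hy.2 (not_lt.mpr this)
      have hgle : ∀ y ∈ Ioo (h α) (h β), ∀ y' ∈ Ioo (h α) (h β), y ≤ y' → g y ≤ g y' := by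
        intro y hy y' hy' hyy
        by_contra hc
        push_neg at hc
        have h1 := hMono (le_of_lt hc)
        rw [(hginmem y hy).2, (hginmem y' hy').2] at h1
        have hyeq : y = y' := le_antisymm hyy h1
        rw [hyeq] at hc
        exact lt_irrefl _ hc
      rcases hMA with hMonoτ | hAntiτ
      · refine ⟨1, Or.inl rfl, T ((h α + h β) / 2) - s * ((h α + h β) / 2), ?_⟩
        have hy0 : (h α + h β) / 2 ∈ Ioo (h α) (h β) := ⟨by linarith, by linarith⟩
        have hkey : ∀ y ∈ Ioo (h α) (h β), ∀ y' ∈ Ioo (h α) (h β), y ≤ y' →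
            T y' - T y = s * (y' - y) := by
          intro y hy y' hy' hyy
          obtain ⟨hgy, hgyeq⟩ := hginmem y hy
          obtain ⟨hgy', hgyeq'⟩ := hginmem y' hy'
          have hks := (key_scale hI hNA hsc hs hαβI hcτ hgy hgy'
            (hgle y hy y' hy' hyy)).1 hMonoτ
          have e1 : (m (Icc 0 (g y))).toReal = y := hgyeq
          have e2 : (m (Icc 0 (g y'))).toReal = y' := hgyeq'
          rw [e1, e2] at hks
          show h (τ (g y')) - h (τ (g y)) = s * (y' - y)
          exact hks
        intro y hy
        rcases le_total y ((h α + h β) / 2) with hc | hc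
        · have := hkey y hy _ hy0 hc
          ring_nf
          ring_nf at this
          linarith
        · have := hkey _ hy0 y hy hc
          ring_nf
          ring_nf at this
          linarith
      · refine ⟨-1, Or.inr rfl, T ((h α + h β) / 2) + s * ((h α + h β) / 2), ?_⟩
        have hy0 : (h α + h β) / 2 ∈ Ioo (h α) (h β) := ⟨by linarith, by linarith⟩
        have hkey : ∀ y ∈ Ioo (h α) (h β), ∀ y' ∈ Ioo (h α) (h β), y ≤ y' →
            T y - T y' = s * (y' - y) := by
          intro y hy y' hy' hyy
          obtain ⟨hgy, hgyeq⟩ := hginmem y hy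
          obtain ⟨hgy', hgyeq'⟩ := hginmem y' hy'
          have hks := (key_scale hI hNA hsc hs hαβI hcτ hgy hgy'
            (hgle y hy y' hy' hyy)).2 hAntiτ
          have e1 : (m (Icc 0 (g y))).toReal = y := hgyeq
          have e2 : (m (Icc 0 (g y'))).toReal = y' := hgyeq'
          rw [e1, e2] at hks
          show h (τ (g y)) - h (τ (g y')) = s * (y' - y)
          exact hks
        intro y hy
        rcases le_total y ((h α + h β) / 2) with hc | hc
        · have := hkey y hy _ hy0 hc
          ring_nf
          ring_nf at this
          linarith
        · have := hkey _ hy0 y hy hc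
          ring_nf
          ring_nf at this
          linarith
  -- pushforward
  have hmeas : Measurable h := hMono.measurable
  have hpush : Measure.map h m = volume.restrict I01 := by
    haveI : IsProbabilityMeasure (Measure.map h m) :=
      Measure.isProbabilityMeasure_map hmeas.aemeasurable
    apply Measure.ext_of_Iic
    intro t
    rw [Measure.map_apply hmeas measurableSet_Iic, Measure.restrict_apply measurableSet_Iic]
    rcases lt_or_ge t 0 with ht | ht
    · have h1 : h ⁻¹' Iic t = ∅ := by
        apply eq_empty_iff_forall_notMem.mpr
        intro x hx
        exact absurd (le_trans (h_nonneg x) hx) (not_le.mpr ht)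
      have h2 : Iic t ∩ I01 = ∅ := by
        apply eq_empty_iff_forall_notMem.mpr
        rintro x ⟨hx1, hx2, _⟩
        linarith [mem_Iic.mp hx1]
      rw [h1, h2, measure_empty, measure_empty]
    rcases lt_or_ge t 1 with ht1 | ht1
    · have htI : t ∈ I01 := ⟨ht, le_of_lt ht1⟩
      obtain ⟨hcI, hct⟩ := hgmem t htI
      set c := g t with hcdef
      have hpre : h ⁻¹' Iic t = Iic c := by
        ext z
        simp only [mem_preimage, mem_Iic]
        constructor
        · intro hz
          by_contra hc2
          push_neg at hc2
          rcases le_or_gt z 1 with hz1 | hz1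
          · have hzI : z ∈ I01 := ⟨le_trans hcI.1 (le_of_lt hc2), hz1⟩
            have := hSM hcI hzI hc2
            rw [hct] at this
            linarith
          · have h1z : h 1 ≤ h z := hMono (le_of_lt hz1)
            rw [show h 1 = 1 from h_one hI] at h1z
            linarith
        · intro hz
          calc h z ≤ h c := hMono hz
          _ = t := hct
      rw [hpre]
      have h2 : Iic t ∩ I01 = Icc 0 t := by
        ext z
        simp only [mem_inter_iff, mem_Iic, mem_Icc, I01]
        constructor
        · rintro ⟨hz1, hz2, _⟩; exact ⟨hz2, hz1⟩
        · rintro ⟨hz1, hz2⟩; exact ⟨hz2, hz1, le_trans hz2 (le_of_lt ht1)⟩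
      rw [h2, Real.volume_Icc, sub_zero]
      have h3 : m (Iic c) = m (Icc 0 c) := (hIcc_eq_Iic hI c).symm
      rw [h3, ← ENNReal.ofReal_toReal (measure_ne_top m (Icc 0 c))]
      have h4 : (m (Icc 0 c)).toReal = t := hct
      rw [h4]
    · have h1 : h ⁻¹' Iic t = univ := by
        apply eq_univ_iff_forall.mpr
        intro x
        exact le_trans (h_le_one x) ht1
      have h2 : Iic t ∩ I01 = I01 := by
        apply inter_eq_right.mpr
        intro z hz
        exact le_trans hz.2 ht1
      rw [h1, h2, measure_univ]
      simp only [I01, Real.volume_Icc, sub_zero, ENNReal.ofReal_one]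
  exact ⟨hIncHom, ⟨T, hUPL, hTmaps, hEqOn⟩, hpush⟩

end Moreover


section Forward
variable {τ : ℝ → ℝ} {s : ℝ}

theorem pm_image_meas (hpm : PiecewiseMonotonic τ) {E : Set ℝ} (hE : E ⊆ I01)
    (hEm : MeasurableSet E) (hinj : Set.InjOn τ E) : MeasurableSet (τ '' E) := by
  obtain ⟨n, hn, a, ha0, ha1, halt, hprops⟩ := hpm
  set C : Set ℝ := I01 \ (⋃ i ∈ Finset.range n, Ioo (a i) (a (i + 1))) with hC
  have hEdec : E = (⋃ i ∈ Finset.range n, E ∩ Ioo (a i) (a (i + 1))) ∪ (E ∩ C) := by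
    ext x
    simp only [mem_union, mem_iUnion, mem_inter_iff, Finset.mem_range, hC, mem_diff]
    constructor
    · intro hx
      by_cases hcase : ∃ i, i < n ∧ x ∈ Ioo (a i) (a (i + 1))
      · obtain ⟨i, hi, hxi⟩ := hcase
        exact Or.inl ⟨i, hi, hx, hxi⟩
      · refine Or.inr ⟨hx, hE hx, ?_⟩
        simp only [mem_iUnion, Finset.mem_range, not_exists]
        intro i hi hxi
        exact hcase ⟨i, hi, hxi⟩
    · rintro (⟨i, _, hx, _⟩ | ⟨hx, _⟩) <;> exact hx
  have : τ '' E = (⋃ i ∈ Finset.range n, τ '' (E ∩ Ioo (a i) (a (i + 1)))) ∪ τ '' (E ∩ C) := by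
    conv_lhs => rw [hEdec]
    rw [image_union, image_iUnion₂]
  rw [this]
  apply MeasurableSet.union
  · apply MeasurableSet.biUnion (Finset.range n).countable_toSet
    intro i hi
    exact MeasurableSet.image_of_continuousOn_injOn (hEm.inter measurableSet_Ioo)
      ((hprops i (Finset.mem_range.mp hi)).1.mono inter_subset_right)
      (hinj.mono inter_subset_left)
  · have hfin : (E ∩ C).Finite := by
      apply Set.Finite.subset ((Set.Finite.image a (Set.finite_le_nat n)).subset
        (subset_refl _)) ?_
      intro x hx
      exact cover_lemma ha0 ha1 halt hx.2
    exact (hfin.image τ).measurableSet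

theorem forward_dir (hmaps : Set.MapsTo τ I01 I01) (hpm : PiecewiseMonotonic τ) (hs : 0 < s)
    {φ T : ℝ → ℝ} (hφ : IncSelfHomeoI φ) (hT : UniformlyPiecewiseLinear T s)
    (hTm : Set.MapsTo T I01 I01) (hconj : Set.EqOn (φ ∘ τ) (T ∘ φ) I01) :
    ∃ m : Measure ℝ, ProbOnI m ∧ NonAtomic m ∧ FullSupportOnI m ∧ ScaledBy τ m s := by
  obtain ⟨φc, φsm, φim⟩ := hφ
  have hφmem : ∀ x ∈ I01, φ x ∈ I01 := fun x hx => φim ▸ mem_image_of_mem φ hx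
  have hφ0 : φ 0 = 0 := by
    have h1 : φ 0 ∈ I01 := hφmem 0 ⟨le_rfl, zero_le_one⟩
    have h2 : (0:ℝ) ∈ φ '' I01 := by rw [φim]; exact ⟨le_rfl, zero_le_one⟩
    obtain ⟨x, hxI, hx0⟩ := h2
    rcases eq_or_lt_of_le hxI.1 with heq | hlt
    · rw [← heq] at hx0; linarith [hx0]
    · have := φsm ⟨le_rfl, zero_le_one⟩ hxI hlt
      rw [hx0] at this
      linarith [h1.1]
  have hφ1 : φ 1 = 1 := by
    have h1 : φ 1 ∈ I01 := hφmem 1 ⟨zero_le_one, le_rfl⟩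
    have h2 : (1:ℝ) ∈ φ '' I01 := by rw [φim]; exact ⟨zero_le_one, le_rfl⟩
    obtain ⟨x, hxI, hx1⟩ := h2
    rcases eq_or_lt_of_le hxI.2 with heq | hlt
    · rw [heq] at hx1; linarith [hx1]
    · have := φsm hxI ⟨zero_le_one, le_rfl⟩ hlt
      rw [hx1] at this
      linarith [h1.2]
  have hφmonoI : ∀ x ∈ I01, ∀ y ∈ I01, x ≤ y → φ x ≤ φ y := by
    intro x hx y hy hxy
    rcases eq_or_lt_of_le hxy with rfl | hlt
    · exact le_rfl
    · exact le_of_lt (φsm hx hy hlt)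
  set g : ℝ → ℝ := fun y => sSup {x | x ∈ I01 ∧ φ x ≤ y} with hg
  have hbdd : ∀ y : ℝ, BddAbove {x | x ∈ I01 ∧ φ x ≤ y} := by
    intro y
    exact (bddAbove_Icc (a := (0:ℝ)) (b := 1)).mono (fun z hz => hz.1)
  have hgmono : Monotone g := by
    intro y y' hyy
    rcases isEmpty_or_nonempty ↥{x | x ∈ I01 ∧ φ x ≤ y} with hempty | hne
    · have : {x | x ∈ I01 ∧ φ x ≤ y} = ∅ := by
        rw [← not_nonempty_iff_eq_empty]
        intro ⟨z, hz⟩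
        exact hempty.elim ⟨z, hz⟩
      simp only [hg, this, Real.sSup_empty]
      rcases isEmpty_or_nonempty ↥{x | x ∈ I01 ∧ φ x ≤ y'} with hempty' | hne'
      · have h2 : {x | x ∈ I01 ∧ φ x ≤ y'} = ∅ := by
          rw [← not_nonempty_iff_eq_empty]
          intro ⟨z, hz⟩
          exact hempty'.elim ⟨z, hz⟩
        rw [h2, Real.sSup_empty]
      · obtain ⟨z, hz⟩ := hne'
        have hz0 : (0:ℝ) ≤ z := hz.1.1
        calc (0:ℝ) ≤ z := hz0
        _ ≤ sSup {x | x ∈ I01 ∧ φ x ≤ y'} := le_csSup (hbdd y') hz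
    · obtain ⟨z, hz⟩ := hne
      apply csSup_le_csSup (hbdd y') ⟨z, hz⟩
      intro w hw
      exact ⟨hw.1, le_trans hw.2 hyy⟩
  have hgval : ∀ y ∈ I01, g y ∈ I01 ∧ φ (g y) = y := by
    intro y hy
    have h2 : y ∈ φ '' I01 := by rw [φim]; exact hy
    obtain ⟨x, hxI, hxy⟩ := h2
    have hset : {z | z ∈ I01 ∧ φ z ≤ y} = Icc 0 x := by
      ext z
      simp only [mem_setOf_eq, mem_Icc]
      constructor
      · rintro ⟨hzI, hzy⟩
        refine ⟨hzI.1, ?_⟩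
        by_contra hc
        push_neg at hc
        have := φsm hxI hzI hc
        rw [hxy] at this
        linarith
      · rintro ⟨hz0, hzx⟩
        have hzI : z ∈ I01 := ⟨hz0, le_trans hzx hxI.2⟩
        exact ⟨hzI, hxy ▸ hφmonoI z hzI x hxI hzx⟩
    have hgx : g y = x := by
      rw [hg]
      simp only [hset]
      exact csSup_Icc hxI.1
    rw [hgx]
    exact ⟨hxI, hxy⟩
  have hgφ : ∀ x ∈ I01, g (φ x) = x := by
    intro x hx
    have hy : φ x ∈ I01 := hφmem x hx
    obtain ⟨hgI, hgeq⟩ := hgval (φ x) hy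
    exact φsm.injOn hgI hx hgeq
  have hpreimg : ∀ A : Set ℝ, A ⊆ I01 → g ⁻¹' A ∩ I01 = φ '' A := by
    intro A hA
    ext y
    constructor
    · rintro ⟨hyA, hyI⟩
      obtain ⟨hgI, hgeq⟩ := hgval y hyI
      exact ⟨g y, hyA, hgeq⟩
    · rintro ⟨x, hxA, rfl⟩
      have hxI : x ∈ I01 := hA hxA
      exact ⟨by rw [mem_preimage, hgφ x hxI]; exact hxA, hφmem x hxI⟩
  have hgmeas : Measurable g := hgmono.measurable
  set m : Measure ℝ := Measure.map g (volume.restrict I01) with hm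
  have hvolI : volume I01 = 1 := by
    simp only [I01, Real.volume_Icc, sub_zero, ENNReal.ofReal_one]
  have hmapply : ∀ A : Set ℝ, MeasurableSet A → m A = volume (g ⁻¹' A ∩ I01) := by
    intro A hA
    rw [hm, Measure.map_apply hgmeas hA, Measure.restrict_apply (hA.preimage hgmeas)]
  have hmuniv : m univ = 1 := by
    rw [hmapply univ MeasurableSet.univ, preimage_univ, univ_inter, hvolI]
  haveI hprob : IsProbabilityMeasure m := ⟨hmuniv⟩
  have hmI : m I01 = 1 := by
    rw [hmapply I01 measurableSet_Icc, hpreimg I01 (subset_refl _), φim, hvolI]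
  refine ⟨m, ⟨hprob, hmI⟩, ?_, ?_, ?_⟩
  · -- NonAtomic
    intro x
    rw [hmapply {x} (measurableSet_singleton x)]
    have hsub : (g ⁻¹' {x} ∩ I01).Subsingleton := by
      rintro y ⟨hy1, hy2⟩ y' ⟨hy1', hy2'⟩
      obtain ⟨_, he⟩ := hgval y hy2
      obtain ⟨_, he'⟩ := hgval y' hy2'
      rw [← he, ← he']
      rw [mem_preimage, mem_singleton_iff] at hy1 hy1'
      rw [hy1, hy1']
    rcases hsub.eq_empty_or_singleton with h | ⟨p, h⟩
    · rw [h, measure_empty]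
    · rw [h, Real.volume_singleton]
  · -- FullSupportOnI
    intro U hU ⟨z, hzU, hzI⟩
    obtain ⟨δ, hδ, hball⟩ := Metric.isOpen_iff.mp hU z hzU
    set p := max 0 (z - δ / 2) with hp
    set q := min 1 (z + δ / 2) with hq
    have hpq : p < q := by
      rw [hp, hq]
      apply max_lt <;> apply lt_min
      · exact one_pos
      · linarith [hzI.1]
      · linarith [hzI.2]
      · linarith
    have hpqI : Icc p q ⊆ U ∩ I01 := by
      intro w hw
      have hw1 : 0 ≤ w := le_trans (le_max_left _ _) hw.1
      have hw2 : w ≤ 1 := le_trans hw.2 (min_le_left _ _)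
      refine ⟨hball ?_, hw1, hw2⟩
      rw [Metric.mem_ball, Real.dist_eq, abs_lt]
      constructor
      · have := le_trans (le_max_right _ _) hw.1
        linarith
      · have := le_trans hw.2 (min_le_right _ _)
        linarith
    have hpI : p ∈ I01 := hpqI ⟨le_rfl, le_of_lt hpq⟩ |>.2
    have hqI : q ∈ I01 := hpqI ⟨le_of_lt hpq, le_rfl⟩ |>.2
    rw [hmapply (U ∩ I01) (hU.measurableSet.inter measurableSet_Icc),
      hpreimg (U ∩ I01) inter_subset_right]
    have himgsub : Icc (φ p) (φ q) ⊆ φ '' (U ∩ I01) := by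
      have h1 : Icc (φ p) (φ q) ⊆ φ '' Icc p q :=
        intermediate_value_Icc (le_of_lt hpq) (φc.mono (fun w hw => (hpqI hw).2))
      exact h1.trans (image_mono hpqI)
    calc (0:ENNReal) < ENNReal.ofReal (φ q - φ p) := by
          rw [ENNReal.ofReal_pos]
          have := φsm hpI hqI hpq
          linarith
    _ = volume (Icc (φ p) (φ q)) := (Real.volume_Icc).symm
    _ ≤ volume (φ '' (U ∩ I01)) := measure_mono himgsub
  · -- ScaledBy
    intro E hE hEm hinjτ
    have hτE_sub : τ '' E ⊆ I01 := by
      rintro y ⟨x, hx, rfl⟩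
      exact hmaps (hE hx)
    have hτE_meas : MeasurableSet (τ '' E) := pm_image_meas hpm hE hEm hinjτ
    have hφE_meas : MeasurableSet (φ '' E) :=
      MeasurableSet.image_of_continuousOn_injOn hEm (φc.mono hE) (φsm.injOn.mono hE)
    have hφE_sub : φ '' E ⊆ I01 := by
      rintro y ⟨x, hx, rfl⟩
      exact hφmem x (hE hx)
    have hTinj : Set.InjOn T (φ '' E) := by
      rintro y ⟨x, hx, rfl⟩ y' ⟨x', hx', rfl⟩ heq
      have h1 : φ (τ x) = φ (τ x') := by
        have e1 := hconj (hE hx)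
        have e2 := hconj (hE hx')
        simp only [Function.comp_apply] at e1 e2
        rw [e1, e2]; exact heq
      have h2 : τ x = τ x' := φsm.injOn (hmaps (hE hx)) (hmaps (hE hx')) h1
      rw [hinjτ hx hx' h2]
    have hcomm : φ '' (τ '' E) = T '' (φ '' E) := by
      rw [← image_comp, ← image_comp]
      apply image_congr
      intro x hx
      exact hconj (hE hx)
    rw [hmapply (τ '' E) hτE_meas, hpreimg (τ '' E) hτE_sub,
      hmapply E hEm, hpreimg E hE, hcomm]
    exact upl_vol hs hT hφE_sub hφE_meas hTinj

end Forward


/-- A piecewise monotonic map `τ : [0,1] → [0,1]` is conjugate, via an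
increasing homeomorphism of `[0,1]`, to a uniformly piecewise linear map with slopes `±s`
iff there is a non-atomic Borel probability measure on `[0,1]` with full support scaled by
`τ` by the factor `s`; moreover any such measure `m` yields the conjugacy
`h x = m [0,x]`, which pushes `m` forward to Lebesgue measure on `[0,1]`. -/
theorem stmt0 (τ : ℝ → ℝ) (hmaps : Set.MapsTo τ I01 I01) (hpm : PiecewiseMonotonic τ)
    (s : ℝ) (hs : 0 < s) :
    ((∃ h T : ℝ → ℝ, IncSelfHomeoI h ∧ UniformlyPiecewiseLinear T s ∧ Set.MapsTo T I01 I01 ∧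
        Set.EqOn (h ∘ τ) (T ∘ h) I01) ↔
      (∃ m : Measure ℝ, ProbOnI m ∧ NonAtomic m ∧ FullSupportOnI m ∧ ScaledBy τ m s)) ∧
    (∀ m : Measure ℝ, ProbOnI m → NonAtomic m → FullSupportOnI m → ScaledBy τ m s →
      IncSelfHomeoI (fun x => (m (Set.Icc 0 x)).toReal) ∧
      (∃ T : ℝ → ℝ, UniformlyPiecewiseLinear T s ∧ Set.MapsTo T I01 I01 ∧
        Set.EqOn ((fun x => (m (Set.Icc 0 x)).toReal) ∘ τ)
          (T ∘ fun x => (m (Set.Icc 0 x)).toReal) I01) ∧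
      Measure.map (fun x => (m (Set.Icc 0 x)).toReal) m = volume.restrict I01) := by
  constructor
  · constructor
    · rintro ⟨φ, T, hφ, hT, hTm, hconj⟩
      exact forward_dir hmaps hpm hs hφ hT hTm hconj
    · rintro ⟨m, ⟨hPm, hIm⟩, hNAm, hFSm, hscm⟩
      haveI := hPm
      obtain ⟨h1, ⟨T, hT1, hT2, hT3⟩, _⟩ := moreover_part hmaps hpm hs hIm hNAm hFSm hscm
      exact ⟨_, T, h1, hT1, hT2, hT3⟩
  · intro m hPm hNAm hFSm hscm
    haveI := hPm.1
    exact moreover_part hmaps hpm hs hPm.2 hNAm hFSm hscm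
end
end

section
/- If τ : [0,1] → [0,1] is continuous and uniformly piecewise linear with slopes ±s for some s ≥ 1, then the topological entropy of τ equals log s. -/
open Set MeasureTheory
open scoped ENNReal NNReal

noncomputable section

namespace Stmt1Aux

/-- `σ` is affine with slope `±S` on `(c,d)`. -/
def IsAff (σ : ℝ → ℝ) (S c d : ℝ) : Prop :=
  ∃ η : ℝ, (η = 1 ∨ η = -1) ∧ ∃ e : ℝ, ∀ x ∈ Set.Ioo c d, σ x = η * S * x + e

/-- `P` is a partition of `[0,1]` adapted to `σ`, with slopes `±S` on the gaps. -/
structure Q (σ : ℝ → ℝ) (S : ℝ) (P : Finset ℝ) : Prop where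
  zero_mem : (0:ℝ) ∈ P
  one_mem : (1:ℝ) ∈ P
  subset : ↑P ⊆ I01
  aff : ∀ c ∈ P, ∀ d ∈ P, c < d → (∀ p ∈ P, p ∉ Set.Ioo c d) → IsAff σ S c d

lemma gap_subset {P : Finset ℝ} (h0 : (0:ℝ) ∈ P) (h1 : (1:ℝ) ∈ P)
    {T : Set ℝ} (hT : T ⊆ I01) (hTP : ∀ p ∈ P, p ∉ T) (hTo : T.OrdConnected)
    {t : ℝ} (ht : t ∈ T) :
    ∃ c ∈ P, ∃ d ∈ P, c < d ∧ T ⊆ Set.Ioo c d ∧ ∀ p ∈ P, p ∉ Set.Ioo c d := by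
  have ht01 : t ∈ I01 := hT ht
  have h0t : (0:ℝ) < t := lt_of_le_of_ne ht01.1 (fun h => hTP 0 h0 (h ▸ ht))
  have ht1 : t < 1 := lt_of_le_of_ne ht01.2 (fun h => hTP 1 h1 (h ▸ ht))
  have hlne : (P.filter (· < t)).Nonempty := ⟨0, Finset.mem_filter.2 ⟨h0, h0t⟩⟩
  have hrne : (P.filter (t < ·)).Nonempty := ⟨1, Finset.mem_filter.2 ⟨h1, ht1⟩⟩
  set c := (P.filter (· < t)).max' hlne with hc
  set d := (P.filter (t < ·)).min' hrne with hd
  have hcP : c ∈ P := (Finset.mem_filter.1 ((P.filter (· < t)).max'_mem hlne)).1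
  have hct : c < t := (Finset.mem_filter.1 ((P.filter (· < t)).max'_mem hlne)).2
  have hdP : d ∈ P := (Finset.mem_filter.1 ((P.filter (t < ·)).min'_mem hrne)).1
  have htd : t < d := (Finset.mem_filter.1 ((P.filter (t < ·)).min'_mem hrne)).2
  have hnone : ∀ p ∈ P, p ∉ Set.Ioo c d := by
    intro p hp hpm
    rcases lt_trichotomy p t with h | h | h
    · have : p ≤ c := Finset.le_max' (P.filter (· < t)) p (Finset.mem_filter.2 ⟨hp, h⟩)
      exact absurd this (not_le.2 hpm.1)
    · exact hTP p hp (h ▸ ht)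
    · have : d ≤ p := Finset.min'_le (P.filter (t < ·)) p (Finset.mem_filter.2 ⟨hp, h⟩)
      exact absurd this (not_le.2 hpm.2)
  refine ⟨c, hcP, d, hdP, hct.trans htd, ?_, hnone⟩
  intro y hy
  constructor
  · by_contra h
    push_neg at h
    exact hTP c hcP (hTo.out hy ht ⟨h, hct.le⟩)
  · by_contra h
    push_neg at h
    exact hTP d hdP (hTo.out ht hy ⟨htd.le, h⟩)

lemma exists_mingap {P : Finset ℝ} (h0 : (0:ℝ) ∈ P) (h1 : (1:ℝ) ∈ P) :
    ∃ δ > 0, ∀ c ∈ P, ∀ d ∈ P, c < d → δ ≤ d - c := by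
  have hne : ((P ×ˢ P).filter fun q : ℝ × ℝ => q.1 < q.2).Nonempty :=
    ⟨(0,1), Finset.mem_filter.2 ⟨Finset.mem_product.2 ⟨h0, h1⟩, one_pos⟩⟩
  refine ⟨((P ×ˢ P).filter fun q : ℝ × ℝ => q.1 < q.2).inf' hne (fun q => q.2 - q.1), ?_, ?_⟩
  · exact (Finset.lt_inf'_iff hne).2 (fun b hb => sub_pos.2 (Finset.mem_filter.1 hb).2)
  · intro c hc d hd hcd
    have hm : (c, d) ∈ (P ×ˢ P).filter (fun q : ℝ × ℝ => q.1 < q.2) :=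
      Finset.mem_filter.2 ⟨Finset.mem_product.2 ⟨hc, hd⟩, hcd⟩
    exact Finset.inf'_le (fun q : ℝ × ℝ => q.2 - q.1) hm

lemma Q_of_UPL {τ : ℝ → ℝ} {s : ℝ} (h : UniformlyPiecewiseLinear τ s) :
    ∃ P : Finset ℝ, Q τ s P := by
  obtain ⟨n, npos, a, ha0, han, hmono, haff⟩ := h
  have key : ∀ j, j ≤ n → ∀ i ≤ j, a i ≤ a j := by
    intro j
    induction j with
    | zero => intro _ i hi; obtain rfl : i = 0 := Nat.le_zero.1 hi; exact le_rfl
    | succ k ih =>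
      intro hk i hi
      rcases Nat.lt_succ_iff_lt_or_eq.mp (Nat.lt_succ_of_le hi) with h' | h'
      · exact le_trans (ih (Nat.le_of_succ_le hk) i (Nat.lt_succ_iff.1 h'))
          (le_of_lt (hmono k (Nat.lt_of_succ_le hk)))
      · exact h' ▸ le_rfl
  have hlt : ∀ i ≤ n, ∀ j ≤ n, i < j → a i < a j := by
    intro i hi j hj hij
    exact lt_of_lt_of_le (hmono i (Nat.lt_of_lt_of_le hij hj))
      (key j hj (i+1) (Nat.succ_le_of_lt hij))
  refine ⟨(Finset.range (n+1)).image a, ?_, ?_, ?_, ?_⟩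
  · exact Finset.mem_image.2 ⟨0, Finset.mem_range.2 (Nat.succ_pos n), ha0⟩
  · exact Finset.mem_image.2 ⟨n, Finset.mem_range.2 (Nat.lt_succ_self n), han⟩
  · intro x hx
    simp only [Finset.coe_image, Finset.coe_range, Set.mem_image] at hx
    obtain ⟨i, hi, rfl⟩ := hx
    have hi' : i ≤ n := Nat.lt_succ_iff.1 hi
    exact ⟨ha0 ▸ key i hi' 0 (Nat.zero_le i), han ▸ key n le_rfl i hi'⟩
  · intro c hc d hd hcd hnone
    obtain ⟨i, hi, rfl⟩ := Finset.mem_image.1 hc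
    obtain ⟨j, hj, rfl⟩ := Finset.mem_image.1 hd
    have hi' : i ≤ n := Nat.lt_succ_iff.1 (Finset.mem_range.1 hi)
    have hj' : j ≤ n := Nat.lt_succ_iff.1 (Finset.mem_range.1 hj)
    have hij : i < j := by
      by_contra h
      exact absurd (key i hi' j (Nat.le_of_not_lt h)) (not_le.2 hcd)
    have hin : i < n := Nat.lt_of_lt_of_le hij hj'
    have hji : j = i + 1 := by
      by_contra h
      have h1 : i + 1 < j := lt_of_le_of_ne (Nat.succ_le_of_lt hij) (Ne.symm h)
      have h2 : a (i+1) ∈ Set.Ioo (a i) (a j) :=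
        ⟨hmono i hin, hlt (i+1) (Nat.le_of_lt (Nat.lt_of_lt_of_le h1 hj')) j hj' h1⟩
      exact hnone (a (i+1)) (Finset.mem_image.2
        ⟨i+1, Finset.mem_range.2 (Nat.lt_succ_of_lt (Nat.lt_of_lt_of_le h1 hj')), rfl⟩) h2
    obtain ⟨ε, hε, e, he⟩ := haff i hin
    exact ⟨ε, hε, e, fun x hx => he x (hji ▸ hx)⟩


lemma affine_ordConnected {a : ℝ} (ha : a ≠ 0) (e : ℝ) {T : Set ℝ} (hT : T.OrdConnected) :
    ((fun x => a * x + e) '' T).OrdConnected := by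
  constructor
  rintro y1 ⟨x1, hx1, rfl⟩ y2 ⟨x2, hx2, rfl⟩ z hz
  simp only [Set.mem_Icc] at hz
  refine ⟨(z - e) / a, ?_, by field_simp; ring⟩
  rcases lt_or_gt_of_ne ha with h | h
  · refine hT.out hx2 hx1 ⟨?_, ?_⟩
    · rw [le_div_iff_of_neg h]; nlinarith [hz.1, hz.2]
    · rw [div_le_iff_of_neg h]; nlinarith [hz.1, hz.2]
  · refine hT.out hx1 hx2 ⟨?_, ?_⟩
    · rw [le_div_iff₀ h]; nlinarith [hz.1, hz.2]
    · rw [div_le_iff₀ h]; nlinarith [hz.1, hz.2]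

lemma vol_affine_preimage {a : ℝ} (ha : a ≠ 0) (e : ℝ) (E : Set ℝ) :
    volume ((fun x => a * x + e) ⁻¹' E) = ENNReal.ofReal |a⁻¹| * volume E := by
  have h1 : (fun x : ℝ => a * x + e) ⁻¹' E = (a * ·) ⁻¹' ((· + e) ⁻¹' E) := rfl
  rw [h1, Real.volume_preimage_mul_left ha, measure_preimage_add_right volume e E]

lemma IsAff.injOn {σ : ℝ → ℝ} {S c d : ℝ} (hS : 1 ≤ S) (h : IsAff σ S c d) :
    Set.InjOn σ (Set.Ioo c d) := by
  obtain ⟨η, hη, e, he⟩ := h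
  intro x hx y hy hxy
  rw [he x hx, he y hy] at hxy
  have ha : η * S ≠ 0 := by
    rcases hη with rfl | rfl <;> simp <;> linarith
  have : η * S * x = η * S * y := by linarith
  exact mul_left_cancel₀ ha this

lemma finite_aff_preimage {σ : ℝ → ℝ} {S c d : ℝ} (hS : 1 ≤ S) (h : IsAff σ S c d)
    (P : Finset ℝ) : {x ∈ Set.Ioo c d | σ x ∈ (P : Set ℝ)}.Finite := by
  apply Set.Finite.of_finite_image (f := σ)
  · exact P.finite_toSet.subset (by rintro y ⟨x, ⟨-, hx⟩, rfl⟩; exact hx)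
  · exact (h.injOn hS).mono (Set.sep_subset _ _)

lemma Q_comp {σ τ : ℝ → ℝ} {S s : ℝ} {Pσ Pτ : Finset ℝ} (hS : 1 ≤ S) (hs : 1 ≤ s)
    (hQσ : Q σ S Pσ) (hQτ : Q τ s Pτ) (hmσ : Set.MapsTo σ I01 I01) :
    ∃ P : Finset ℝ, Q (τ ∘ σ) (s * S) P := by
  classical
  set E : Set ℝ := ↑Pσ ∪ {x ∈ I01 | σ x ∈ (Pτ : Set ℝ)} with hE
  have hEfin : E.Finite := by
    have hsub : E ⊆ ↑Pσ ∪ ⋃ c ∈ (Pσ : Set ℝ), ⋃ d ∈ (Pσ : Set ℝ),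
        (if IsAff σ S c d then {x ∈ Set.Ioo c d | σ x ∈ (Pτ : Set ℝ)} else ∅) := by
      rintro x (hx | ⟨hx01, hxPτ⟩)
      · exact Or.inl hx
      · by_cases hxPσ : x ∈ Pσ
        · exact Or.inl hxPσ
        · obtain ⟨c, hc, d, hd, hcd, hsub, hnone⟩ := gap_subset hQσ.zero_mem hQσ.one_mem
            (Set.singleton_subset_iff.2 hx01)
            (fun p hp hpx => hxPσ (by rwa [Set.mem_singleton_iff.1 hpx] at hp))
            Set.ordConnected_singleton rfl
          right
          refine Set.mem_biUnion hc (Set.mem_biUnion hd ?_)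
          rw [if_pos (hQσ.aff c hc d hd hcd hnone)]
          exact ⟨hsub rfl, hxPτ⟩
    refine Set.Finite.subset (Set.Finite.union Pσ.finite_toSet ?_) hsub
    refine Set.Finite.biUnion Pσ.finite_toSet fun c _ =>
      Set.Finite.biUnion Pσ.finite_toSet fun d _ => ?_
    split_ifs with h
    · exact finite_aff_preimage hS h Pτ
    · exact Set.finite_empty
  set P : Finset ℝ := hEfin.toFinset with hP
  have hPσP : ∀ p ∈ Pσ, p ∈ P := fun p hp => hEfin.mem_toFinset.2 (Or.inl hp)
  have hPE : ∀ p, p ∈ P ↔ p ∈ E := fun p => hEfin.mem_toFinset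
  have hPsub : ↑P ⊆ I01 := by
    intro p hp
    rcases (hPE p).1 hp with h | h
    · exact hQσ.subset h
    · exact h.1
  refine ⟨P, hPσP 0 hQσ.zero_mem, hPσP 1 hQσ.one_mem, hPsub, ?_⟩
  intro c' hc' d' hd' hcd' hnone'
  -- find the adjacent gap of Pσ containing (c', d')
  have hc'E : c' ∈ I01 := hPsub hc'
  have hd'E : d' ∈ I01 := hPsub hd'
  have hlne : (Pσ.filter (· ≤ c')).Nonempty := ⟨0, Finset.mem_filter.2 ⟨hQσ.zero_mem, hc'E.1⟩⟩
  have hrne : (Pσ.filter (d' ≤ ·)).Nonempty := ⟨1, Finset.mem_filter.2 ⟨hQσ.one_mem, hd'E.2⟩⟩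
  set c := (Pσ.filter (· ≤ c')).max' hlne with hcdef
  set d := (Pσ.filter (d' ≤ ·)).min' hrne with hddef
  have hcPσ : c ∈ Pσ := (Finset.mem_filter.1 ((Pσ.filter (· ≤ c')).max'_mem hlne)).1
  have hcc' : c ≤ c' := (Finset.mem_filter.1 ((Pσ.filter (· ≤ c')).max'_mem hlne)).2
  have hdPσ : d ∈ Pσ := (Finset.mem_filter.1 ((Pσ.filter (d' ≤ ·)).min'_mem hrne)).1
  have hd'd : d' ≤ d := (Finset.mem_filter.1 ((Pσ.filter (d' ≤ ·)).min'_mem hrne)).2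
  have hsubIoo : Set.Ioo c' d' ⊆ Set.Ioo c d :=
    Set.Ioo_subset_Ioo hcc' hd'd
  have hnoneσ : ∀ p ∈ Pσ, p ∉ Set.Ioo c d := by
    intro p hp hpm
    rcases le_or_gt p c' with h | h
    · have : p ≤ c := Finset.le_max' (Pσ.filter (· ≤ c')) p (Finset.mem_filter.2 ⟨hp, h⟩)
      exact absurd this (not_le.2 hpm.1)
    · rcases lt_or_ge p d' with h2 | h2
      · exact hnone' p (hPσP p hp) ⟨h, h2⟩
      · have : d ≤ p := Finset.min'_le (Pσ.filter (d' ≤ ·)) p (Finset.mem_filter.2 ⟨hp, h2⟩)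
        exact absurd this (not_le.2 hpm.2)
  obtain ⟨η, hη, e, he⟩ := hQσ.aff c hcPσ d hdPσ (lt_of_le_of_lt hcc' (lt_of_lt_of_le hcd' hd'd))
    hnoneσ
  have hane : η * S ≠ 0 := by rcases hη with rfl | rfl <;> simp <;> linarith
  -- image of (c', d') under σ
  set T : Set ℝ := σ '' (Set.Ioo c' d') with hT
  have hIoosub : Set.Ioo c' d' ⊆ I01 := fun x hx => ⟨le_trans hc'E.1 hx.1.le, le_trans hx.2.le hd'E.2⟩
  have hTI : T ⊆ I01 := by rintro y ⟨x, hx, rfl⟩; exact hmσ (hIoosub hx)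
  have hTP : ∀ p ∈ Pτ, p ∉ T := by
    rintro p hp ⟨x, hx, rfl⟩
    exact hnone' x ((hPE x).2 (Or.inr ⟨hIoosub hx, hp⟩)) hx
  have hTeq : T = (fun x => η * S * x + e) '' (Set.Ioo c' d') :=
    Set.image_congr (fun x hx => he x (hsubIoo hx))
  have hTo : T.OrdConnected := hTeq ▸ affine_ordConnected hane e Set.ordConnected_Ioo
  have hTne : σ ((c' + d') / 2) ∈ T :=
    Set.mem_image_of_mem σ ⟨by linarith, by linarith⟩
  obtain ⟨u, hu, v, hv, huv, hTuv, hnoneτ⟩ := gap_subset hQτ.zero_mem hQτ.one_mem hTI hTP hTo hTne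
  obtain ⟨η', hη', e', he'⟩ := hQτ.aff u hu v hv huv hnoneτ
  refine ⟨η' * η, ?_, η' * s * e + e', ?_⟩
  · rcases hη with rfl | rfl <;> rcases hη' with rfl | rfl <;> norm_num
  · intro x hx
    have h1 : σ x ∈ T := Set.mem_image_of_mem σ hx
    have h2 : τ (σ x) = η' * s * (σ x) + e' := he' (σ x) (hTuv h1)
    rw [Function.comp_apply, h2, he x (hsubIoo hx)]
    ring

lemma Q_iterate {τ : ℝ → ℝ} {s : ℝ} (hs : 1 ≤ s) (hQ : ∃ P, Q τ s P)
    (hm : Set.MapsTo τ I01 I01) : ∀ n : ℕ, 1 ≤ n → ∃ P, Q (τ^[n]) (s^n) P := by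
  intro n hn
  induction n with
  | zero => omega
  | succ k ih =>
    by_cases hk : k = 0
    · subst hk
      obtain ⟨P, hP⟩ := hQ
      refine ⟨P, ?_⟩
      simpa using hP
    · obtain ⟨P, hP⟩ := ih (Nat.one_le_iff_ne_zero.2 hk)
      obtain ⟨P0, hQτ⟩ := hQ
      obtain ⟨P', hP'⟩ := Q_comp (one_le_pow₀ hs) hs hP hQτ (hm.iterate k)
      refine ⟨P', ?_⟩
      have h1 : τ^[k+1] = τ ∘ τ^[k] := Function.iterate_succ' τ k
      have h2 : s^(k+1) = s * s^k := pow_succ' s k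
      rw [h1, h2]
      exact hP' 


lemma part_bound {σ : ℝ → ℝ} {S : ℝ} {P : Finset ℝ} (hS : 1 ≤ S) (hQ : Q σ S P)
    {T : Set ℝ} (hTI : T ⊆ I01) (hTo : T.OrdConnected) (hTP : ∀ p ∈ P, p ∉ T)
    (S' : Set ℝ) :
    volume (T ∩ σ ⁻¹' S') ≤ ENNReal.ofReal S⁻¹ * volume S' := by
  rcases T.eq_empty_or_nonempty with rfl | ⟨t, ht⟩
  · simp
  obtain ⟨c, hc, d, hd, hcd, hTsub, hnone⟩ := gap_subset hQ.zero_mem hQ.one_mem hTI hTP hTo ht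
  obtain ⟨η, hη, e, he⟩ := hQ.aff c hc d hd hcd hnone
  have haS : |(η * S)⁻¹| = S⁻¹ := by
    rcases hη with rfl | rfl <;> rw [abs_inv] <;> simp [abs_of_nonneg (by linarith : (0:ℝ) ≤ S)]
  have hsub : T ∩ σ ⁻¹' S' ⊆ (fun x => η * S * x + e) ⁻¹' S' := by
    rintro x ⟨hxT, hxS⟩
    have := he x (hTsub hxT)
    simpa [Set.mem_preimage, ← this] using hxS
  have hane : η * S ≠ 0 := by rcases hη with rfl | rfl <;> simp <;> linarith
  calc volume (T ∩ σ ⁻¹' S') ≤ volume ((fun x => η * S * x + e) ⁻¹' S') := measure_mono hsub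
    _ = ENNReal.ofReal S⁻¹ * volume S' := by rw [vol_affine_preimage hane e S', haS]

lemma vol_dynball {σ : ℝ → ℝ} {S : ℝ} {P : Finset ℝ} (hS : 1 ≤ S) (hQ : Q σ S P)
    (hmσ : Set.MapsTo σ I01 I01)
    {δ : ℝ} (hgap : ∀ c ∈ P, ∀ d ∈ P, c < d → δ ≤ d - c)
    {ε : ℝ} (hε : 0 < ε) (hεδ : 2 * ε < δ) :
    ∀ q : ℕ, 1 ≤ q → ∀ z : ℕ → ℝ,
      volume {y ∈ I01 | ∀ j < q, |σ^[j] y - z j| ≤ ε} ≤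
        ENNReal.ofReal (2 * ε) * (ENNReal.ofReal (2 / S)) ^ (q - 1) := by
  intro q hq
  induction q, hq using Nat.le_induction with
  | base =>
    intro z
    have hsub : {y ∈ I01 | ∀ j < 1, |σ^[j] y - z j| ≤ ε} ⊆ Set.Icc (z 0 - ε) (z 0 + ε) := by
      rintro y ⟨-, hy⟩
      have := hy 0 one_pos
      simp only [Function.iterate_zero, id] at this
      exact ⟨by linarith [(abs_le.1 this).1], by linarith [(abs_le.1 this).2]⟩
    calc volume {y ∈ I01 | ∀ j < 1, |σ^[j] y - z j| ≤ ε} ≤ volume (Set.Icc (z 0 - ε) (z 0 + ε)) :=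
          measure_mono hsub
      _ = ENNReal.ofReal (2 * ε) := by rw [Real.volume_Icc]; ring_nf
      _ = ENNReal.ofReal (2 * ε) * (ENNReal.ofReal (2 / S)) ^ (1 - 1) := by simp
  | succ q hq1 ih =>
    intro z
    classical
    set A := {y ∈ I01 | ∀ j < q + 1, |σ^[j] y - z j| ≤ ε} with hA
    set S' := {w ∈ I01 | ∀ j < q, |σ^[j] w - z (j + 1)| ≤ ε} with hS'
    set T0 := I01 ∩ Set.Icc (z 0 - ε) (z 0 + ε) with hT0
    have hAsub : A ⊆ T0 ∩ σ ⁻¹' S' := by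
      rintro y ⟨hyI, hy⟩
      have h0 := hy 0 (Nat.succ_pos q)
      simp only [Function.iterate_zero, id] at h0
      refine ⟨⟨hyI, by linarith [(abs_le.1 h0).1], by linarith [(abs_le.1 h0).2]⟩, ?_⟩
      refine ⟨hmσ hyI, fun j hj => ?_⟩
      have := hy (j + 1) (Nat.succ_lt_succ hj)
      rwa [Function.iterate_succ_apply] at this
    -- at most one partition point in T0
    have hsingle : ∀ p ∈ P, ∀ p' ∈ P, p ∈ T0 → p' ∈ T0 → p = p' := by
      intro p hp p' hp' hpT hp'T
      by_contra hne
      rcases lt_or_gt_of_ne hne with h | h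
      · have := hgap p hp p' hp' h
        have h1 := hpT.2.1; have h2 := hpT.2.2
        have h3 := hp'T.2.1; have h4 := hp'T.2.2
        linarith
      · have := hgap p' hp' p hp h
        have h1 := hpT.2.1; have h2 := hpT.2.2
        have h3 := hp'T.2.1; have h4 := hp'T.2.2
        linarith
    set p0 : ℝ := if h : ∃ p ∈ P, p ∈ T0 then h.choose else 2 with hp0
    have hT0o : T0.OrdConnected := (Set.ordConnected_Icc.inter Set.ordConnected_Icc)
    have hparts : ∀ T', T' = T0 ∩ Set.Iio p0 ∨ T' = T0 ∩ Set.Ioi p0 →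
        volume (T' ∩ σ ⁻¹' S') ≤ ENNReal.ofReal S⁻¹ * volume S' := by
      intro T' hT'
      have hT'I : T' ⊆ I01 := by rcases hT' with rfl | rfl <;> exact fun x hx => hx.1.1
      have hT'o : T'.OrdConnected := by
        rcases hT' with rfl | rfl
        · exact hT0o.inter Set.ordConnected_Iio
        · exact hT0o.inter Set.ordConnected_Ioi
      have hT'P : ∀ p ∈ P, p ∉ T' := by
        intro p hp hpT'
        have hpT0 : p ∈ T0 := by rcases hT' with rfl | rfl <;> exact hpT'.1
        have hex : ∃ p ∈ P, p ∈ T0 := ⟨p, hp, hpT0⟩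
        have hpeq : p = p0 := by
          rw [hp0, dif_pos hex]
          exact hsingle p hp hex.choose hex.choose_spec.1 hpT0 hex.choose_spec.2
        rcases hT' with rfl | rfl
        · exact absurd hpT'.2 (by simp [hpeq])
        · exact absurd hpT'.2 (by simp [hpeq])
      exact part_bound hS hQ hT'I hT'o hT'P S'
    have hcover : A ⊆ ((T0 ∩ Set.Iio p0) ∩ σ ⁻¹' S') ∪ ({p0} ∪ ((T0 ∩ Set.Ioi p0) ∩ σ ⁻¹' S')) := by
      intro y hy
      have h1 := hAsub hy
      rcases lt_trichotomy y p0 with h | h | h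
      · exact Or.inl ⟨⟨h1.1, h⟩, h1.2⟩
      · exact Or.inr (Or.inl h)
      · exact Or.inr (Or.inr ⟨⟨h1.1, h⟩, h1.2⟩)
    have hvolS' : volume S' ≤ ENNReal.ofReal (2 * ε) * (ENNReal.ofReal (2 / S)) ^ (q - 1) :=
      ih (fun j => z (j + 1))
    have hSpos : (0:ℝ) < S := by linarith
    have key : volume A ≤ ENNReal.ofReal (2 / S) * volume S' := by
      calc volume A ≤ volume ((T0 ∩ Set.Iio p0) ∩ σ ⁻¹' S') +
            (volume ({p0} : Set ℝ) + volume ((T0 ∩ Set.Ioi p0) ∩ σ ⁻¹' S')) :=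
            le_trans (measure_mono hcover) (le_trans (measure_union_le _ _)
              (add_le_add_right (measure_union_le _ _) _))
        _ ≤ ENNReal.ofReal S⁻¹ * volume S' + (0 + ENNReal.ofReal S⁻¹ * volume S') := by
            gcongr
            · exact hparts _ (Or.inl rfl)
            · exact le_of_eq (Real.volume_singleton)
            · exact hparts _ (Or.inr rfl)
        _ = (ENNReal.ofReal S⁻¹ + ENNReal.ofReal S⁻¹) * volume S' := by ring
        _ = ENNReal.ofReal (2 / S) * volume S' := by
            rw [← ENNReal.ofReal_add (by positivity) (by positivity)]
            congr 1
            rw [div_eq_mul_inv]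
            ring
    calc volume A ≤ ENNReal.ofReal (2 / S) * volume S' := key
      _ ≤ ENNReal.ofReal (2 / S) * (ENNReal.ofReal (2 * ε) * (ENNReal.ofReal (2 / S)) ^ (q - 1)) :=
          mul_le_mul_right hvolS' _
      _ = ENNReal.ofReal (2 * ε) * (ENNReal.ofReal (2 / S)) ^ (q + 1 - 1) := by
          have : q + 1 - 1 = (q - 1) + 1 := by omega
          rw [this, pow_succ]
          ring


lemma cover_card_lower {τ : ℝ → ℝ} {n : ℕ} (hn : 1 ≤ n)
    {s : ℝ} (hs : 1 ≤ s) {Pn : Finset ℝ} (hQn : Q (τ^[n]) (s^n) Pn)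
    (hmn : Set.MapsTo (τ^[n]) I01 I01)
    {δ ε : ℝ} (hgap : ∀ c ∈ Pn, ∀ d ∈ Pn, c < d → δ ≤ d - c) (hε : 0 < ε) (hεδ : 2*ε < δ)
    {k : ℕ} (hk : n ≤ k) {t : Finset ℝ}
    (hcov : Dynamics.IsDynCoverOf τ I01 {p : ℝ × ℝ | dist p.1 p.2 < ε} k t) :
    1 ≤ (t.card : ℝ≥0∞) * (ENNReal.ofReal (2*ε) * ENNReal.ofReal (2/s^n) ^ (k/n - 1)) := by
  set q := k / n with hq
  have hq1 : 1 ≤ q := (Nat.one_le_div_iff (by omega)).2 hk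
  set W : ℝ≥0∞ := ENNReal.ofReal (2*ε) * ENNReal.ofReal (2/s^n) ^ (q - 1) with hW
  have hball : ∀ x : ℝ, I01 ∩ UniformSpace.ball x
      (Dynamics.dynEntourage τ {p : ℝ × ℝ | dist p.1 p.2 < ε} k) ⊆
      {y ∈ I01 | ∀ j < q, |(τ^[n])^[j] y - (fun j => (τ^[n])^[j] x) j| ≤ ε} := by
    intro x y ⟨hyI, hyb⟩
    refine ⟨hyI, fun j hj => ?_⟩
    have hjk : n * j < k := by
      have h2 : n * j + n ≤ n * q := by
        have h3 : n * (j + 1) ≤ n * q := Nat.mul_le_mul_left n hj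
        calc n * j + n = n * (j + 1) := by ring
          _ ≤ n * q := h3
      have h3' : n * q ≤ k := by rw [mul_comm]; exact Nat.div_mul_le_self k n
      exact lt_of_lt_of_le (Nat.lt_add_of_pos_right (by omega)) (le_trans h2 h3')
    have := (Dynamics.mem_ball_dynEntourage.1 hyb) (n * j) hjk
    simp only [UniformSpace.ball, Set.mem_preimage, Set.mem_setOf_eq] at this
    have hit : ∀ w : ℝ, τ^[n * j] w = (τ^[n])^[j] w := by
      intro w; rw [Function.iterate_mul]
    rw [hit x, hit y] at this
    rw [Real.dist_eq] at this
    rw [abs_sub_comm] at this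
    exact this.le
  have hsubU : I01 ⊆ ⋃ x ∈ t, (I01 ∩ UniformSpace.ball x
      (Dynamics.dynEntourage τ {p : ℝ × ℝ | dist p.1 p.2 < ε} k)) := by
    intro y hy
    have := hcov hy
    simp only [Set.mem_iUnion] at this ⊢
    obtain ⟨x, hx, hxb⟩ := this
    exact ⟨x, hx, hy, Dynamics.mem_dynEntourage.2 fun j hj => by
      have h := Dynamics.mem_dynEntourage.1 hxb j hj
      simp only [Set.mem_setOf_eq] at h ⊢
      rwa [dist_comm]⟩
  have hvol1 : volume I01 = 1 := by
    rw [I01, Real.volume_Icc]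
    norm_num
  have hWbd : ∀ x : ℝ, volume (I01 ∩ UniformSpace.ball x
      (Dynamics.dynEntourage τ {p : ℝ × ℝ | dist p.1 p.2 < ε} k)) ≤ W := by
    intro x
    refine le_trans (measure_mono (hball x)) ?_
    exact vol_dynball (one_le_pow₀ hs) hQn hmn hgap hε hεδ q hq1 _
  calc (1:ℝ≥0∞) = volume I01 := hvol1.symm
    _ ≤ volume (⋃ x ∈ t, (I01 ∩ UniformSpace.ball x
        (Dynamics.dynEntourage τ {p : ℝ × ℝ | dist p.1 p.2 < ε} k))) := measure_mono hsubU
    _ ≤ ∑ x ∈ t, volume (I01 ∩ UniformSpace.ball x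
        (Dynamics.dynEntourage τ {p : ℝ × ℝ | dist p.1 p.2 < ε} k)) :=
        measure_biUnion_finset_le t _
    _ ≤ ∑ _x ∈ t, W := Finset.sum_le_sum (fun x _ => hWbd x)
    _ = (t.card : ℝ≥0∞) * W := by rw [Finset.sum_const, nsmul_eq_mul]


lemma entropy_lower {τ : ℝ → ℝ} (hm : Set.MapsTo τ I01 I01)
    {s : ℝ} (hs : 1 ≤ s) (hQ : ∃ P, Q τ s P) :
    (Real.log s : EReal) ≤ Dynamics.coverEntropy τ I01 := by
  have hI : I01.Nonempty := ⟨0, by constructor <;> norm_num⟩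
  by_contra hcon
  push_neg at hcon
  obtain ⟨r, hr1, hr2⟩ := EReal.exists_between_coe_real hcon
  rw [EReal.coe_lt_coe_iff] at hr2
  rcases le_or_gt r 0 with hr0 | hr0
  · have h1 : (r : EReal) ≤ 0 := by exact_mod_cast hr0
    exact absurd (le_trans h1 (Dynamics.coverEntropy_nonneg τ hI)) (not_le.2 hr1)
  -- now 0 < r < log s
  apply absurd hr1
  push_neg
  have hlogr : 0 < Real.log s - r := by linarith
  set n : ℕ := max 1 ⌈(Real.log 2 + 1) / (Real.log s - r)⌉₊ with hn
  have hn1 : 1 ≤ n := le_max_left _ _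
  have hA : Real.log 2 + 1 ≤ (n : ℝ) * (Real.log s - r) := by
    have h1 : (Real.log 2 + 1) / (Real.log s - r) ≤ (⌈(Real.log 2 + 1) / (Real.log s - r)⌉₊ : ℝ) :=
      Nat.le_ceil _
    have h2 : (⌈(Real.log 2 + 1) / (Real.log s - r)⌉₊ : ℝ) ≤ (n : ℝ) := by
      exact_mod_cast Nat.cast_le.2 (le_max_right _ _)
    rw [div_le_iff₀ hlogr] at h1
    nlinarith [h1, h2, hlogr]
  obtain ⟨Pn, hQn⟩ := Q_iterate hs hQ hm n hn1
  obtain ⟨δ, hδpos, hgap⟩ := exists_mingap hQn.zero_mem hQn.one_mem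
  set ε : ℝ := δ / 3 with hεdef
  have hε : 0 < ε := by positivity
  have hεδ : 2 * ε < δ := by rw [hεdef]; linarith
  set U : Set (ℝ × ℝ) := {p : ℝ × ℝ | dist p.1 p.2 < ε} with hU
  have hUuni : U ∈ uniformity ℝ := Metric.dist_mem_uniformity hε
  refine le_trans ?_ (Dynamics.coverEntropyEntourage_le_coverEntropy τ I01 hUuni)
  show (r : EReal) ≤ Filter.atTop.limsup fun k : ℕ =>
    ENNReal.log (Dynamics.coverMincard τ I01 U k) / (k : EReal)
  set B : ℝ := Real.log (2 * ε) with hB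
  set C : ℝ := Real.log (2 / s ^ n) with hC
  have hsn : (1:ℝ) ≤ s ^ n := one_le_pow₀ hs
  have hCval : C = Real.log 2 - (n:ℝ) * Real.log s := by
    rw [hC, Real.log_div two_ne_zero (by positivity), Real.log_pow]
  have hCbd : (n:ℝ) * r + 1 ≤ -C := by
    rw [hCval]
    have : (n:ℝ) * (Real.log s - r) = (n:ℝ) * Real.log s - (n:ℝ) * r := by ring
    linarith [hA]
  set M : ℕ := ⌈1 + 2 * r * (n:ℝ) + B⌉₊ + 1 with hM
  refine Filter.le_limsup_of_frequently_le (Filter.Eventually.frequently ?_) (by isBoundedDefault)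
  rw [Filter.eventually_atTop]
  refine ⟨n * M, fun k hk => ?_⟩
  set q : ℕ := k / n with hq
  have hnpos : 0 < n := hn1
  have hqM : M ≤ q := (Nat.le_div_iff_mul_le hnpos).2 (by rw [mul_comm]; exact hk)
  have hq1 : 1 ≤ q := le_trans (by omega) hqM
  have hkn : n ≤ k := le_trans (by nlinarith [hn1, (by omega : 1 ≤ M)]) hk
  have hkpos : 0 < k := lt_of_lt_of_le hnpos hkn
  set W : ℝ≥0∞ := ENNReal.ofReal (2*ε) * ENNReal.ofReal (2/s^n) ^ (q - 1) with hW
  have h2ε : (0:ℝ) < 2 * ε := by linarith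
  have h2S : (0:ℝ) < 2 / s ^ n := by positivity
  have hW0 : W ≠ 0 := by
    apply mul_ne_zero
    · exact (ENNReal.ofReal_pos.2 h2ε).ne'
    · exact pow_ne_zero _ (ENNReal.ofReal_pos.2 h2S).ne'
  have hWtop : W ≠ ⊤ :=
    ENNReal.mul_ne_top ENNReal.ofReal_ne_top (ENNReal.pow_ne_top ENNReal.ofReal_ne_top)
  -- step 1 : W⁻¹ ≤ coverMincard
  have hstep1 : W⁻¹ ≤ ((Dynamics.coverMincard τ I01 U k : ℕ∞) : ℝ≥0∞) := by
    rcases eq_top_or_lt_top (Dynamics.coverMincard τ I01 U k) with htop | hlt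
    · rw [htop]; simp
    · obtain ⟨t, hcovt, hcard⟩ := (Dynamics.coverMincard_finite_iff τ I01 U k).1 hlt
      have h1 : 1 ≤ (t.card : ℝ≥0∞) * W :=
        cover_card_lower hn1 hs hQn (hm.iterate n) hgap hε hεδ hkn hcovt
      have h2 : W⁻¹ ≤ (t.card : ℝ≥0∞) := by
        calc W⁻¹ = 1 * W⁻¹ := (one_mul _).symm
          _ ≤ ((t.card : ℝ≥0∞) * W) * W⁻¹ := mul_le_mul_left h1 _
          _ = (t.card : ℝ≥0∞) * (W * W⁻¹) := mul_assoc _ _ _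
          _ = (t.card : ℝ≥0∞) := by rw [ENNReal.mul_inv_cancel hW0 hWtop, mul_one]
      rw [← hcard]
      exact_mod_cast h2
  -- step 2 : pass to logs
  have hstep2 : ENNReal.log W⁻¹ ≤ ENNReal.log (Dynamics.coverMincard τ I01 U k) :=
    ENNReal.log_monotone hstep1
  have hQ1 : ((q - 1 : ℕ) : ℝ) = (q : ℝ) - 1 := by
    rw [Nat.cast_sub hq1, Nat.cast_one]
  have hlogW : ENNReal.log W⁻¹ = ((-(B + ((q:ℝ) - 1) * C) : ℝ) : EReal) := by
    rw [ENNReal.log_inv, hW, ENNReal.log_mul_add, ENNReal.log_pow,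
      ENNReal.log_ofReal_of_pos h2ε, ENNReal.log_ofReal_of_pos h2S]
    rw [← EReal.coe_coe_eq_natCast (q-1), hQ1]
    rw [← EReal.coe_mul, ← EReal.coe_add, ← EReal.coe_neg]
  -- step 3 : real estimate
  have hreal : r * (k:ℝ) ≤ -(B + ((q:ℝ) - 1) * C) := by
    have hkq : (k:ℝ) < ((q:ℝ) + 1) * (n:ℝ) := by
      have h1 : k < (q + 1) * n := (Nat.div_lt_iff_lt_mul hnpos).1 (Nat.lt_succ_self q)
      exact_mod_cast h1
    have hqval : 1 + 2 * r * (n:ℝ) + B ≤ (q:ℝ) - 1 := by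
      have h1 : (1 + 2 * r * (n:ℝ) + B) ≤ (⌈1 + 2 * r * (n:ℝ) + B⌉₊ : ℝ) := Nat.le_ceil _
      have h2 : ((⌈1 + 2 * r * (n:ℝ) + B⌉₊ + 1 : ℕ) : ℝ) ≤ (q:ℝ) := Nat.cast_le.2 hqM
      push_cast at h2
      linarith
    have hq1' : (1:ℝ) ≤ (q:ℝ) := by exact_mod_cast hq1
    have e2 : ((q:ℝ) - 1) * ((n:ℝ) * r + 1) ≤ ((q:ℝ) - 1) * (-C) :=
      mul_le_mul_of_nonneg_left hCbd (by linarith)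
    nlinarith [mul_le_mul_of_nonneg_left hkq.le hr0.le]
  -- step 4 : conclude in EReal
  have hdiv : ((r : ℝ) : EReal) ≤ ENNReal.log W⁻¹ / (k : EReal) := by
    rw [hlogW]
    have hkE : ((k : ℕ) : EReal) = (((k:ℕ) : ℝ) : EReal) := (EReal.coe_coe_eq_natCast k).symm
    rw [hkE, ← EReal.coe_div, EReal.coe_le_coe_iff]
    rw [le_div_iff₀ (by exact_mod_cast hkpos)]
    linarith [hreal]
  refine le_trans hdiv ?_
  refine EReal.monotone_div_right_of_nonneg ?_ hstep2
  rw [← EReal.coe_coe_eq_natCast]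
  exact EReal.coe_nonneg.2 (Nat.cast_nonneg k)


lemma aff_closure {τ : ℝ → ℝ} {a c d e : ℝ} (hcont : ContinuousOn τ I01)
    (hcd : c < d) (hc : c ∈ I01) (hd : d ∈ I01)
    (he : ∀ x ∈ Set.Ioo c d, τ x = a * x + e) :
    ∀ x ∈ Set.Icc c d, τ x = a * x + e := by
  have hIoosub : Set.Ioo c d ⊆ I01 := fun z hz => ⟨le_trans hc.1 hz.1.le, le_trans hz.2.le hd.2⟩
  have hIccsub : Set.Icc c d ⊆ I01 := fun z hz => ⟨le_trans hc.1 hz.1, le_trans hz.2 hd.2⟩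
  intro x hx
  have key : ∀ b ∈ I01, b ∈ closure (Set.Ioo c d) → τ b = a * b + e := by
    intro b hb hbc
    have h1 : Filter.Tendsto τ (nhdsWithin b (Set.Ioo c d)) (nhds (τ b)) :=
      ((hcont b hb).mono hIoosub).tendsto
    have h2 : Filter.Tendsto (fun x => a * x + e) (nhdsWithin b (Set.Ioo c d))
        (nhds (a * b + e)) :=
      (Continuous.tendsto (by continuity) b).mono_left nhdsWithin_le_nhds
    have hev : (fun x => a * x + e) =ᶠ[nhdsWithin b (Set.Ioo c d)] τ :=
      eventually_mem_nhdsWithin.mono (fun x hx => (he x hx).symm)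
    haveI : (nhdsWithin b (Set.Ioo c d)).NeBot := mem_closure_iff_nhdsWithin_neBot.1 hbc
    exact tendsto_nhds_unique h1 (h2.congr' hev)
  have hcl : Set.Icc c d ⊆ closure (Set.Ioo c d) := by
    rw [closure_Ioo (ne_of_lt hcd)]
  exact key x (hIccsub hx) (hcl hx)

lemma lip_nogap {τ : ℝ → ℝ} {s : ℝ} {P : Finset ℝ} (hs : 1 ≤ s) (hQ : Q τ s P)
    (hcont : ContinuousOn τ I01) {x y : ℝ} (hx : x ∈ I01) (hy : y ∈ I01) (hxy : x ≤ y)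
    (hno : ∀ p ∈ P, p ∉ Set.Ioo x y) :
    |τ x - τ y| ≤ s * (y - x) := by
  rcases eq_or_lt_of_le hxy with rfl | hlt
  · simp
  have hne : (x + y) / 2 ∈ Set.Ioo x y := ⟨by linarith, by linarith⟩
  have hsub : Set.Ioo x y ⊆ I01 := fun z hz => ⟨le_trans hx.1 hz.1.le, le_trans hz.2.le hy.2⟩
  obtain ⟨c, hc, d, hd, hcd, hTsub, hnone⟩ := gap_subset hQ.zero_mem hQ.one_mem hsub
    (fun p hp hpm => hno p hp hpm) Set.ordConnected_Ioo hne
  obtain ⟨η, hη, e, he⟩ := hQ.aff c hc d hd hcd hnone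
  have hsubIcc : Set.Icc x y ⊆ Set.Icc c d := by
    obtain ⟨h1, h2⟩ := (Set.Ioo_subset_Ioo_iff hlt).1 hTsub
    exact Set.Icc_subset_Icc h1 h2
  have haffc := aff_closure hcont hcd (hQ.subset hc) (hQ.subset hd) he
  have h1 : τ x = η * s * x + e := haffc x (hsubIcc ⟨le_rfl, hxy⟩)
  have h2 : τ y = η * s * y + e := haffc y (hsubIcc ⟨hxy, le_rfl⟩)
  rw [h1, h2]
  have : η * s * x + e - (η * s * y + e) = η * (s * (x - y)) := by ring
  rw [this, abs_mul]
  rcases hη with rfl | rfl <;> simp [abs_mul, abs_of_nonneg (by linarith : (0:ℝ) ≤ s),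
    abs_of_nonpos (by linarith : x - y ≤ 0)] <;> ring_nf <;> linarith

lemma lipschitz_of_Q {τ : ℝ → ℝ} {s : ℝ} {P : Finset ℝ} (hs : 1 ≤ s) (hQ : Q τ s P)
    (hcont : ContinuousOn τ I01) :
    ∀ x ∈ I01, ∀ y ∈ I01, x ≤ y → |τ x - τ y| ≤ s * (y - x) := by
  suffices h : ∀ m : ℕ, ∀ x ∈ I01, ∀ y ∈ I01, x ≤ y →
      (P.filter (fun p => x < p ∧ p < y)).card ≤ m → |τ x - τ y| ≤ s * (y - x) by
    intro x hx y hy hxy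
    exact h (P.filter (fun p => x < p ∧ p < y)).card x hx y hy hxy le_rfl
  intro m
  induction m with
  | zero =>
    intro x hx y hy hxy hcard
    apply lip_nogap hs hQ hcont hx hy hxy
    intro p hp hpm
    have : p ∈ P.filter (fun p => x < p ∧ p < y) := Finset.mem_filter.2 ⟨hp, hpm.1, hpm.2⟩
    rw [Nat.le_zero, Finset.card_eq_zero] at hcard
    rw [hcard] at this
    exact absurd this (Finset.notMem_empty p)
  | succ m ih =>
    intro x hx y hy hxy hcard
    classical
    by_cases hemp : (P.filter (fun p => x < p ∧ p < y)).Nonempty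
    · set F := P.filter (fun p => x < p ∧ p < y) with hF
      set p := F.min' hemp with hp
      have hpF : p ∈ F := F.min'_mem hemp
      have hpP : p ∈ P := (Finset.mem_filter.1 hpF).1
      have hxp : x < p := (Finset.mem_filter.1 hpF).2.1
      have hpy : p < y := (Finset.mem_filter.1 hpF).2.2
      have hpI : p ∈ I01 := hQ.subset hpP
      have hL : |τ x - τ p| ≤ s * (p - x) := by
        apply lip_nogap hs hQ hcont hx hpI hxp.le
        intro q hq hqm
        have hqF : q ∈ F := Finset.mem_filter.2 ⟨hq, hqm.1, lt_trans hqm.2 hpy⟩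
        exact absurd (F.min'_le q hqF) (not_le.2 hqm.2)
      have hR : |τ p - τ y| ≤ s * (y - p) := by
        apply ih p hpI y hy hpy.le
        have hsub2 : P.filter (fun q => p < q ∧ q < y) ⊆ F.erase p := by
          intro q hq
          rw [Finset.mem_filter] at hq
          refine Finset.mem_erase.2 ⟨ne_of_gt hq.2.1, ?_⟩
          exact Finset.mem_filter.2 ⟨hq.1, lt_trans hxp hq.2.1, hq.2.2⟩
        calc (P.filter (fun q => p < q ∧ q < y)).card ≤ (F.erase p).card :=
              Finset.card_le_card hsub2
          _ = F.card - 1 := Finset.card_erase_of_mem hpF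
          _ ≤ m := by omega
      calc |τ x - τ y| ≤ |τ x - τ p| + |τ p - τ y| := abs_sub_le _ _ _
        _ ≤ s * (p - x) + s * (y - p) := add_le_add hL hR
        _ = s * (y - x) := by ring
    · apply lip_nogap hs hQ hcont hx hy hxy
      intro q hq hqm
      exact hemp ⟨q, Finset.mem_filter.2 ⟨hq, hqm.1, hqm.2⟩⟩


lemma entropy_upper {τ : ℝ → ℝ} (hm : Set.MapsTo τ I01 I01)
    {s : ℝ} (hs : 1 ≤ s)
    (hlip : ∀ x ∈ I01, ∀ y ∈ I01, x ≤ y → |τ x - τ y| ≤ s * (y - x)) :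
    Dynamics.coverEntropy τ I01 ≤ (Real.log s : EReal) := by
  have hspos : (0:ℝ) < s := by linarith
  -- iterated Lipschitz bound
  have hlipk : ∀ k : ℕ, ∀ x ∈ I01, ∀ y ∈ I01, |τ^[k] x - τ^[k] y| ≤ s ^ k * |x - y| := by
    intro k
    induction k with
    | zero => intro x hx y hy; simp
    | succ k ih =>
      intro x hx y hy
      have h1 : |τ^[k] (τ x) - τ^[k] (τ y)| ≤ s ^ k * |τ x - τ y| := ih (τ x) (hm hx) (τ y) (hm hy)
      have h2 : |τ x - τ y| ≤ s * |x - y| := by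
        rcases le_total x y with h | h
        · have h3 := hlip x hx y hy h
          rwa [abs_sub_comm x y, abs_of_nonneg (sub_nonneg.2 h)]
        · have h3 := hlip y hy x hx h
          rwa [abs_of_nonneg (sub_nonneg.2 h), abs_sub_comm (τ x) (τ y)]
      calc |τ^[k+1] x - τ^[k+1] y| = |τ^[k] (τ x) - τ^[k] (τ y)| := by
            rw [Function.iterate_succ_apply, Function.iterate_succ_apply]
        _ ≤ s ^ k * |τ x - τ y| := h1
        _ ≤ s ^ k * (s * |x - y|) := by
            have := one_le_pow₀ (n := k) hs
            exact mul_le_mul_of_nonneg_left h2 (by positivity)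
        _ = s ^ (k+1) * |x - y| := by ring
  show (⨆ U ∈ uniformity ℝ, Dynamics.coverEntropyEntourage τ I01 U) ≤ (Real.log s : EReal)
  refine iSup₂_le fun U hU => ?_
  obtain ⟨ε, hε, hεU⟩ := Metric.mem_uniformity_dist.1 hU
  have hmono : Dynamics.coverEntropyEntourage τ I01 U ≤
      Dynamics.coverEntropyEntourage τ I01 {p : ℝ × ℝ | dist p.1 p.2 < ε} :=
    Dynamics.coverEntropyEntourage_antitone τ I01 (fun p hp => hεU hp)
  refine le_trans hmono ?_
  set V : Set (ℝ × ℝ) := {p : ℝ × ℝ | dist p.1 p.2 < ε} with hV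
  -- cover cardinality bound for each k
  have hcard : ∀ k : ℕ, (Dynamics.coverMincard τ I01 V k : ℕ∞) ≤ (⌈2 * s ^ k / ε⌉₊ + 1 : ℕ) := by
    intro k
    set γ : ℝ := ε / (2 * s ^ k) with hγ
    have hsk : (0:ℝ) < s ^ k := by positivity
    have hγpos : 0 < γ := by positivity
    set M : ℕ := ⌈2 * s ^ k / ε⌉₊ with hM
    set t : Finset ℝ := (Finset.range (M + 1)).image (fun i : ℕ => (i : ℝ) * γ) with ht
    have hcov : Dynamics.IsDynCoverOf τ I01 V k t := by
      intro y hy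
      set i : ℕ := ⌊y / γ⌋₊ with hi
      have hyγ : 0 ≤ y / γ := div_nonneg hy.1 hγpos.le
      have hiM : i ≤ M := by
        have h1 : y / γ ≤ 2 * s ^ k / ε := by
          have h2 : y / γ ≤ 1 / γ := by gcongr; exact hy.2
          rwa [hγ, one_div_div] at h2
        calc i ≤ ⌊2 * s ^ k / ε⌋₊ := Nat.floor_mono h1
          _ ≤ M := Nat.floor_le_ceil _
      have hxI : (i : ℝ) * γ ∈ I01 := by
        constructor
        · positivity
        · calc (i:ℝ) * γ ≤ (y / γ) * γ := mul_le_mul_of_nonneg_right (Nat.floor_le hyγ) hγpos.le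
            _ = y := div_mul_cancel₀ y hγpos.ne'
            _ ≤ 1 := hy.2
      have hclose : |y - (i:ℝ) * γ| < γ := by
        have h1 : (i:ℝ) * γ ≤ y := by
          calc (i:ℝ) * γ ≤ (y / γ) * γ := mul_le_mul_of_nonneg_right (Nat.floor_le hyγ) hγpos.le
            _ = y := div_mul_cancel₀ y hγpos.ne'
        have h2 : y < ((i:ℝ) + 1) * γ := by
          have := Nat.lt_floor_add_one (y / γ)
          calc y = (y / γ) * γ := (div_mul_cancel₀ y hγpos.ne').symm
            _ < ((i:ℝ) + 1) * γ := by
              exact mul_lt_mul_of_pos_right this hγpos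
        rw [abs_of_nonneg (by linarith)]
        linarith
      suffices hsuf : ∃ x ∈ (t : Set ℝ), y ∈ UniformSpace.ball x (Dynamics.dynEntourage τ V k) by
        obtain ⟨x, hx, hxb⟩ := hsuf
        exact ⟨x, hx, Dynamics.mem_dynEntourage.2 fun j hj => by
          have h := Dynamics.mem_dynEntourage.1 hxb j hj
          simp only [hV, Set.mem_setOf_eq] at h ⊢
          rwa [dist_comm]⟩
      refine ⟨(i:ℝ) * γ, by simp only [Finset.mem_coe, ht, Finset.mem_image]; exact ⟨i, Finset.mem_range.2 (by omega), rfl⟩, ?_⟩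
      rw [Dynamics.mem_ball_dynEntourage]
      intro j hj
      have hb : |τ^[j] y - τ^[j] ((i:ℝ) * γ)| ≤ s ^ j * |y - (i:ℝ) * γ| := hlipk j y hy _ hxI
      have hsj : s ^ j ≤ s ^ k := pow_le_pow_right₀ hs hj.le
      have : s ^ j * |y - (i:ℝ) * γ| < s ^ k * γ := by
        apply lt_of_le_of_lt (mul_le_mul_of_nonneg_right hsj (abs_nonneg _))
        exact mul_lt_mul_of_pos_left hclose hsk
      have hεhalf : s ^ k * γ ≤ ε / 2 := by
        rw [hγ]
        rw [show s ^ k * (ε / (2 * s ^ k)) = ε / 2 * (s ^ k / s ^ k) by ring,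
          div_self (by positivity : s ^ k ≠ 0), mul_one]
      show τ^[j] y ∈ UniformSpace.ball (τ^[j] ((i:ℝ) * γ)) V
      simp only [UniformSpace.ball, Set.mem_preimage, hV, Set.mem_setOf_eq]
      rw [Real.dist_eq, abs_sub_comm]
      calc |τ^[j] y - τ^[j] ((i:ℝ)*γ)| ≤ s ^ j * |y - (i:ℝ)*γ| := hb
        _ < s ^ k * γ := this
        _ ≤ ε / 2 := hεhalf
        _ < ε := by linarith
    calc Dynamics.coverMincard τ I01 V k ≤ (t.card : ℕ∞) := hcov.coverMincard_le_card
      _ ≤ ((M + 1 : ℕ) : ℕ∞) := by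
        have h1 : t.card ≤ M + 1 := by
          rw [ht]
          exact le_trans Finset.card_image_le (le_of_eq (Finset.card_range (M+1)))
        exact_mod_cast Nat.cast_le.2 h1
  -- now the limsup estimate
  refine le_of_forall_gt_imp_ge_of_dense fun c hc => ?_
  obtain ⟨r, hr1, hr2⟩ := EReal.exists_between_coe_real hc
  rw [EReal.coe_lt_coe_iff] at hr1
  refine le_trans ?_ hr2.le
  show Filter.atTop.limsup
      (fun k : ℕ => ENNReal.log (Dynamics.coverMincard τ I01 V k) / (k : EReal)) ≤ (r : EReal)
  have hrs : 0 < r - Real.log s := by linarith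
  set D : ℝ := Real.log (2 / ε + 2) with hD
  refine Filter.limsup_le_of_le (by isBoundedDefault) ?_
  rw [Filter.eventually_atTop]
  refine ⟨max 1 ⌈D / (r - Real.log s)⌉₊, fun k hk => ?_⟩
  have hk1 : 1 ≤ k := le_trans (le_max_left _ _) hk
  have hkD : D ≤ (k:ℝ) * (r - Real.log s) := by
    have h1 : D / (r - Real.log s) ≤ (⌈D / (r - Real.log s)⌉₊ : ℝ) := Nat.le_ceil _
    have h2 : ((⌈D / (r - Real.log s)⌉₊ : ℕ) : ℝ) ≤ (k : ℝ) :=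
      Nat.cast_le.2 (le_trans (le_max_right _ _) hk)
    rw [div_le_iff₀ hrs] at h1
    nlinarith
  set N : ℕ := ⌈2 * s ^ k / ε⌉₊ + 1 with hN
  have hNpos : (0:ℝ) < (N:ℝ) := by positivity
  have hlog1 : ENNReal.log (Dynamics.coverMincard τ I01 V k) ≤
      ENNReal.log ((N : ℕ) : ℝ≥0∞) := by
    apply ENNReal.log_monotone
    have := hcard k
    exact_mod_cast ENat.toENNReal_le.2 this
  have hlog2 : ENNReal.log ((N : ℕ) : ℝ≥0∞) = ((Real.log (N:ℝ) : ℝ) : EReal) := by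
    rw [← ENNReal.ofReal_natCast, ENNReal.log_ofReal_of_pos hNpos]
  have hsk1 : (1:ℝ) ≤ s ^ k := one_le_pow₀ hs
  have hMreal : (N:ℝ) ≤ (2/ε + 2) * s^k := by
    rw [hN]
    push_cast
    have h1 : (⌈2 * s ^ k / ε⌉₊ : ℝ) < 2 * s ^ k / ε + 1 :=
      Nat.ceil_lt_add_one (by positivity)
    have h2 : 2 * s ^ k / ε = (2 / ε) * s ^ k := by ring
    nlinarith
  have hlogreal : Real.log (N:ℝ) ≤ D + (k:ℝ) * Real.log s := by
    calc Real.log (N:ℝ) ≤ Real.log ((2/ε + 2) * s^k) :=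
          Real.log_le_log hNpos hMreal
      _ = D + (k:ℝ) * Real.log s := by
          rw [Real.log_mul (by positivity) (by positivity), Real.log_pow, hD]
  calc ENNReal.log (Dynamics.coverMincard τ I01 V k) / (k : EReal) ≤
        ((Real.log (N:ℝ) : ℝ) : EReal) / (k : EReal) := by
        refine EReal.monotone_div_right_of_nonneg ?_ (le_trans hlog1 (le_of_eq hlog2))
        rw [← EReal.coe_coe_eq_natCast]
        exact EReal.coe_nonneg.2 (Nat.cast_nonneg k)
    _ = ((Real.log (N:ℝ) / (k:ℝ) : ℝ) : EReal) := by
        rw [← EReal.coe_coe_eq_natCast, ← EReal.coe_div]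
    _ ≤ (r : EReal) := by
        rw [EReal.coe_le_coe_iff]
        rw [div_le_iff₀ (by exact_mod_cast hk1 : (0:ℝ) < (k:ℝ))]
        nlinarith

end Stmt1Aux

/-- A continuous uniformly piecewise linear map of `[0,1]` with slopes `±s`,
`s ≥ 1`, has topological entropy `log s`. -/


theorem stmt1 (τ : ℝ → ℝ) (hmaps : Set.MapsTo τ I01 I01) (hc : ContinuousOn τ I01)
    (s : ℝ) (hs : 1 ≤ s) (hupl : UniformlyPiecewiseLinear τ s) :
    Dynamics.coverEntropy τ I01 = (Real.log s : EReal) := by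
  obtain ⟨P, hQ⟩ := Stmt1Aux.Q_of_UPL hupl
  refine le_antisymm ?_ (Stmt1Aux.entropy_lower hmaps hs ⟨P, hQ⟩)
  exact Stmt1Aux.entropy_upper hmaps hs (Stmt1Aux.lipschitz_of_Q hs hQ hc)
end
end

section
/- If τ : [0,1] → [0,1] is continuous, piecewise monotonic, topologically mixing, and not essentially injective, then τ is topologically exact. -/
open Set MeasureTheory

noncomputable section

section AuxStmt7

variable {f : ℝ → ℝ}

private lemma I01_compact : IsCompact I01 := isCompact_Icc

private lemma contOn_iter (hm : Set.MapsTo f I01 I01) (hc : ContinuousOn f I01) :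
    ∀ n : ℕ, ContinuousOn (f^[n]) I01 := by
  intro n
  induction n with
  | zero => simpa using continuousOn_id
  | succ n ih =>
    rw [Function.iterate_succ']
    exact hc.comp ih (hm.iterate n)

private lemma no_trap (hmix : MixingOn f I01) {j : ℕ} (hj : 0 < j)
    {S U V : Set ℝ} (hU : IsOpen U) (hV : IsOpen V)
    (hUne : (U ∩ I01).Nonempty) (hVne : (V ∩ I01).Nonempty)
    (hUS : U ∩ I01 ⊆ S) (hinv : Set.MapsTo (f^[j]) S S)
    (hdisj : ∀ x ∈ S, x ∉ V) : False := by
  obtain ⟨N, hN⟩ := hmix U V hU hV hUne hVne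
  obtain ⟨y, hy1, hy2⟩ := hN (j * N) (Nat.le_mul_of_pos_left N hj)
  have key : ∀ k : ℕ, (f^[j])^[k] '' (U ∩ I01) ⊆ S := by
    intro k
    induction k with
    | zero => simpa using hUS
    | succ k ih =>
      rw [Function.iterate_succ', Set.image_comp]
      exact (Set.image_mono ih).trans hinv.image_subset
  rw [Function.iterate_mul] at hy1
  exact hdisj y (key N hy1) hy2.1

private lemma hits_top (hm : Set.MapsTo f I01 I01) (hc : ContinuousOn f I01)
    (hmix : MixingOn f I01) : ∃ x ∈ I01, f x = 1 := by
  by_contra h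
  push_neg at h
  obtain ⟨x0, hx0, hmax⟩ := I01_compact.exists_isMaxOn ⟨0, Set.left_mem_Icc.2 zero_le_one⟩ hc
  have hM : f x0 < 1 := lt_of_le_of_ne (hm hx0).2 (h x0 hx0)
  obtain ⟨N, hN⟩ := hmix (Set.Ioo 0 1) (Set.Ioo (f x0) 2) isOpen_Ioo isOpen_Ioo
    ⟨1/2, ⟨by norm_num, by norm_num⟩, by norm_num [I01], by norm_num⟩
    ⟨1, ⟨hM, by norm_num⟩, zero_le_one, le_refl 1⟩
  obtain ⟨y, hy1, hy2⟩ := hN (N + 1) (Nat.le_succ N)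
  obtain ⟨z, hz, rfl⟩ := hy1
  have hle : f^[N + 1] z ≤ f x0 := by
    rw [Function.iterate_succ_apply']
    exact hmax (hm.iterate N hz.2)
  exact absurd hy2.1.1 (not_lt.2 hle)

private lemma hits_bot (hm : Set.MapsTo f I01 I01) (hc : ContinuousOn f I01)
    (hmix : MixingOn f I01) : ∃ x ∈ I01, f x = 0 := by
  by_contra h
  push_neg at h
  obtain ⟨x0, hx0, hmin⟩ := I01_compact.exists_isMinOn ⟨0, Set.left_mem_Icc.2 zero_le_one⟩ hc
  have hM : 0 < f x0 := (hm hx0).1.lt_of_ne (Ne.symm (h x0 hx0))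
  obtain ⟨N, hN⟩ := hmix (Set.Ioo 0 1) (Set.Ioo (-1) (f x0)) isOpen_Ioo isOpen_Ioo
    ⟨1/2, ⟨by norm_num, by norm_num⟩, by norm_num [I01], by norm_num⟩
    ⟨0, ⟨by norm_num, hM⟩, le_refl 0, zero_le_one⟩
  obtain ⟨y, hy1, hy2⟩ := hN (N + 1) (Nat.le_succ N)
  obtain ⟨z, hz, rfl⟩ := hy1
  have hle : f x0 ≤ f^[N + 1] z := by
    rw [Function.iterate_succ_apply']
    exact hmin (hm.iterate N hz.2)
  exact absurd hy2.1.2 (not_lt.2 hle)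

private lemma strictMono_top {h : ℝ → ℝ} (hcont : ContinuousOn h I01)
    (hK : Set.MapsTo h I01 I01) (h1 : h 1 = 1)
    (hne : ∀ x ∈ Set.Ico (0:ℝ) 1, h x ≠ 1)
    {w : ℝ} (hw0 : 0 ≤ w) (hw1 : w < 1)
    (hmono : StrictMonoOn h (Set.Ioo w 1) ∨ StrictAntiOn h (Set.Ioo w 1)) :
    StrictMonoOn h (Set.Ioo w 1) := by
  rcases hmono with hm | ha
  · exact hm
  exfalso
  set x := (w + 1) / 2 with hxdef
  have hxI : x ∈ Set.Ioo w 1 := ⟨by rw [hxdef]; linarith, by rw [hxdef]; linarith⟩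
  have hx0 : 0 ≤ x := by rw [hxdef]; linarith
  have hxK : x ∈ I01 := ⟨hx0, hxI.2.le⟩
  have hhx : h x < 1 := lt_of_le_of_ne (hK hxK).2 (hne x ⟨hx0, hxI.2⟩)
  have hivt := intermediate_value_Icc hxI.2.le (hcont.mono (Set.Icc_subset_Icc hx0 le_rfl))
  have hcmem : (h x + 1) / 2 ∈ Set.Icc (h x) (h 1) := by
    rw [h1]; exact ⟨by linarith, by linarith⟩
  obtain ⟨ξ, hξmem, hξ⟩ := hivt hcmem
  have hξ1 : ξ ≠ 1 := by
    rintro rfl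
    rw [h1] at hξ
    linarith
  have hξx : x ≠ ξ := by
    rintro rfl
    linarith
  have hlt : x < ξ := lt_of_le_of_ne hξmem.1 hξx
  have : h ξ < h x := ha hxI ⟨hxI.1.trans hlt, lt_of_le_of_ne hξmem.2 hξ1⟩ hlt
  linarith

private lemma strictMono_bot {h : ℝ → ℝ} (hcont : ContinuousOn h I01)
    (hK : Set.MapsTo h I01 I01) (h0 : h 0 = 0)
    (hne : ∀ x ∈ Set.Ioc (0:ℝ) 1, h x ≠ 0)
    {w : ℝ} (hw0 : 0 < w) (hw1 : w ≤ 1)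
    (hmono : StrictMonoOn h (Set.Ioo 0 w) ∨ StrictAntiOn h (Set.Ioo 0 w)) :
    StrictMonoOn h (Set.Ioo 0 w) := by
  rcases hmono with hm | ha
  · exact hm
  exfalso
  set x := w / 2 with hxdef
  have hxI : x ∈ Set.Ioo 0 w := ⟨by rw [hxdef]; linarith, by rw [hxdef]; linarith⟩
  have hx1 : x ≤ 1 := by rw [hxdef]; linarith
  have hxK : x ∈ I01 := ⟨hxI.1.le, hx1⟩
  have hhx : 0 < h x := (hK hxK).1.lt_of_ne (Ne.symm (hne x ⟨hxI.1, hx1⟩))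
  have hivt := intermediate_value_Icc hxI.1.le (hcont.mono (Set.Icc_subset_Icc le_rfl hx1))
  have hcmem : h x / 2 ∈ Set.Icc (h 0) (h x) := by
    rw [h0]; exact ⟨by linarith, by linarith⟩
  obtain ⟨ξ, hξmem, hξ⟩ := hivt hcmem
  have hξ0 : ξ ≠ 0 := by
    rintro rfl
    rw [h0] at hξ
    linarith
  have hξx : ξ ≠ x := by
    rintro rfl
    linarith
  have hlt : ξ < x := lt_of_le_of_ne hξmem.2 hξx
  have : h x < h ξ := ha ⟨lt_of_le_of_ne hξmem.1 (Ne.symm hξ0), hlt.trans hxI.2⟩ hxI hlt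
  linarith

private lemma trap_top (hm : Set.MapsTo f I01 I01) (hc : ContinuousOn f I01)
    (hmix : MixingOn f I01) {j : ℕ} (hj : 0 < j)
    (h1 : f^[j] 1 = 1) (hne : ∀ x ∈ Set.Ico (0:ℝ) 1, f^[j] x ≠ 1)
    {w : ℝ} (hw0 : 0 ≤ w) (hw1 : w < 1)
    (hmono : StrictMonoOn (f^[j]) (Set.Ioo w 1) ∨ StrictAntiOn (f^[j]) (Set.Ioo w 1)) :
    False := by
  set h := f^[j] with hh
  have hK : Set.MapsTo h I01 I01 := hm.iterate j
  have hcont : ContinuousOn h I01 := contOn_iter hm hc j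
  have hmono' : StrictMonoOn h (Set.Ioo w 1) := strictMono_top hcont hK h1 hne hw0 hw1 hmono
  by_cases hz : ∃ z ∈ Set.Ioo w 1, z ≤ h z
  · obtain ⟨z, hzI, hzle⟩ := hz
    have hz0 : 0 < z := lt_of_le_of_lt hw0 hzI.1
    refine no_trap hmix hj (S := Set.Icc z 1) (U := Set.Ioo z 2) (V := Set.Ioo (-1) z)
      isOpen_Ioo isOpen_Ioo ⟨1, ⟨hzI.2, one_lt_two⟩, zero_le_one, le_refl 1⟩
      ⟨0, ⟨by norm_num, hz0⟩, le_refl 0, zero_le_one⟩ ?_ ?_ ?_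
    · rintro x ⟨⟨hx1, _⟩, _, hx2⟩
      exact ⟨hx1.le, hx2⟩
    · intro x hx
      rcases eq_or_lt_of_le hx.2 with heq | hlt
      · rw [heq, ← hh, h1]
        exact ⟨hzI.2.le, le_refl 1⟩
      · have hxI : x ∈ Set.Ioo w 1 := ⟨lt_of_lt_of_le hzI.1 hx.1, hlt⟩
        have hxK : x ∈ I01 := ⟨le_trans hz0.le hx.1, hx.2⟩
        have hle2 : h z ≤ h x := by
          rcases eq_or_lt_of_le hx.1 with heq2 | hlt2
          · rw [heq2]
          · exact (hmono' hzI hxI hlt2).le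
        exact ⟨le_trans hzle hle2, (hK hxK).2⟩
    · intro x hx hxV
      exact absurd hx.1 (not_le.2 hxV.2)
  · push_neg at hz
    set t := (w + 1) / 2 with htdef
    have htw : w < t := by rw [htdef]; linarith
    have ht1 : t < 1 := by rw [htdef]; linarith
    have ht0 : 0 < t := lt_of_le_of_lt hw0 htw
    obtain ⟨x0, hx0, hmax⟩ := isCompact_Icc.exists_isMaxOn (s := Set.Icc (0:ℝ) t)
      ⟨0, Set.left_mem_Icc.2 ht0.le⟩
      (hcont.mono (Set.Icc_subset_Icc le_rfl ht1.le))
    have hx0K : x0 ∈ I01 := ⟨hx0.1, hx0.2.trans ht1.le⟩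
    have hM1 : h x0 < 1 :=
      lt_of_le_of_ne (hK hx0K).2 (hne x0 ⟨hx0.1, lt_of_le_of_lt hx0.2 ht1⟩)
    set β := max t (h x0) with hβdef
    have hβ1 : β < 1 := max_lt ht1 hM1
    have hβ0 : 0 < β := lt_of_lt_of_le ht0 (le_max_left _ _)
    have key : ∀ x ∈ I01, x ≤ β → h x ≤ β := by
      intro x hxK hxβ
      by_contra hgt
      push_neg at hgt
      have hxt : t < x := by
        by_contra hle
        push_neg at hle
        exact absurd (le_trans (hmax ⟨hxK.1, hle⟩) (le_max_right t (h x0))) (not_le.2 hgt)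
      have hx1 : x < 1 := lt_of_le_of_lt hxβ hβ1
      have := hz x ⟨htw.trans hxt, hx1⟩
      linarith
    refine no_trap hmix hj (S := {x | x ∈ I01 ∧ x ≤ β}) (U := Set.Ioo (-1) β)
      (V := Set.Ioo β 2) isOpen_Ioo isOpen_Ioo
      ⟨0, ⟨by norm_num, hβ0⟩, le_refl 0, zero_le_one⟩
      ⟨1, ⟨hβ1, one_lt_two⟩, zero_le_one, le_refl 1⟩ ?_ ?_ ?_
    · rintro x ⟨⟨_, hx2⟩, hxK⟩
      exact ⟨hxK, hx2.le⟩
    · rintro x ⟨hxK, hxβ⟩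
      exact ⟨hK hxK, key x hxK hxβ⟩
    · rintro x ⟨_, hxβ⟩ hxV
      exact absurd hxβ (not_le.2 hxV.1)

private lemma trap_bot (hm : Set.MapsTo f I01 I01) (hc : ContinuousOn f I01)
    (hmix : MixingOn f I01) {j : ℕ} (hj : 0 < j)
    (h0 : f^[j] 0 = 0) (hne : ∀ x ∈ Set.Ioc (0:ℝ) 1, f^[j] x ≠ 0)
    {w : ℝ} (hw0 : 0 < w) (hw1 : w ≤ 1)
    (hmono : StrictMonoOn (f^[j]) (Set.Ioo 0 w) ∨ StrictAntiOn (f^[j]) (Set.Ioo 0 w)) :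
    False := by
  set h := f^[j] with hh
  have hK : Set.MapsTo h I01 I01 := hm.iterate j
  have hcont : ContinuousOn h I01 := contOn_iter hm hc j
  have hmono' : StrictMonoOn h (Set.Ioo 0 w) := strictMono_bot hcont hK h0 hne hw0 hw1 hmono
  by_cases hz : ∃ z ∈ Set.Ioo 0 w, h z ≤ z
  · obtain ⟨z, hzI, hzle⟩ := hz
    have hz1 : z < 1 := lt_of_lt_of_le hzI.2 hw1
    refine no_trap hmix hj (S := Set.Icc 0 z) (U := Set.Ioo (-1) z) (V := Set.Ioo z 2)
      isOpen_Ioo isOpen_Ioo ⟨0, ⟨by norm_num, hzI.1⟩, le_refl 0, zero_le_one⟩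
      ⟨1, ⟨hz1, one_lt_two⟩, zero_le_one, le_refl 1⟩ ?_ ?_ ?_
    · rintro x ⟨⟨_, hx2⟩, hx1, _⟩
      exact ⟨hx1, hx2.le⟩
    · intro x hx
      rcases eq_or_lt_of_le hx.1 with heq | hlt
      · rw [← heq, ← hh, h0]
        exact ⟨le_refl 0, hzI.1.le⟩
      · have hxI : x ∈ Set.Ioo 0 w := ⟨hlt, lt_of_le_of_lt hx.2 hzI.2⟩
        have hxK : x ∈ I01 := ⟨hlt.le, hx.2.trans hz1.le⟩
        have hle2 : h x ≤ h z := by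
          rcases eq_or_lt_of_le hx.2 with heq2 | hlt2
          · rw [heq2]
          · exact (hmono' hxI hzI hlt2).le
        exact ⟨(hK hxK).1, le_trans hle2 hzle⟩
    · intro x hx hxV
      exact absurd hx.2 (not_le.2 hxV.1)
  · push_neg at hz
    set t := w / 2 with htdef
    have htw : t < w := by rw [htdef]; linarith
    have ht0 : 0 < t := by rw [htdef]; linarith
    have ht1 : t < 1 := lt_of_lt_of_le htw hw1
    obtain ⟨x0, hx0, hmin⟩ := isCompact_Icc.exists_isMinOn (s := Set.Icc t 1)
      ⟨1, Set.right_mem_Icc.2 ht1.le⟩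
      (hcont.mono (Set.Icc_subset_Icc ht0.le le_rfl))
    have hx0K : x0 ∈ I01 := ⟨ht0.le.trans hx0.1, hx0.2⟩
    have hM0 : 0 < h x0 :=
      (hK hx0K).1.lt_of_ne (Ne.symm (hne x0 ⟨lt_of_lt_of_le ht0 hx0.1, hx0.2⟩))
    set β := min t (h x0) with hβdef
    have hβ0 : 0 < β := lt_min ht0 hM0
    have hβ1 : β < 1 := lt_of_le_of_lt (min_le_left _ _) ht1
    have key : ∀ x ∈ I01, β ≤ x → β ≤ h x := by
      intro x hxK hxβ
      by_contra hgt
      push_neg at hgt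
      have hxt : x < t := by
        by_contra hle
        push_neg at hle
        exact absurd (le_trans (min_le_right t (h x0)) (hmin ⟨hle, hxK.2⟩)) (not_le.2 hgt)
      have := hz x ⟨lt_of_lt_of_le hβ0 hxβ, hxt.trans htw⟩
      linarith
    refine no_trap hmix hj (S := {x | x ∈ I01 ∧ β ≤ x}) (U := Set.Ioo β 2)
      (V := Set.Ioo (-1) β) isOpen_Ioo isOpen_Ioo
      ⟨1, ⟨hβ1, one_lt_two⟩, zero_le_one, le_refl 1⟩
      ⟨0, ⟨by norm_num, hβ0⟩, le_refl 0, zero_le_one⟩ ?_ ?_ ?_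
    · rintro x ⟨⟨hx1, _⟩, hxK⟩
      exact ⟨hxK, hx1.le⟩
    · rintro x ⟨hxK, hxβ⟩
      exact ⟨hK hxK, key x hxK hxβ⟩
    · rintro x ⟨_, hxβ⟩ hxV
      exact absurd hxβ (not_le.2 hxV.2)

private lemma cover_middle (hm : Set.MapsTo f I01 I01) (hc : ContinuousOn f I01)
    (hmix : MixingOn f I01) {u v : ℝ} (huv : u < v) (hsub : Set.Ioo u v ⊆ I01)
    {ε : ℝ} (hε : 0 < ε) :
    ∃ N : ℕ, ∀ n ≥ N, Set.Icc ε (1 - ε) ⊆ f^[n] '' Set.Ioo u v := by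
  have hA : Set.Ioo u v ∩ I01 = Set.Ioo u v := Set.inter_eq_left.2 hsub
  obtain ⟨N1, hN1⟩ := hmix (Set.Ioo u v) (Set.Ioo (-1) ε) isOpen_Ioo isOpen_Ioo
    (by rw [hA]; exact Set.nonempty_Ioo.2 huv)
    ⟨0, ⟨by norm_num, hε⟩, le_refl 0, zero_le_one⟩
  obtain ⟨N2, hN2⟩ := hmix (Set.Ioo u v) (Set.Ioo (1 - ε) 2) isOpen_Ioo isOpen_Ioo
    (by rw [hA]; exact Set.nonempty_Ioo.2 huv)
    ⟨1, ⟨by linarith, one_lt_two⟩, zero_le_one, le_refl 1⟩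
  refine ⟨max N1 N2, fun n hn => ?_⟩
  obtain ⟨y, hy, hyV⟩ := hN1 n (le_trans (le_max_left _ _) hn)
  obtain ⟨z, hzi, hzV⟩ := hN2 n (le_trans (le_max_right _ _) hn)
  rw [hA] at hy hzi
  have hord := ((isPreconnected_Ioo).image _ ((contOn_iter hm hc n).mono hsub)).ordConnected
  intro p hp
  exact hord.out hy hzi ⟨(hyV.1.2.trans_le hp.1).le, hp.2.trans hzV.1.1.le⟩

end AuxStmt7


/-- A continuous, piecewise monotonic, topologically mixing map of `[0,1]`
that is not essentially injective is topologically exact. -/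
theorem stmt7 (τ : ℝ → ℝ) (hmaps : Set.MapsTo τ I01 I01) (hc : ContinuousOn τ I01)
    (hpm : PiecewiseMonotonic τ) (hmix : MixingOn τ I01)
    (hni : ¬ EssentiallyInjective τ) :
    ExactOn τ I01 := by
  intro U hU hUne
  classical
  obtain ⟨mN, hm0, a, ha0, han, hinc, hbr⟩ := hpm
  -- monotonicity chain for partition points
  have hchain : ∀ j, j ≤ mN → ∀ i, i ≤ j → a i ≤ a j := by
    intro j
    induction j with
    | zero =>
      intro _ i hi
      rw [Nat.le_zero.1 hi]
    | succ j ih =>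
      intro hj i hi
      rcases Nat.eq_or_lt_of_le hi with heq | hlt
      · rw [heq]
      · exact (ih (le_trans (Nat.le_succ j) hj) i (Nat.lt_succ_iff.1 hlt)).trans
          (hinc j (Nat.lt_of_succ_le hj)).le
  have ha_nonneg : ∀ i, i ≤ mN → 0 ≤ a i := fun i hi => by
    have := hchain i hi 0 (Nat.zero_le i); rwa [ha0] at this
  -- facts about the last branch
  have hlast_lt : mN - 1 < mN := Nat.sub_lt hm0 Nat.one_pos
  have hidx : mN - 1 + 1 = mN := Nat.succ_pred_eq_of_pos hm0
  have hbrlast := hbr (mN - 1) hlast_lt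
  rw [hidx, han] at hbrlast
  have hw00 : 0 ≤ a (mN - 1) := ha_nonneg _ (Nat.sub_le mN 1)
  have hw01 : a (mN - 1) < 1 := by
    have := hinc (mN - 1) hlast_lt
    rwa [hidx, han] at this
  -- facts about the first branch
  have hbr0 := hbr 0 hm0
  rw [zero_add, ha0] at hbr0
  have ha1pos : 0 < a 1 := by have := hinc 0 hm0; rwa [zero_add, ha0] at this
  have ha1le : a 1 ≤ 1 := by
    have := hchain mN le_rfl 1 hm0
    rwa [han] at this
  -- a nondegenerate open interval inside U ∩ I01
  obtain ⟨x, hxU, hxK⟩ := hUne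
  obtain ⟨δ, hδ, hball⟩ := Metric.isOpen_iff.1 hU x hxU
  set u := max 0 (x - δ) with hu
  set v := min 1 (x + δ) with hv
  have huv : u < v := by
    apply max_lt
    · exact lt_min zero_lt_one (by linarith [hxK.1])
    · exact lt_min (by linarith [hxK.2]) (by linarith)
  have hsubU : Set.Ioo u v ⊆ U := by
    intro y hy
    apply hball
    rw [Real.ball_eq_Ioo]
    exact ⟨lt_of_le_of_lt (le_max_right 0 (x - δ)) hy.1,
      lt_of_lt_of_le hy.2 (min_le_right 1 (x + δ))⟩
  have hsubK : Set.Ioo u v ⊆ I01 := by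
    intro y hy
    exact ⟨(le_max_left 0 (x - δ)).trans hy.1.le, hy.2.le.trans (min_le_left 1 (x + δ))⟩
  have hsubUK : Set.Ioo u v ⊆ U ∩ I01 := Set.subset_inter hsubU hsubK
  have step : ∀ (n : ℕ) (y : ℝ), y ∈ τ^[n] '' Set.Ioo u v → τ y ∈ τ^[n + 1] '' Set.Ioo u v := by
    intro n y hy
    rw [Function.iterate_succ', Set.image_comp]
    exact Set.mem_image_of_mem τ hy
  have final : ∀ m : ℕ, (0:ℝ) ∈ τ^[m] '' Set.Ioo u v → (1:ℝ) ∈ τ^[m] '' Set.Ioo u v →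
      τ^[m] '' (U ∩ I01) = I01 := by
    intro m h0 h1
    apply Set.Subset.antisymm
    · exact Set.MapsTo.image_subset ((hmaps.iterate m).mono_left Set.inter_subset_right)
    · intro y hy
      have hord := ((isPreconnected_Ioo).image _
        ((contOn_iter hmaps hc m).mono hsubK)).ordConnected
      exact Set.image_mono hsubUK (hord.out h0 h1 hy)
  by_cases hy1 : ∃ y ∈ Set.Ioo (0:ℝ) 1, τ y = 1
  · by_cases hy0 : ∃ y ∈ Set.Ioo (0:ℝ) 1, τ y = 0
    · -- both endpoints have interior preimages
      obtain ⟨y1, hy1I, hy1e⟩ := hy1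
      obtain ⟨y0, hy0I, hy0e⟩ := hy0
      set ε := min (min y0 (1 - y0)) (min y1 (1 - y1)) with hεdef
      have hε : 0 < ε :=
        lt_min (lt_min hy0I.1 (by linarith [hy0I.2])) (lt_min hy1I.1 (by linarith [hy1I.2]))
      obtain ⟨N, hN⟩ := cover_middle hmaps hc hmix huv hsubK hε
      have hεy0 : ε ≤ y0 := (min_le_left _ _).trans (min_le_left _ _)
      have hεy0' : ε ≤ 1 - y0 := (min_le_left _ _).trans (min_le_right _ _)
      have hεy1 : ε ≤ y1 := (min_le_right _ _).trans (min_le_left _ _)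
      have hεy1' : ε ≤ 1 - y1 := (min_le_right _ _).trans (min_le_right _ _)
      have h0mem : (0:ℝ) ∈ τ^[N + 1] '' Set.Ioo u v := by
        have := step N y0 (hN N le_rfl ⟨hεy0, by linarith⟩)
        rwa [hy0e] at this
      have h1mem : (1:ℝ) ∈ τ^[N + 1] '' Set.Ioo u v := by
        have := step N y1 (hN N le_rfl ⟨hεy1, by linarith⟩)
        rwa [hy1e] at this
      exact ⟨N + 1, final (N + 1) h0mem h1mem⟩
    · -- no interior preimage of 0
      by_cases hf1 : τ 1 = 0
      · -- 1 maps to 0, and 1 has an interior preimage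
        obtain ⟨y1, hy1I, hy1e⟩ := hy1
        set ε := min y1 (1 - y1) with hεdef
        have hε : 0 < ε := lt_min hy1I.1 (by linarith [hy1I.2])
        obtain ⟨N, hN⟩ := cover_middle hmaps hc hmix huv hsubK hε
        have hεy1 : ε ≤ y1 := min_le_left _ _
        have hεy1' : ε ≤ 1 - y1 := min_le_right _ _
        have h1mem' : (1:ℝ) ∈ τ^[N + 1] '' Set.Ioo u v := by
          have := step N y1 (hN N le_rfl ⟨hεy1, by linarith⟩)
          rwa [hy1e] at this
        have h1mem : (1:ℝ) ∈ τ^[N + 2] '' Set.Ioo u v := by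
          have := step (N + 1) y1 (hN (N + 1) (Nat.le_succ N) ⟨hεy1, by linarith⟩)
          rwa [hy1e] at this
        have h0mem : (0:ℝ) ∈ τ^[N + 2] '' Set.Ioo u v := by
          have := step (N + 1) 1 h1mem'
          rwa [hf1] at this
        exact ⟨N + 2, final (N + 2) h0mem h1mem⟩
      · -- the only preimage of 0 is 0 itself: trap at bottom
        exfalso
        obtain ⟨x0, hx0K, hx0e⟩ := hits_bot hmaps hc hmix
        have hτ00 : τ 0 = 0 := by
          rcases eq_or_lt_of_le hx0K.1 with h | h
          · rwa [← h] at hx0e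
          rcases eq_or_lt_of_le hx0K.2 with h2 | h2
          · rw [h2] at hx0e; exact absurd hx0e hf1
          · exact absurd ⟨x0, ⟨h, h2⟩, hx0e⟩ hy0
        refine trap_bot hmaps hc hmix Nat.one_pos (by rwa [Function.iterate_one])
          ?_ ha1pos ha1le ?_
        · intro z hz
          rw [Function.iterate_one]
          intro heq
          rcases eq_or_lt_of_le hz.2 with h2 | h2
          · rw [h2] at heq; exact hf1 heq
          · exact hy0 ⟨z, ⟨hz.1, h2⟩, heq⟩
        · rw [Function.iterate_one]
          exact hbr0.2
  · -- no interior preimage of 1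
    by_cases hf0 : τ 0 = 1
    · by_cases hy0 : ∃ y ∈ Set.Ioo (0:ℝ) 1, τ y = 0
      · -- 0 maps to 1, and 0 has an interior preimage
        obtain ⟨y0, hy0I, hy0e⟩ := hy0
        set ε := min y0 (1 - y0) with hεdef
        have hε : 0 < ε := lt_min hy0I.1 (by linarith [hy0I.2])
        obtain ⟨N, hN⟩ := cover_middle hmaps hc hmix huv hsubK hε
        have hεy0 : ε ≤ y0 := min_le_left _ _
        have hεy0' : ε ≤ 1 - y0 := min_le_right _ _
        have h0mem' : (0:ℝ) ∈ τ^[N + 1] '' Set.Ioo u v := by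
          have := step N y0 (hN N le_rfl ⟨hεy0, by linarith⟩)
          rwa [hy0e] at this
        have h0mem : (0:ℝ) ∈ τ^[N + 2] '' Set.Ioo u v := by
          have := step (N + 1) y0 (hN (N + 1) (Nat.le_succ N) ⟨hεy0, by linarith⟩)
          rwa [hy0e] at this
        have h1mem : (1:ℝ) ∈ τ^[N + 2] '' Set.Ioo u v := by
          have := step (N + 1) 0 h0mem'
          rwa [hf0] at this
        exact ⟨N + 2, final (N + 2) h0mem h1mem⟩
      · -- swap case: τ 0 = 1, τ 1 = 0, no interior preimages of 0 or 1
        exfalso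
        obtain ⟨x0, hx0K, hx0e⟩ := hits_bot hmaps hc hmix
        have hτ1 : τ 1 = 0 := by
          rcases eq_or_lt_of_le hx0K.1 with h | h
          · rw [← h] at hx0e; rw [hf0] at hx0e; exact absurd hx0e one_ne_zero
          rcases eq_or_lt_of_le hx0K.2 with h2 | h2
          · rwa [h2] at hx0e
          · exact absurd ⟨x0, ⟨h, h2⟩, hx0e⟩ hy0
        have hit2 : ∀ p : ℝ, τ^[2] p = τ (τ p) := by
          intro p
          rw [Function.iterate_succ_apply', Function.iterate_one]
        -- positivity of τ on the last branch
        have hpos : ∀ p ∈ Set.Ioo (a (mN - 1)) 1, 0 < τ p := by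
          intro p hp
          have hpK : p ∈ I01 := ⟨hw00.trans hp.1.le, hp.2.le⟩
          exact (hmaps hpK).1.lt_of_ne
            (Ne.symm fun h0' => hy0 ⟨p, ⟨lt_of_le_of_lt hw00 hp.1, hp.2⟩, h0'⟩)
        -- τ is strictly decreasing on the last branch
        have hanti : StrictAntiOn τ (Set.Ioo (a (mN - 1)) 1) := by
          rcases hbrlast.2 with hmo | ha
          · exfalso
            set p := (a (mN - 1) + 1) / 2 with hpdef
            have hpI : p ∈ Set.Ioo (a (mN - 1)) 1 :=
              ⟨by rw [hpdef]; linarith, by rw [hpdef]; linarith⟩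
            have hp0 : 0 ≤ p := by rw [hpdef]; linarith
            have hfp : 0 < τ p := hpos p hpI
            have hivt := intermediate_value_Icc' hpI.2.le
              (hc.mono (Set.Icc_subset_Icc hp0 le_rfl))
            have hcm : τ p / 2 ∈ Set.Icc (τ 1) (τ p) := by
              rw [hτ1]; exact ⟨by linarith, by linarith⟩
            obtain ⟨ξ, hξmem, hξ⟩ := hivt hcm
            have hξ1 : ξ ≠ 1 := by rintro rfl; rw [hτ1] at hξ; linarith
            have hξp : p ≠ ξ := by rintro rfl; linarith
            have hlt : p < ξ := lt_of_le_of_ne hξmem.1 hξp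
            have : τ p < τ ξ := hmo hpI ⟨hpI.1.trans hlt, lt_of_le_of_ne hξmem.2 hξ1⟩ hlt
            linarith
          · exact ha
        -- find w' with τ w' ≤ a 1
        have hw' : ∃ w' ∈ Set.Ioo (a (mN - 1)) 1, τ w' ≤ a 1 := by
          set p := (a (mN - 1) + 1) / 2 with hpdef
          have hpI : p ∈ Set.Ioo (a (mN - 1)) 1 :=
            ⟨by rw [hpdef]; linarith, by rw [hpdef]; linarith⟩
          have hp0 : 0 ≤ p := by rw [hpdef]; linarith
          by_cases hca : τ p ≤ a 1
          · exact ⟨p, hpI, hca⟩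
          · push_neg at hca
            have hivt := intermediate_value_Icc' hpI.2.le
              (hc.mono (Set.Icc_subset_Icc hp0 le_rfl))
            have hcm : a 1 ∈ Set.Icc (τ 1) (τ p) := by
              rw [hτ1]; exact ⟨ha1pos.le, hca.le⟩
            obtain ⟨ξ, hξmem, hξ⟩ := hivt hcm
            have hξ1 : ξ ≠ 1 := by rintro rfl; rw [hτ1] at hξ; linarith
            exact ⟨ξ, ⟨lt_of_lt_of_le hpI.1 hξmem.1, lt_of_le_of_ne hξmem.2 hξ1⟩, le_of_eq hξ⟩
        obtain ⟨w', hw'I, hw'le⟩ := hw'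
        have himg : ∀ p ∈ Set.Ioo w' 1, τ p ∈ Set.Ioo 0 (a 1) := by
          intro p hp
          have hpI : p ∈ Set.Ioo (a (mN - 1)) 1 := ⟨hw'I.1.trans hp.1, hp.2⟩
          exact ⟨hpos p hpI, lt_of_lt_of_le (hanti hw'I hpI hp.1) hw'le⟩
        have hmono2 : StrictMonoOn (τ^[2]) (Set.Ioo w' 1) ∨
            StrictAntiOn (τ^[2]) (Set.Ioo w' 1) := by
          rcases hbr0.2 with hmo | han' 
          · right
            intro p hp q hq hpq
            rw [hit2, hit2]
            have hτqp : τ q < τ p :=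
              hanti ⟨hw'I.1.trans hp.1, hp.2⟩ ⟨hw'I.1.trans hq.1, hq.2⟩ hpq
            exact hmo (himg q hq) (himg p hp) hτqp
          · left
            intro p hp q hq hpq
            rw [hit2, hit2]
            have hτqp : τ q < τ p :=
              hanti ⟨hw'I.1.trans hp.1, hp.2⟩ ⟨hw'I.1.trans hq.1, hq.2⟩ hpq
            exact han' (himg q hq) (himg p hp) hτqp
        have h2_1 : τ^[2] 1 = 1 := by rw [hit2, hτ1, hf0]
        have h2ne : ∀ z ∈ Set.Ico (0:ℝ) 1, τ^[2] z ≠ 1 := by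
          intro z hz heq
          rw [hit2] at heq
          have hzK : z ∈ I01 := ⟨hz.1, hz.2.le⟩
          have hfzK : τ z ∈ I01 := hmaps hzK
          have hfz01 : τ z = 0 ∨ τ z = 1 := by
            rcases eq_or_lt_of_le hfzK.1 with h | h
            · exact Or.inl h.symm
            rcases eq_or_lt_of_le hfzK.2 with h' | h'
            · exact Or.inr h'
            · exact (hy1 ⟨τ z, ⟨h, h'⟩, heq⟩).elim
          rcases hfz01 with h0' | h1'
          · rcases eq_or_lt_of_le hz.1 with hz0 | hz0
            · rw [← hz0] at h0'; rw [hf0] at h0'; exact one_ne_zero h0'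
            · exact hy0 ⟨z, ⟨hz0, hz.2⟩, h0'⟩
          · rcases eq_or_lt_of_le hz.1 with hz0 | hz0
            · rw [h1'] at heq; rw [← hz0, hf0] at h1'
              rw [h1'] at heq
              rw [hτ1] at heq
              exact zero_ne_one heq
            · exact hy1 ⟨z, ⟨hz0, hz.2⟩, h1'⟩
        exact trap_top hmaps hc hmix two_pos h2_1 h2ne (hw00.trans hw'I.1.le) hw'I.2 hmono2
    · -- the only preimage of 1 is 1 itself: trap at top
      exfalso
      obtain ⟨x1, hx1K, hx1e⟩ := hits_top hmaps hc hmix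
      have hτ11 : τ 1 = 1 := by
        rcases eq_or_lt_of_le hx1K.1 with h | h
        · rw [← h] at hx1e; exact absurd hx1e hf0
        rcases eq_or_lt_of_le hx1K.2 with h2 | h2
        · rwa [h2] at hx1e
        · exact absurd ⟨x1, ⟨h, h2⟩, hx1e⟩ hy1
      refine trap_top hmaps hc hmix Nat.one_pos (by rwa [Function.iterate_one])
        ?_ hw00 hw01 ?_
      · intro z hz
        rw [Function.iterate_one]
        intro heq
        rcases eq_or_lt_of_le hz.1 with h | h
        · rw [← h] at heq; exact hf0 heq
        · exact hy1 ⟨z, ⟨h, hz.2⟩, heq⟩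
      · rw [Function.iterate_one]
        exact hbrlast.2
end
end

section
/- If √2 < s ≤ 2, then the restricted tent map T_s : [0,1] → [0,1] is topologically exact; in particular it is topologically mixing and transitive. -/
open Set MeasureTheory

noncomputable section

namespace T8

variable {s : ℝ}

lemma one_lt (h1 : Real.sqrt 2 < s) : 1 < s := by
  nlinarith [Real.sq_sqrt (by norm_num : (0:ℝ) ≤ 2), Real.sqrt_nonneg 2]

lemma two_lt_sq (h1 : Real.sqrt 2 < s) : 2 < s ^ 2 := by
  nlinarith [Real.sq_sqrt (by norm_num : (0:ℝ) ≤ 2), Real.sqrt_nonneg 2]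

lemma key (hs : 1 < s) : s * (1 - 1 / s) = s - 1 := by
  have h0 : s ≠ 0 := by intro h; rw [h] at hs; norm_num at hs
  field_simp

lemma c_pos (hs : 1 < s) : 0 < 1 - 1 / s := by
  have h0 : (0:ℝ) < s := by linarith
  have : 1 / s < 1 := by rw [div_lt_one h0]; linarith
  linarith

lemma c_lt_one (hs : 1 < s) : 1 - 1 / s < 1 := by
  have h0 : (0:ℝ) < s := by linarith
  have : 0 < 1 / s := by positivity
  linarith

lemma tent_left (hs : 1 < s) {x : ℝ} (hx : x ≤ 1 - 1 / s) :
    tent s x = s * x + (2 - s) := by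
  rw [tent, if_pos hx, mul_sub, key hs]; ring

lemma tent_right (hs : 1 < s) {x : ℝ} (hx : 1 - 1 / s ≤ x) :
    tent s x = s - s * x := by
  rcases eq_or_lt_of_le hx with h | h
  · rw [tent, if_pos h.symm.le, ← h, mul_sub, key hs]; ring
  · rw [tent, if_neg (not_le.2 h), mul_sub, key hs]; ring

lemma image_affine {k d a b : ℝ} (hk : 0 < k) (hab : a ≤ b) :
    (fun x => k * x + d) '' Icc a b = Icc (k * a + d) (k * b + d) := by
  have hk' : k ≠ 0 := ne_of_gt hk
  ext y
  constructor
  · rintro ⟨x, hx, rfl⟩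
    dsimp only
    exact ⟨by nlinarith [hx.1], by nlinarith [hx.2]⟩
  · rintro ⟨hy1, hy2⟩
    refine ⟨(y - d) / k, ⟨?_, ?_⟩, ?_⟩
    · rw [le_div_iff₀ hk]; nlinarith
    · rw [div_le_iff₀ hk]; nlinarith
    · field_simp; ring

lemma image_affine_neg {k d a b : ℝ} (hk : k < 0) (hab : a ≤ b) :
    (fun x => k * x + d) '' Icc a b = Icc (k * b + d) (k * a + d) := by
  have hk' : k ≠ 0 := ne_of_lt hk
  ext y
  constructor
  · rintro ⟨x, hx, rfl⟩
    dsimp only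
    exact ⟨by nlinarith [hx.2], by nlinarith [hx.1]⟩
  · rintro ⟨hy1, hy2⟩
    refine ⟨(y - d) / k, ⟨?_, ?_⟩, ?_⟩
    · rw [le_div_iff_of_neg hk]; nlinarith
    · rw [div_le_iff_of_neg hk]; nlinarith
    · field_simp; ring

lemma image_left (hs : 1 < s) {a b : ℝ} (hab : a ≤ b) (hb : b ≤ 1 - 1 / s) :
    tent s '' Icc a b = Icc (s * a + (2 - s)) (s * b + (2 - s)) := by
  rw [Set.image_congr (fun x hx => tent_left hs (le_trans hx.2 hb)),
    image_affine (by linarith : (0:ℝ) < s) hab]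

lemma image_right (hs : 1 < s) {a b : ℝ} (hab : a ≤ b) (ha : 1 - 1 / s ≤ a) :
    tent s '' Icc a b = Icc (s - s * b) (s - s * a) := by
  have e : Set.EqOn (tent s) (fun x => (-s) * x + s) (Icc a b) := fun x hx => by
    rw [tent_right hs (le_trans ha hx.1)]; ring
  rw [Set.image_congr e, image_affine_neg (by linarith : -s < 0) hab]
  congr 1 <;> ring

lemma image_c1 (hs : 1 < s) : tent s '' Icc (1 - 1/s) 1 = Icc 0 1 := by
  rw [image_right hs (by linarith [c_lt_one hs]) le_rfl]
  have hk := key hs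
  rw [show s - s * 1 = 0 by ring, show s - s * (1 - 1/s) = 1 by linarith [key hs]]

lemma tent_mem (h1 : Real.sqrt 2 < s) (h2 : s ≤ 2) {x : ℝ} (hx : x ∈ I01) :
    tent s x ∈ I01 := by
  have hs := one_lt h1
  have hs0 : (0:ℝ) < s := by linarith
  have hk := key hs
  obtain ⟨hx0, hx1⟩ := hx
  rcases le_or_gt x (1 - 1/s) with h | h
  · rw [tent_left hs h]
    constructor
    · nlinarith [mul_nonneg hs0.le hx0]
    · nlinarith [mul_le_mul_of_nonneg_left h hs0.le]
  · rw [tent_right hs h.le]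
    constructor
    · nlinarith [mul_le_mul_of_nonneg_left hx1 hs0.le]
    · nlinarith [mul_le_mul_of_nonneg_left h.le hs0.le]

lemma image_I01 (h1 : Real.sqrt 2 < s) (h2 : s ≤ 2) : tent s '' I01 = I01 := by
  have hs := one_lt h1
  apply subset_antisymm
  · rintro y ⟨x, hx, rfl⟩; exact tent_mem h1 h2 hx
  · have h := image_c1 hs
    have h2' : tent s '' Icc (1 - 1/s) 1 ⊆ tent s '' I01 :=
      Set.image_mono (Icc_subset_Icc (c_pos hs).le le_rfl)
    rw [h] at h2'
    exact h2'

lemma iterate_image_I01 (h1 : Real.sqrt 2 < s) (h2 : s ≤ 2) (n : ℕ) :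
    (tent s)^[n] '' I01 = I01 := by
  induction n with
  | zero => simp
  | succ n ih =>
    rw [Function.iterate_succ', Set.image_comp, ih, image_I01 h1 h2]

/-- One-step growth lemma. -/
lemma step (h1 : Real.sqrt 2 < s) (h2 : s ≤ 2) {a b : ℝ}
    (h0 : 0 ≤ a) (hab : a < b) (hb1 : b ≤ 1) :
    ∃ a' b', 0 ≤ a' ∧ a' < b' ∧ b' ≤ 1 ∧ Icc a' b' ⊆ tent s '' Icc a b ∧
      s / 2 * (b - a) ≤ b' - a' ∧ (s * (b - a) ≤ b' - a' ∨ b' = 1) := by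
  have hs := one_lt h1
  have hs0 : (0:ℝ) < s := by linarith
  have hk := key hs
  rcases le_or_gt b (1 - 1/s) with hbc | hbc
  · refine ⟨s * a + (2 - s), s * b + (2 - s),
      by nlinarith [mul_nonneg hs0.le h0],
      by nlinarith [mul_lt_mul_of_pos_left hab hs0],
      by nlinarith [mul_le_mul_of_nonneg_left hbc hs0.le],
      by rw [image_left hs hab.le hbc],
      by nlinarith [mul_pos hs0 (sub_pos.2 hab)],
      Or.inl (by linarith)⟩
  rcases le_or_gt (1 - 1/s) a with hca | hca
  · refine ⟨s - s * b, s - s * a,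
      by nlinarith [mul_le_mul_of_nonneg_left hb1 hs0.le],
      by nlinarith [mul_lt_mul_of_pos_left hab hs0],
      by nlinarith [mul_le_mul_of_nonneg_left hca hs0.le],
      by rw [image_right hs hab.le hca],
      by nlinarith [mul_pos hs0 (sub_pos.2 hab)],
      Or.inl (by linarith)⟩
  rcases le_or_gt (b - (1 - 1/s)) ((1 - 1/s) - a) with hh | hh
  · -- left half [a, (1 - 1/s)] is longer
    refine ⟨s * a + (2 - s), 1,
      by nlinarith [mul_nonneg hs0.le h0],
      by nlinarith [mul_lt_mul_of_pos_left hca hs0],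
      le_rfl, ?_,
      by nlinarith [mul_nonneg hs0.le (by linarith : (0:ℝ) ≤ 2*((1 - 1/s)-a) - (b-a))],
      Or.inr rfl⟩
    have e : Icc (s * a + (2 - s)) 1 = tent s '' Icc a (1 - 1/s) := by
      rw [image_left hs hca.le le_rfl,
        show s * (1 - 1/s) + (2 - s) = 1 by linarith]
    rw [e]
    exact Set.image_mono (Icc_subset_Icc le_rfl hbc.le)
  · -- right half [(1 - 1/s), b] is longer
    refine ⟨s - s * b, 1,
      by nlinarith [mul_le_mul_of_nonneg_left hb1 hs0.le],
      by nlinarith [mul_lt_mul_of_pos_left hbc hs0],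
      le_rfl, ?_,
      by nlinarith [mul_nonneg hs0.le (by linarith : (0:ℝ) ≤ 2*(b-(1 - 1/s)) - (b-a))],
      Or.inr rfl⟩
    have e : Icc (s - s * b) 1 = tent s '' Icc (1 - 1/s) b := by
      rw [image_right hs hbc.le le_rfl,
        show s - s * (1 - 1/s) = 1 by linarith]
    rw [e]
    exact Set.image_mono (Icc_subset_Icc hca.le le_rfl)

lemma two_iter (X : Set ℝ) : (tent s)^[2] '' X = tent s '' (tent s '' X) := by
  rw [show (tent s)^[2] = tent s ∘ tent s by
    funext x; simp [Function.iterate_succ_apply]]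
  exact Set.image_comp _ _ _

/-- Two-step lemma: cover or grow by factor `s^2/2 > 1`. -/
lemma twoStep (h1 : Real.sqrt 2 < s) (h2 : s ≤ 2) {a b : ℝ}
    (h0 : 0 ≤ a) (hab : a < b) (hb1 : b ≤ 1) :
    Icc 0 1 ⊆ (tent s)^[2] '' Icc a b ∨
    ∃ a' b', 0 ≤ a' ∧ a' < b' ∧ b' ≤ 1 ∧ Icc a' b' ⊆ (tent s)^[2] '' Icc a b ∧
      s ^ 2 / 2 * (b - a) ≤ b' - a' := by
  have hs := one_lt h1
  have hs0 : (0:ℝ) < s := by linarith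
  have hk := key hs
  obtain ⟨a1, b1, h0', hab', hb1', hsub', hlen', hor'⟩ := step h1 h2 h0 hab hb1
  rcases hor' with hgrow | hb1eq
  · obtain ⟨a2, b2, h0'', hab'', hb1'', hsub'', hlen'', _⟩ := step h1 h2 h0' hab' hb1'
    right
    refine ⟨a2, b2, h0'', hab'', hb1'', ?_, ?_⟩
    · rw [two_iter]
      exact hsub''.trans (Set.image_mono hsub')
    · nlinarith [mul_le_mul_of_nonneg_left hgrow (by positivity : (0:ℝ) ≤ s/2)]
  · subst hb1eq
    rcases le_or_gt a1 (1 - 1/s) with hcase | hcase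
    · left
      rw [two_iter]
      calc Icc (0:ℝ) 1 = tent s '' Icc (1 - 1/s) 1 := (image_c1 hs).symm
        _ ⊆ tent s '' Icc a1 1 := Set.image_mono (Icc_subset_Icc hcase le_rfl)
        _ ⊆ tent s '' (tent s '' Icc a b) := Set.image_mono hsub'
    · right
      refine ⟨0, s - s * a1, le_rfl,
        by nlinarith [mul_lt_mul_of_pos_left hab' hs0],
        by nlinarith [mul_le_mul_of_nonneg_left hcase.le hs0.le], ?_,
        by nlinarith [mul_le_mul_of_nonneg_left hlen' hs0.le]⟩
      have e : Icc (0:ℝ) (s - s * a1) = tent s '' Icc a1 1 := by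
        rw [image_right hs hab'.le hcase.le,
          show s - s * 1 = 0 by ring]
      rw [two_iter, e]
      exact Set.image_mono hsub'

lemma grow (h1 : Real.sqrt 2 < s) (h2 : s ≤ 2) :
    ∀ k : ℕ, ∀ a b : ℝ, 0 ≤ a → a < b → b ≤ 1 →
      1 < (s ^ 2 / 2) ^ k * (b - a) →
      ∃ n, Icc 0 1 ⊆ (tent s)^[n] '' Icc a b := by
  intro k
  induction k with
  | zero => intro a b h0 hab hb1 hgt; simp at hgt; linarith
  | succ k ih =>
    intro a b h0 hab hb1 hgt
    rcases twoStep h1 h2 h0 hab hb1 with hcov | ⟨a', b', h0', hab', hb1', hsub, hlen⟩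
    · exact ⟨2, hcov⟩
    · have hlam : (0:ℝ) < (s ^ 2 / 2) ^ k := by
        apply pow_pos; nlinarith [two_lt_sq h1]
      have hgt' : 1 < (s ^ 2 / 2) ^ k * (b' - a') := by
        have h' : (s ^ 2 / 2) ^ (k+1) * (b - a)
            = (s ^ 2 / 2) ^ k * (s ^ 2 / 2 * (b - a)) := by ring
        nlinarith [mul_le_mul_of_nonneg_left hlen hlam.le]
      obtain ⟨n, hn⟩ := ih a' b' h0' hab' hb1' hgt'
      refine ⟨n + 2, ?_⟩
      rw [Function.iterate_add, Set.image_comp]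
      exact hn.trans (Set.image_mono hsub)

lemma cover (h1 : Real.sqrt 2 < s) (h2 : s ≤ 2) {a b : ℝ}
    (h0 : 0 ≤ a) (hab : a < b) (hb1 : b ≤ 1) :
    ∃ n, Icc 0 1 ⊆ (tent s)^[n] '' Icc a b := by
  have hlam : (1:ℝ) < s ^ 2 / 2 := by nlinarith [two_lt_sq h1]
  obtain ⟨k, hk⟩ := pow_unbounded_of_one_lt (1 / (b - a)) hlam
  refine grow h1 h2 k a b h0 hab hb1 ?_
  rw [div_lt_iff₀ (by linarith)] at hk
  nlinarith

end T8

/-- For `√2 < s ≤ 2` the restricted tent map `T_s` is topologically exact,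
hence topologically mixing and transitive. -/
theorem stmt8 (s : ℝ) (h1 : Real.sqrt 2 < s) (h2 : s ≤ 2) :
    ExactOn (tent s) I01 ∧ MixingOn (tent s) I01 ∧ TransitiveOn (tent s) I01 := by
  have hexact : ExactOn (tent s) I01 := by
    intro U hU hne
    obtain ⟨x, hxU, hxI⟩ := hne
    obtain ⟨ε, hε, hball⟩ := Metric.isOpen_iff.1 hU x hxU
    have hx0 : (0:ℝ) ≤ x := hxI.1
    have hx1 : x ≤ 1 := hxI.2
    set a := max 0 (x - ε/2) with ha
    set b := min 1 (x + ε/2) with hb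
    have h0a : 0 ≤ a := le_max_left _ _
    have hb1 : b ≤ 1 := min_le_left _ _
    have hab : a < b := by
      apply max_lt
      · exact lt_min one_pos (by linarith)
      · exact lt_min (by linarith) (by linarith)
    have hsubU : Icc a b ⊆ U ∩ I01 := by
      intro y hy
      have hya : a ≤ y := hy.1
      have hyb : y ≤ b := hy.2
      have h1' : x - ε/2 ≤ a := le_max_right _ _
      have h2' : b ≤ x + ε/2 := min_le_right _ _
      constructor
      · apply hball
        rw [Metric.mem_ball, Real.dist_eq, abs_lt]
        constructor <;> linarith
      · exact ⟨le_trans h0a hya, le_trans hyb hb1⟩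
    obtain ⟨n, hn⟩ := T8.cover h1 h2 h0a hab hb1
    refine ⟨n, subset_antisymm ?_ ?_⟩
    · have hsub2 : (tent s)^[n] '' (U ∩ I01) ⊆ (tent s)^[n] '' I01 :=
        Set.image_mono Set.inter_subset_right
      rw [T8.iterate_image_I01 h1 h2 n] at hsub2
      exact hsub2
    · exact hn.trans (Set.image_mono hsubU)
  have hmix : MixingOn (tent s) I01 := by
    intro U V hU hV hUne hVne
    obtain ⟨N, hN⟩ := hexact U hU hUne
    refine ⟨N, fun n hn => ?_⟩
    have hfull : (tent s)^[n] '' (U ∩ I01) = I01 := by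
      have hsplit : n = (n - N) + N := (Nat.sub_add_cancel hn).symm
      rw [hsplit, Function.iterate_add, Set.image_comp, hN,
        T8.iterate_image_I01 h1 h2]
    rw [hfull]
    obtain ⟨y, hy⟩ := hVne
    exact ⟨y, hy.2, hy⟩
  refine ⟨hexact, hmix, ?_⟩
  intro U V hU hV hUne hVne
  obtain ⟨N, hN⟩ := hmix U V hU hV hUne hVne
  exact ⟨N, hN N le_rfl⟩
end
end

section
/- Let s = √2 and let p = 2 − √2, which is the unique fixed point of the restricted tent map T_s in (0,1). Then T_s maps [0,p] onto [p,1] and maps [p,1] onto [0,p]; the restriction of T_s² to [0,p] is conjugate, via a homeomorphism from [0,p] onto [0,1], to the full tent map T₂, and likewise the restriction of T_s² to [p,1] is conjugate to T₂. Consequently T_{√2} is transitive but not topologically exact. -/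
open Set MeasureTheory

noncomputable section

namespace Aux9

local notation "S" => Real.sqrt 2

lemma hS2 : S * S = 2 := Real.mul_self_sqrt (by norm_num)
lemma hS1 : 1 < S := by nlinarith [hS2, Real.sqrt_nonneg 2]
lemma hSlt : S < 2 := by nlinarith [hS2, Real.sqrt_nonneg 2]

lemma hc : 1 - 1 / S = (2 - S) / 2 := by
  have h0 : S ≠ 0 := by nlinarith [hS1]
  field_simp
  nlinarith [hS2]

lemma tentA {x : ℝ} (hx : x ≤ (2 - S) / 2) : tent S x = 1 + S * (x - (2 - S) / 2) := by
  rw [tent, hc, if_pos hx]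

lemma tentB {x : ℝ} (hx : (2 - S) / 2 ≤ x) : tent S x = 1 - S * (x - (2 - S) / 2) := by
  rw [tent, hc]
  by_cases h : x ≤ (2 - S) / 2
  · have : x = (2 - S) / 2 := le_antisymm h hx
    rw [if_pos h, this]; ring
  · rw [if_neg h]

lemma t2A {y : ℝ} (hy : y ≤ 1 / 2) : tent 2 y = 2 * y := by
  rw [tent, show (1:ℝ) - 1/2 = 1/2 by norm_num, if_pos hy]; ring

lemma t2B {y : ℝ} (hy : 1 / 2 ≤ y) : tent 2 y = 2 - 2 * y := by
  rw [tent, show (1:ℝ) - 1/2 = 1/2 by norm_num]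
  by_cases h : y ≤ 1/2
  · have : y = 1/2 := le_antisymm h hy
    rw [if_pos h, this]; ring
  · rw [if_neg h]; ring

lemma img_pos_sup (f : ℝ → ℝ) {a b : ℝ} (m d : ℝ) (hm : 0 < m)
    (hf : ∀ x ∈ Icc a b, f x = m * x + d) :
    Icc (m * a + d) (m * b + d) ⊆ f '' Icc a b := by
  intro y hy
  have hm' : m ≠ 0 := ne_of_gt hm
  have hx1 : a ≤ (y - d) / m := by rw [le_div_iff₀ hm]; linarith [hy.1]
  have hx2 : (y - d) / m ≤ b := by rw [div_le_iff₀ hm]; linarith [hy.2]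
  exact ⟨(y - d) / m, ⟨hx1, hx2⟩, by rw [hf _ ⟨hx1, hx2⟩]; field_simp; ring⟩

lemma img_neg_sup (f : ℝ → ℝ) {a b : ℝ} (m d : ℝ) (hm : m < 0)
    (hf : ∀ x ∈ Icc a b, f x = m * x + d) :
    Icc (m * b + d) (m * a + d) ⊆ f '' Icc a b := by
  intro y hy
  have hm' : m ≠ 0 := ne_of_lt hm
  have hx1 : a ≤ (y - d) / m := by rw [le_div_iff_of_neg hm]; linarith [hy.2]
  have hx2 : (y - d) / m ≤ b := by rw [div_le_iff_of_neg hm]; linarith [hy.1]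
  exact ⟨(y - d) / m, ⟨hx1, hx2⟩, by rw [hf _ ⟨hx1, hx2⟩]; field_simp; ring⟩

lemma img_pos_sub (f : ℝ → ℝ) {a b : ℝ} (m d : ℝ) (hm : 0 < m)
    (hf : ∀ x ∈ Icc a b, f x = m * x + d) :
    f '' Icc a b ⊆ Icc (m * a + d) (m * b + d) := by
  rintro y ⟨x, hx, rfl⟩
  rw [hf x hx]
  exact ⟨by nlinarith [hx.1], by nlinarith [hx.2]⟩

lemma img_neg_sub (f : ℝ → ℝ) {a b : ℝ} (m d : ℝ) (hm : m < 0)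
    (hf : ∀ x ∈ Icc a b, f x = m * x + d) :
    f '' Icc a b ⊆ Icc (m * b + d) (m * a + d) := by
  rintro y ⟨x, hx, rfl⟩
  rw [hf x hx]
  exact ⟨by nlinarith [hx.2], by nlinarith [hx.1]⟩

lemma tent_f1 : ∀ x ∈ Icc (0:ℝ) ((2 - S)/2), tent S x = S * x + (1 - S * ((2 - S)/2)) := by
  intro x hx; rw [tentA hx.2]; ring

lemma tent_f2 : ∀ x ∈ Icc ((2 - S)/2) 1, tent S x = (-S) * x + (1 + S * ((2 - S)/2)) := by
  intro x hx; rw [tentB hx.1]; ring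

lemma imgA : tent S '' Icc 0 (2 - S) = Icc (2 - S) 1 := by
  have hc0 : (0:ℝ) ≤ (2 - S)/2 := by nlinarith [hSlt]
  have hcp : (2 - S)/2 ≤ 2 - S := by nlinarith [hSlt]
  have hsplit : Icc (0:ℝ) (2 - S) = Icc 0 ((2 - S)/2) ∪ Icc ((2 - S)/2) (2 - S) :=
    (Icc_union_Icc_eq_Icc hc0 hcp).symm
  have hS0 : (0:ℝ) < S := by nlinarith [hS1]
  have hf2' : ∀ x ∈ Icc ((2 - S)/2) (2 - S), tent S x = (-S) * x + (1 + S * ((2 - S)/2)) := by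
    intro x hx
    exact tent_f2 x ⟨hx.1, by nlinarith [hx.2, hS1]⟩
  have e1 : tent S '' Icc 0 ((2 - S)/2) = Icc (2 - S) 1 := by
    apply Subset.antisymm
    · have := img_pos_sub (tent S) (a := 0) (b := (2-S)/2) S _ hS0 tent_f1
      convert this using 2 <;> nlinarith [hS2]
    · have := img_pos_sup (tent S) (a := 0) (b := (2-S)/2) S _ hS0 tent_f1
      refine Subset.trans ?_ this
      apply Icc_subset_Icc <;> nlinarith [hS2]
  have e2 : tent S '' Icc ((2 - S)/2) (2 - S) = Icc (2 - S) 1 := by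
    apply Subset.antisymm
    · have := img_neg_sub (tent S) (a := (2-S)/2) (b := 2 - S) (-S) _ (by linarith) hf2'
      refine Subset.trans this ?_
      apply Icc_subset_Icc <;> nlinarith [hS2]
    · have := img_neg_sup (tent S) (a := (2-S)/2) (b := 2 - S) (-S) _ (by linarith) hf2'
      refine Subset.trans ?_ this
      apply Icc_subset_Icc <;> nlinarith [hS2]
  rw [hsplit, image_union, e1, e2, union_self]

lemma imgB : tent S '' Icc (2 - S) 1 = Icc 0 (2 - S) := by
  have hS0 : (0:ℝ) < S := by nlinarith [hS1]
  have hf2' : ∀ x ∈ Icc (2 - S) 1, tent S x = (-S) * x + (1 + S * ((2 - S)/2)) := by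
    intro x hx
    exact tent_f2 x ⟨by nlinarith [hx.1, hSlt], hx.2⟩
  apply Subset.antisymm
  · have := img_neg_sub (tent S) (a := 2 - S) (b := 1) (-S) _ (by linarith) hf2'
    refine Subset.trans this ?_
    apply Icc_subset_Icc <;> nlinarith [hS2]
  · have := img_neg_sup (tent S) (a := 2 - S) (b := 1) (-S) _ (by linarith) hf2'
    refine Subset.trans ?_ this
    apply Icc_subset_Icc <;> nlinarith [hS2]

lemma g1 {x : ℝ} (h0 : 0 ≤ x) (h1 : x ≤ (2 - S)/2) :
    tent S (tent S x) = (-2) * x + (2 - S) := by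
  have h2 : S * S = 2 := hS2
  have ht : tent S x = 1 + S * (x - (2 - S)/2) := tentA h1
  have hge : (2 - S)/2 ≤ tent S x := by
    rw [ht]; nlinarith [hS1, hSlt, Real.sqrt_nonneg 2]
  rw [tentB hge, ht]
  have hx2 : x * (S * S) = 2 * x := by rw [h2]; ring
  have h3 : S * (S * S) = 2 * S := by rw [h2]; ring
  nlinarith [h2, hx2, h3]

lemma g2 {x : ℝ} (h0 : (2 - S)/2 ≤ x) (h1 : x ≤ (3 - S)/2) :
    tent S (tent S x) = 2 * x + (-(2 - S)) := by
  have h2 : S * S = 2 := hS2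
  have ht : tent S x = 1 - S * (x - (2 - S)/2) := tentB h0
  have hge : (2 - S)/2 ≤ tent S x := by
    rw [ht]; nlinarith [hS1, hSlt, Real.sqrt_nonneg 2]
  rw [tentB hge, ht]
  have hx2 : x * (S * S) = 2 * x := by rw [h2]; ring
  have h3 : S * (S * S) = 2 * S := by rw [h2]; ring
  nlinarith [h2, hx2, h3]

lemma g3 {x : ℝ} (h0 : (3 - S)/2 ≤ x) (h1 : x ≤ 1) :
    tent S (tent S x) = (-2) * x + (2 + (2 - S)) := by
  have h2 : S * S = 2 := hS2
  have ht : tent S x = 1 - S * (x - (2 - S)/2) := tentB (by nlinarith [hS1])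
  have hle : tent S x ≤ (2 - S)/2 := by
    rw [ht]; nlinarith [hS1, hSlt, Real.sqrt_nonneg 2]
  rw [tentA hle, ht]
  have hx2 : x * (S * S) = 2 * x := by rw [h2]; ring
  have h3 : S * (S * S) = 2 * S := by rw [h2]; ring
  nlinarith [h2, hx2, h3]

/-- `Reach a b` : some iterate image of `[a,b]` covers `[2-√2, 1]`. -/
def Reach (a b : ℝ) : Prop :=
  ∃ n : ℕ, Icc (2 - S) 1 ⊆ (tent S)^[n] '' Icc a b

lemma reach_mono {a b a' b' : ℝ} (h : Icc a b ⊆ Icc a' b') : Reach a b → Reach a' b' := by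
  rintro ⟨n, hn⟩
  exact ⟨n, hn.trans (Set.image_mono h)⟩

lemma reach_step {a b a' b' : ℝ} (h : Icc a' b' ⊆ tent S '' Icc a b) :
    Reach a' b' → Reach a b := by
  rintro ⟨n, hn⟩
  refine ⟨n + 1, ?_⟩
  rw [Function.iterate_succ, Set.image_comp]
  exact hn.trans (Set.image_mono h)

lemma reach_step2 {a b a' b' : ℝ}
    (h : Icc a' b' ⊆ (fun x => tent S (tent S x)) '' Icc a b) :
    Reach a' b' → Reach a b := by
  rintro ⟨n, hn⟩
  refine ⟨n + 2, ?_⟩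
  have he : (tent S)^[n+2] = (tent S)^[n] ∘ (fun x => tent S (tent S x)) := by
    funext x
    simp [Function.iterate_add_apply, Function.iterate_succ_apply]
  rw [he, Set.image_comp]
  exact hn.trans (Set.image_mono h)

lemma reach_p1 : Reach (2 - S) 1 := ⟨0, by simp⟩

lemma reach_0p : Reach 0 (2 - S) := reach_step (by rw [imgA]) reach_p1

lemma reach_cp : Reach ((2 - S)/2) (2 - S) := by
  have hpq : (2 - S : ℝ) ≤ (3 - S)/2 := by nlinarith [hS1]
  have hf : ∀ x ∈ Icc ((2 - S)/2) (2 - S),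
      (fun x => tent S (tent S x)) x = 2 * x + (-(2 - S)) := by
    intro x hx
    exact g2 hx.1 (le_trans hx.2 hpq)
  refine reach_step2 ?_ reach_0p
  refine Subset.trans ?_ (img_pos_sup _ 2 (-(2 - S)) two_pos hf)
  apply Icc_subset_Icc <;> [nlinarith; nlinarith]

lemma reach_pq : Reach (2 - S) ((3 - S)/2) := by
  have hcp : ((2 - S : ℝ))/2 ≤ 2 - S := by nlinarith [hSlt]
  have hf : ∀ x ∈ Icc (2 - S) ((3 - S)/2),
      (fun x => tent S (tent S x)) x = 2 * x + (-(2 - S)) := by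
    intro x hx
    exact g2 (le_trans hcp hx.1) hx.2
  refine reach_step2 ?_ reach_p1
  refine Subset.trans ?_ (img_pos_sup _ 2 (-(2 - S)) two_pos hf)
  apply Icc_subset_Icc <;> [nlinarith; nlinarith]

lemma reach_q1 : Reach ((3 - S)/2) 1 := by
  have hf : ∀ x ∈ Icc ((3 - S)/2) 1,
      (fun x => tent S (tent S x)) x = (-2) * x + (2 + (2 - S)) := by
    intro x hx
    exact g3 hx.1 hx.2
  refine reach_step2 ?_ reach_p1
  refine Subset.trans ?_ (img_neg_sup _ (-2) (2 + (2 - S)) (by norm_num) hf)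
  apply Icc_subset_Icc <;> [nlinarith; nlinarith]

lemma reach_left_aux : ∀ k : ℕ, ∀ v : ℝ, 0 < v → (2 - S)/2 ≤ (2 - S) - v →
    (2 - S)/2 ≤ 2 ^ k * v → Reach ((2 - S) - v) (2 - S) := by
  intro k
  induction k with
  | zero =>
    intro v hv h1 h2
    have : (2 - S) - v = (2 - S)/2 := by norm_num at h2; linarith
    rw [this]; exact reach_cp
  | succ k ih =>
    intro v hv h1 h2
    have hpq : (2 - S : ℝ) ≤ (3 - S)/2 := by nlinarith [hS1]
    have hf : ∀ x ∈ Icc ((2 - S) - v) (2 - S),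
        (fun x => tent S (tent S x)) x = 2 * x + (-(2 - S)) := by
      intro x hx
      exact g2 (le_trans h1 hx.1) (le_trans hx.2 hpq)
    have himg : Icc ((2 - S) - 2*v) (2 - S) ⊆
        (fun x => tent S (tent S x)) '' Icc ((2 - S) - v) (2 - S) := by
      refine Subset.trans ?_ (img_pos_sup _ 2 (-(2 - S)) two_pos hf)
      apply Icc_subset_Icc <;> [nlinarith; nlinarith]
    by_cases hcase : (2 - S)/2 ≤ (2 - S) - 2*v
    · refine reach_step2 himg (ih (2*v) (by linarith) hcase ?_)
      rw [pow_succ] at h2; linarith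
    · refine reach_step2 himg (reach_mono ?_ reach_cp)
      apply Icc_subset_Icc <;> linarith [le_of_not_ge hcase]
  
lemma reach_left : ∀ v : ℝ, 0 < v → Reach ((2 - S) - v) (2 - S) := by
  intro v hv
  by_cases hcase : (2 - S)/2 ≤ (2 - S) - v
  · obtain ⟨k, hk⟩ := pow_unbounded_of_one_lt ((2 - S)/2 / v) (one_lt_two (α := ℝ))
    refine reach_left_aux k v hv hcase ?_
    rw [div_lt_iff₀ hv] at hk
    linarith
  · refine reach_mono ?_ reach_cp
    apply Icc_subset_Icc <;> linarith [le_of_not_ge hcase]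

lemma reach_right_aux : ∀ k : ℕ, ∀ v : ℝ, 0 < v → (2 - S) + v ≤ (3 - S)/2 →
    (3 - S)/2 - (2 - S) ≤ 2 ^ k * v → Reach (2 - S) ((2 - S) + v) := by
  intro k
  induction k with
  | zero =>
    intro v hv h1 h2
    have : (2 - S) + v = (3 - S)/2 := by norm_num at h2; linarith
    rw [this]; exact reach_pq
  | succ k ih =>
    intro v hv h1 h2
    have hcp : ((2 - S : ℝ))/2 ≤ 2 - S := by nlinarith [hSlt]
    have hf : ∀ x ∈ Icc (2 - S) ((2 - S) + v),
        (fun x => tent S (tent S x)) x = 2 * x + (-(2 - S)) := by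
      intro x hx
      exact g2 (le_trans hcp hx.1) (le_trans hx.2 h1)
    have himg : Icc (2 - S) ((2 - S) + 2*v) ⊆
        (fun x => tent S (tent S x)) '' Icc (2 - S) ((2 - S) + v) := by
      refine Subset.trans ?_ (img_pos_sup _ 2 (-(2 - S)) two_pos hf)
      apply Icc_subset_Icc <;> [nlinarith; nlinarith]
    by_cases hcase : (2 - S) + 2*v ≤ (3 - S)/2
    · refine reach_step2 himg (ih (2*v) (by linarith) hcase ?_)
      rw [pow_succ] at h2; linarith
    · refine reach_step2 himg (reach_mono ?_ reach_pq)
      apply Icc_subset_Icc <;> linarith [le_of_not_ge hcase]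

lemma reach_right : ∀ v : ℝ, 0 < v → Reach (2 - S) ((2 - S) + v) := by
  intro v hv
  by_cases hcase : (2 - S) + v ≤ (3 - S)/2
  · obtain ⟨k, hk⟩ := pow_unbounded_of_one_lt (((3 - S)/2 - (2 - S)) / v) (one_lt_two (α := ℝ))
    refine reach_right_aux k v hv hcase ?_
    rw [div_lt_iff₀ hv] at hk
    linarith
  · refine reach_mono ?_ reach_pq
    apply Icc_subset_Icc <;> linarith [le_of_not_ge hcase]

lemma reach_zero : ∀ u : ℝ, 0 < u → Reach 0 u := by
  intro u hu
  have hc0 : (0:ℝ) < (2 - S)/2 := by nlinarith [hSlt]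
  set u' := min u ((2 - S)/2) with hu'
  have h0' : 0 < u' := lt_min hu hc0
  have hf : ∀ x ∈ Icc (0:ℝ) u',
      (fun x => tent S (tent S x)) x = (-2) * x + (2 - S) := by
    intro x hx
    exact g1 hx.1 (le_trans hx.2 (min_le_right _ _))
  have himg : Icc ((2 - S) - 2*u') (2 - S) ⊆
      (fun x => tent S (tent S x)) '' Icc 0 u' := by
    refine Subset.trans ?_ (img_neg_sup _ (-2) (2 - S) (by norm_num) hf)
    apply Icc_subset_Icc <;> [nlinarith; nlinarith]
  have h1 : Reach 0 u' := reach_step2 himg (reach_left (2*u') (by linarith))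
  exact reach_mono (Icc_subset_Icc le_rfl (min_le_left _ _)) h1

lemma reach_one : ∀ w : ℝ, w < 1 → Reach w 1 := by
  intro w hw
  by_cases hcase : w ≤ (3 - S)/2
  · exact reach_mono (Icc_subset_Icc hcase le_rfl) reach_q1
  · push_neg at hcase
    have hf : ∀ x ∈ Icc w 1,
        (fun x => tent S (tent S x)) x = (-2) * x + (2 + (2 - S)) := by
      intro x hx
      exact g3 (le_trans hcase.le hx.1) hx.2
    have himg : Icc (2 - S) ((2 - S) + 2*(1 - w)) ⊆
        (fun x => tent S (tent S x)) '' Icc w 1 := by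
      refine Subset.trans ?_ (img_neg_sup _ (-2) (2 + (2 - S)) (by norm_num) hf)
      apply Icc_subset_Icc <;> [nlinarith; nlinarith]
    exact reach_step2 himg (reach_right (2*(1 - w)) (by linarith))

lemma cq_c : ∀ a b : ℝ, 0 ≤ a → a < b → a ≤ (2 - S)/2 → (2 - S)/2 ≤ b → Reach a b := by
  intro a b h0 hab hac hcb
  have hcq : ((2 - S : ℝ))/2 < (3 - S)/2 := by linarith
  by_cases hb : (2 - S)/2 < b
  · set t := min b ((3 - S)/2) with ht
    have hct : (2 - S)/2 < t := lt_min hb hcq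
    have hf : ∀ x ∈ Icc ((2 - S)/2) t,
        (fun x => tent S (tent S x)) x = 2 * x + (-(2 - S)) := by
      intro x hx
      exact g2 hx.1 (le_trans hx.2 (min_le_right _ _))
    have hsub : Icc ((2 - S)/2) t ⊆ Icc a b := Icc_subset_Icc hac (min_le_left _ _)
    have himg : Icc 0 (2*t + (-(2 - S))) ⊆ (fun x => tent S (tent S x)) '' Icc a b := by
      refine Subset.trans ?_ (Subset.trans (img_pos_sup _ 2 (-(2 - S)) two_pos hf)
        (Set.image_mono hsub))
      apply Icc_subset_Icc <;> [nlinarith; nlinarith]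
    exact reach_step2 himg (reach_zero _ (by nlinarith))
  · have hbc : b ≤ (2 - S)/2 := le_of_not_gt hb
    have hf : ∀ x ∈ Icc a b,
        (fun x => tent S (tent S x)) x = (-2) * x + (2 - S) := by
      intro x hx
      exact g1 (le_trans h0 hx.1) (le_trans hx.2 hbc)
    have himg : Icc 0 ((-2) * a + (2 - S)) ⊆ (fun x => tent S (tent S x)) '' Icc a b := by
      refine Subset.trans ?_ (img_neg_sup _ (-2) (2 - S) (by norm_num) hf)
      apply Icc_subset_Icc <;> [nlinarith; nlinarith]
    exact reach_step2 himg (reach_zero _ (by nlinarith))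

lemma cq_q : ∀ a b : ℝ, 0 ≤ a → a < b → b ≤ 1 → a ≤ (3 - S)/2 → (3 - S)/2 ≤ b →
    Reach a b := by
  intro a b h0 hab hb1 haq hqb
  have hcq : ((2 - S : ℝ))/2 < (3 - S)/2 := by linarith
  by_cases ha : a < (3 - S)/2
  · set t := max a ((2 - S)/2) with ht
    have htq : t < (3 - S)/2 := max_lt ha hcq
    have hf : ∀ x ∈ Icc t ((3 - S)/2),
        (fun x => tent S (tent S x)) x = 2 * x + (-(2 - S)) := by
      intro x hx
      exact g2 (le_trans (le_max_right _ _) hx.1) hx.2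
    have hsub : Icc t ((3 - S)/2) ⊆ Icc a b := Icc_subset_Icc (le_max_left _ _) hqb
    have himg : Icc (2*t + (-(2 - S))) 1 ⊆ (fun x => tent S (tent S x)) '' Icc a b := by
      refine Subset.trans ?_ (Subset.trans (img_pos_sup _ 2 (-(2 - S)) two_pos hf)
        (Set.image_mono hsub))
      apply Icc_subset_Icc <;> [nlinarith; nlinarith]
    exact reach_step2 himg (reach_one _ (by nlinarith))
  · push_neg at ha
    have haq' : a = (3 - S)/2 := le_antisymm haq ha
    have hf : ∀ x ∈ Icc a b,
        (fun x => tent S (tent S x)) x = (-2) * x + (2 + (2 - S)) := by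
      intro x hx
      exact g3 (le_trans ha hx.1) (le_trans hx.2 hb1)
    have himg : Icc ((-2) * b + (2 + (2 - S))) 1 ⊆
        (fun x => tent S (tent S x)) '' Icc a b := by
      refine Subset.trans ?_ (img_neg_sup _ (-2) (2 + (2 - S)) (by norm_num) hf)
      apply Icc_subset_Icc <;> [nlinarith [haq']; nlinarith [haq']]
    exact reach_step2 himg (reach_one _ (by nlinarith [haq']))

lemma reach_main : ∀ k : ℕ, ∀ a b : ℝ, 0 ≤ a → b ≤ 1 → a < b →
    1/2 ≤ 2 ^ k * (b - a) → Reach a b := by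
  intro k
  induction k with
  | zero =>
    intro a b h0 h1 hab hlen
    norm_num at hlen
    by_cases hac : a ≤ (2 - S)/2
    · by_cases hcb : (2 - S)/2 ≤ b
      · exact cq_c a b h0 hab hac hcb
      · exfalso; push_neg at hcb; nlinarith [hS1]
    · push_neg at hac
      have haq : a ≤ (3 - S)/2 := by nlinarith [hSlt]
      have hqb : (3 - S)/2 ≤ b := by nlinarith
      exact cq_q a b h0 hab h1 haq hqb
  | succ k ih =>
    intro a b h0 h1 hab hlen
    rw [pow_succ] at hlen
    by_cases h₁ : a ≤ (2 - S)/2 ∧ (2 - S)/2 ≤ b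
    · exact cq_c a b h0 hab h₁.1 h₁.2
    by_cases h₂ : a ≤ (3 - S)/2 ∧ (3 - S)/2 ≤ b
    · exact cq_q a b h0 hab h1 h₂.1 h₂.2
    push_neg at h₁ h₂
    rcases le_or_gt a ((2 - S)/2) with hac | hac
    · -- interval inside [0, c]
      have hb : b < (2 - S)/2 := h₁ hac
      have hf : ∀ x ∈ Icc a b,
          (fun x => tent S (tent S x)) x = (-2) * x + (2 - S) := by
        intro x hx
        exact g1 (le_trans h0 hx.1) (le_trans hx.2 hb.le)
      have himg : Icc ((-2) * b + (2 - S)) ((-2) * a + (2 - S)) ⊆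
          (fun x => tent S (tent S x)) '' Icc a b :=
        img_neg_sup _ (-2) (2 - S) (by norm_num) hf
      refine reach_step2 himg (ih _ _ (by nlinarith) (by nlinarith [hS1]) (by nlinarith) ?_)
      nlinarith
    · rcases le_or_gt a ((3 - S)/2) with haq | haq
      · -- interval inside [c, q]
        have hbq : b < (3 - S)/2 := h₂ haq
        have hf : ∀ x ∈ Icc a b,
            (fun x => tent S (tent S x)) x = 2 * x + (-(2 - S)) := by
          intro x hx
          exact g2 (le_trans hac.le hx.1) (le_trans hx.2 hbq.le)
        have himg : Icc (2 * a + (-(2 - S))) (2 * b + (-(2 - S))) ⊆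
            (fun x => tent S (tent S x)) '' Icc a b :=
          img_pos_sup _ 2 (-(2 - S)) two_pos hf
        refine reach_step2 himg (ih _ _ (by nlinarith) (by nlinarith) (by nlinarith) ?_)
        nlinarith
      · -- interval inside [q, 1]
        have hf : ∀ x ∈ Icc a b,
            (fun x => tent S (tent S x)) x = (-2) * x + (2 + (2 - S)) := by
          intro x hx
          exact g3 (le_trans haq.le hx.1) (le_trans hx.2 h1)
        have himg : Icc ((-2) * b + (2 + (2 - S))) ((-2) * a + (2 + (2 - S))) ⊆
            (fun x => tent S (tent S x)) '' Icc a b :=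
          img_neg_sup _ (-2) (2 + (2 - S)) (by norm_num) hf
        refine reach_step2 himg (ih _ _ (by nlinarith [hSlt]) (by nlinarith) (by nlinarith) ?_)
        nlinarith

lemma reach_all {a b : ℝ} (h0 : 0 ≤ a) (h1 : b ≤ 1) (hab : a < b) : Reach a b := by
  obtain ⟨k, hk⟩ := pow_unbounded_of_one_lt ((1/2) / (b - a)) (one_lt_two (α := ℝ))
  refine reach_main k a b h0 h1 hab ?_
  rw [div_lt_iff₀ (by linarith)] at hk
  linarith


lemma it2 (x : ℝ) : (tent S)^[2] x = tent S (tent S x) := by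
  simp [Function.iterate_succ_apply]

lemma hp0 : (0:ℝ) < 2 - S := by nlinarith [hSlt]
lemma hp1 : (2 - S : ℝ) < 1 := by nlinarith [hS1]
lemma hq0 : (0:ℝ) < S - 1 := by nlinarith [hS1]

lemma fixed_iff : ∀ x ∈ Ioo (0:ℝ) 1, tent S x = x ↔ x = 2 - S := by
  intro x hx
  constructor
  · intro hfix
    by_cases h : x ≤ (2 - S)/2
    · exfalso
      rw [tentA h] at hfix
      nlinarith [hS2, hS1, hSlt, mul_pos hx.1 (sub_pos.mpr hS1)]
    · push_neg at h
      rw [tentB h.le] at hfix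
      have h6 : (1 + S) * (x - (2 - S)) = 0 := by linear_combination -hfix + (1/2) * hS2
      rcases mul_eq_zero.mp h6 with h7 | h7
      · exfalso; nlinarith [hS1]
      · linarith
  · intro hxe
    rw [hxe, tentB (by nlinarith [hSlt])]
    linear_combination (1/2) * hS2

lemma conj_left : ∃ h : ℝ → ℝ, ContinuousOn h (Icc 0 (2 - S)) ∧
    Set.BijOn h (Icc 0 (2 - S)) (Icc 0 1) ∧
    ∀ x ∈ Icc 0 (2 - S), h ((tent S)^[2] x) = tent 2 (h x) := by
  have hne : (2 - S : ℝ) ≠ 0 := ne_of_gt hp0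
  refine ⟨fun x => ((2 - S) - x) / (2 - S), ?_, ⟨?_, ?_, ?_⟩, ?_⟩
  · exact (continuousOn_const.sub continuousOn_id).div_const _
  · intro x hx
    constructor
    · exact div_nonneg (by linarith [hx.2]) hp0.le
    · rw [div_le_one hp0]; linarith [hx.1]
  · intro x hx y hy hxy
    field_simp at hxy
    linarith
  · intro y hy
    refine ⟨(2 - S) - (2 - S) * y, ⟨?_, ?_⟩, ?_⟩
    · nlinarith [mul_nonneg hp0.le (sub_nonneg.mpr hy.2)]
    · nlinarith [mul_nonneg hp0.le hy.1]
    · field_simp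
      ring
  · intro x hx
    rw [it2]
    by_cases hxc : x ≤ (2 - S)/2
    · rw [g1 hx.1 hxc]
      have harg : 1/2 ≤ ((2 - S) - x) / (2 - S) := by
        rw [le_div_iff₀ hp0]; linarith
      rw [t2B harg]
      field_simp
      ring
    · push_neg at hxc
      rw [g2 hxc.le (by linarith [hx.2, hS1])]
      have harg : ((2 - S) - x) / (2 - S) ≤ 1/2 := by
        rw [div_le_iff₀ hp0]; linarith
      rw [t2A harg]
      field_simp
      ring

lemma conj_right : ∃ h : ℝ → ℝ, ContinuousOn h (Icc (2 - S) 1) ∧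
    Set.BijOn h (Icc (2 - S) 1) (Icc 0 1) ∧
    ∀ x ∈ Icc (2 - S) 1, h ((tent S)^[2] x) = tent 2 (h x) := by
  have hne : (S - 1 : ℝ) ≠ 0 := ne_of_gt hq0
  have hcp : ((2 - S):ℝ)/2 ≤ 2 - S := by linarith [hp0]
  refine ⟨fun x => (x - (2 - S)) / (S - 1), ?_, ⟨?_, ?_, ?_⟩, ?_⟩
  · exact ((continuousOn_id.sub continuousOn_const)).div_const _
  · intro x hx
    constructor
    · exact div_nonneg (by linarith [hx.1]) hq0.le
    · rw [div_le_one hq0]; linarith [hx.2]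
  · intro x hx y hy hxy
    field_simp at hxy
    linarith
  · intro y hy
    refine ⟨(2 - S) + (S - 1) * y, ⟨?_, ?_⟩, ?_⟩
    · nlinarith [mul_nonneg hq0.le hy.1]
    · nlinarith [mul_nonneg hq0.le (sub_nonneg.mpr hy.2)]
    · field_simp
      ring
  · intro x hx
    rw [it2]
    by_cases hxq : x ≤ (3 - S)/2
    · rw [g2 (le_trans hcp hx.1) hxq]
      have harg : (x - (2 - S)) / (S - 1) ≤ 1/2 := by
        rw [div_le_iff₀ hq0]; linarith
      rw [t2A harg]
      field_simp
      ring
    · push_neg at hxq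
      rw [g3 hxq.le hx.2]
      have harg : 1/2 ≤ (x - (2 - S)) / (S - 1) := by
        rw [le_div_iff₀ hq0]; linarith
      rw [t2B harg]
      field_simp
      ring

lemma trans_main : TransitiveOn (tent S) (Icc 0 1) := by
  intro U V hU hV hUI hVI
  obtain ⟨x, hxU, hxI⟩ := hUI
  obtain ⟨y, hyV, hyI⟩ := hVI
  obtain ⟨ε, hε, hball⟩ := Metric.isOpen_iff.mp hU x hxU
  set a := max (x - ε/2) 0 with ha
  set b := min (x + ε/2) 1 with hb
  have hab : a < b := by
    apply max_lt <;> apply lt_min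
    · linarith
    · linarith [hxI.2]
    · linarith [hxI.1]
    · norm_num
  have hsub : Icc a b ⊆ U ∩ Icc 0 1 := by
    intro z hz
    refine ⟨hball ?_, le_trans (le_max_right _ _) hz.1, le_trans hz.2 (min_le_right _ _)⟩
    rw [Metric.mem_ball, Real.dist_eq, abs_lt]
    constructor
    · have h' : x - ε/2 ≤ a := le_max_left _ _; linarith [hz.1]
    · have h' : b ≤ x + ε/2 := min_le_left _ _; linarith [hz.2]
  obtain ⟨n, hn⟩ := reach_all (le_max_right _ _) (min_le_right _ _) hab
  rcases le_total (2 - S) y with hy | hy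
  · exact ⟨n, y, Set.image_mono hsub (hn ⟨hy, hyI.2⟩), hyV, hyI⟩
  · have hn' : Icc 0 (2 - S) ⊆ (tent S)^[n+1] '' Icc a b := by
      rw [Function.iterate_succ', Set.image_comp, ← imgB]
      exact Set.image_mono hn
    exact ⟨n + 1, y, Set.image_mono hsub (hn' ⟨hyI.1, hy⟩), hyV, hyI⟩

lemma not_exact : ¬ ExactOn (tent S) (Icc 0 1) := by
  intro hex
  have hc0 : (0:ℝ) < (2 - S)/2 := by nlinarith [hSlt]
  have hcp : ((2 - S):ℝ)/2 < 2 - S := by linarith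
  obtain ⟨n, hn⟩ := hex (Ioo 0 (2 - S)) isOpen_Ioo
    ⟨(2 - S)/2, ⟨hc0, hcp⟩, hc0.le, by nlinarith [hS1]⟩
  have halt : ∀ m : ℕ, (tent S)^[m] '' Icc 0 (2 - S) ⊆ Icc 0 (2 - S) ∨
      (tent S)^[m] '' Icc 0 (2 - S) ⊆ Icc (2 - S) 1 := by
    intro m
    induction m with
    | zero => left; simp
    | succ m ih =>
      rw [Function.iterate_succ', Set.image_comp]
      rcases ih with h | h
      · right
        refine Subset.trans (Set.image_mono h) ?_
        rw [imgA]
      · left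
        refine Subset.trans (Set.image_mono h) ?_
        rw [imgB]
  have hsub2 : Icc (0:ℝ) 1 ⊆ (tent S)^[n] '' Icc 0 (2 - S) := by
    rw [← hn]
    exact Set.image_mono (fun z hz => ⟨hz.1.1.le, hz.1.2.le⟩)
  rcases halt n with h | h
  · have h1 : (1:ℝ) ∈ Icc (0:ℝ) 1 := ⟨zero_le_one, le_rfl⟩
    have := (h (hsub2 h1)).2
    nlinarith [hS1]
  · have h1 : (0:ℝ) ∈ Icc (0:ℝ) 1 := ⟨le_rfl, zero_le_one⟩
    have := (h (hsub2 h1)).1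
    nlinarith [hSlt]

end Aux9


/-- For `s = √2` and `p = 2 - √2` (the unique fixed point of `T_s` in `(0,1)`),
`T_s` exchanges `[0,p]` and `[p,1]`, `T_s²` restricted to each of these intervals is conjugate
to the full tent map `T₂`, and `T_√2` is transitive but not topologically exact. -/
theorem stmt9 :
    (∀ x ∈ Set.Ioo (0 : ℝ) 1, tent (Real.sqrt 2) x = x ↔ x = 2 - Real.sqrt 2) ∧
    tent (Real.sqrt 2) '' Set.Icc 0 (2 - Real.sqrt 2) = Set.Icc (2 - Real.sqrt 2) 1 ∧
    tent (Real.sqrt 2) '' Set.Icc (2 - Real.sqrt 2) 1 = Set.Icc 0 (2 - Real.sqrt 2) ∧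
    (∃ h : ℝ → ℝ, ContinuousOn h (Set.Icc 0 (2 - Real.sqrt 2)) ∧
      Set.BijOn h (Set.Icc 0 (2 - Real.sqrt 2)) I01 ∧
      ∀ x ∈ Set.Icc 0 (2 - Real.sqrt 2),
        h ((tent (Real.sqrt 2))^[2] x) = tent 2 (h x)) ∧
    (∃ h : ℝ → ℝ, ContinuousOn h (Set.Icc (2 - Real.sqrt 2) 1) ∧
      Set.BijOn h (Set.Icc (2 - Real.sqrt 2) 1) I01 ∧
      ∀ x ∈ Set.Icc (2 - Real.sqrt 2) 1,
        h ((tent (Real.sqrt 2))^[2] x) = tent 2 (h x)) ∧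
    TransitiveOn (tent (Real.sqrt 2)) I01 ∧ ¬ ExactOn (tent (Real.sqrt 2)) I01 :=
  ⟨Aux9.fixed_iff, Aux9.imgA, Aux9.imgB, Aux9.conj_left, Aux9.conj_right,
    Aux9.trans_main, Aux9.not_exact⟩
end
end
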